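/- arXiv:math/0607482 — 9 statements merged into one kernel-verified Lean document; each statement's English description precedes it below -/
import Mathlib

section
/- PL⁺(I) contains no nonabelian free subgroup: there is no injective group homomorphism from the free group on two generators into PL⁺(I). -/
open Filter
open scoped commutatorElement

/-- The commutator length of `g`. -/
noncomputable def commLength {G : Type*} [Group G] (g : G) : ℕ :=
  sInf {m : ℕ | ∃ a b : Fin m → G, g = (List.ofFn fun i => ⁅a i, b i⁆).prod}

/-- Stable commutator length. -/
noncomputable def scl {G : Type*} [Group G] (g : G) : ℝ :=
  Filter.liminf (fun n : ℕ => (commLength (g ^ n) : ℝ) / n) Filter.atTop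

/-- Homogeneous quasimorphism. -/
def IsHomQM {G : Type*} [Group G] (f : G → ℝ) : Prop :=
  (∀ (a : G) (n : ℤ), f (a ^ n) = n * f a) ∧
  BddAbove {d : ℝ | ∃ a b : G, d = |f a + f b - f (a * b)|}

noncomputable def defect {G : Type*} [Group G] (f : G → ℝ) : ℝ :=
  sSup {d : ℝ | ∃ a b : G, d = |f a + f b - f (a * b)|}

/-- Orientation-preserving piecewise-linear homeomorphism of [0,1]. -/
def IsPLplus (g : Equiv.Perm unitInterval) : Prop :=
  StrictMono (fun x : unitInterval => (g x : ℝ)) ∧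
  ∃ (k : ℕ) (x : Fin (k + 1) → ℝ), StrictMono x ∧ x 0 = 0 ∧ x (Fin.last k) = 1 ∧
    ∀ i : Fin k, ∃ a b : ℝ, ∀ t : unitInterval,
      x i.castSucc ≤ (t : ℝ) → (t : ℝ) ≤ x i.succ → (g t : ℝ) = a * (t : ℝ) + b

local notation "I" => unitInterval
local notation "F₂" => FreeGroup (Fin 2)

section PermBasic

variable {f : Equiv.Perm I}

/-- strict mono as subtype map -/
lemma sm_subtype (hf : StrictMono fun x : I => ((f x : ℝ))) : StrictMono f :=
  fun a b h => by have := hf h; exact Subtype.coe_lt_coe.mp this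

lemma sm_inv (hf : StrictMono fun x : I => ((f x : ℝ))) :
    StrictMono fun x : I => ((f⁻¹ x : ℝ)) := by
  intro a b h
  rcases lt_trichotomy (f⁻¹ a) (f⁻¹ b) with h'|h'|h'
  · exact Subtype.coe_lt_coe.mpr h'
  · exfalso; have : a = b := by
      have := congrArg f h'; simpa using this
    exact absurd this (ne_of_lt h)
  · exfalso
    have := sm_subtype hf h'
    simp only [Equiv.Perm.coe_inv, Equiv.apply_symm_apply] at this
    exact absurd h (not_lt.mpr this.le)

lemma fix_zero (hf : StrictMono fun x : I => ((f x : ℝ))) : f 0 = 0 := by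
  have h0 : ∀ x : I, (0:I) ≤ x := fun x => x.2.1
  by_contra h
  have h1 : (0:I) < f 0 := lt_of_le_of_ne (h0 _) (Ne.symm h)
  have h2 : f (f⁻¹ 0) = 0 := by simp
  have h3 : (0:I) < f⁻¹ 0 := by
    rcases eq_or_lt_of_le (h0 (f⁻¹ 0)) with h'|h'
    · exfalso; rw [← h'] at h2; exact h (by simpa using h2)
    · exact h'
  have := sm_subtype hf h3
  rw [h2] at this
  exact absurd (h0 (f 0)) (not_le.mpr this)

lemma fix_one (hf : StrictMono fun x : I => ((f x : ℝ))) : f 1 = 1 := by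
  have h0 : ∀ x : I, x ≤ (1:I) := fun x => x.2.2
  by_contra h
  have h1 : f 1 < 1 := lt_of_le_of_ne (h0 _) h
  have h2 : f (f⁻¹ 1) = 1 := by simp
  have h3 : f⁻¹ 1 < 1 := by
    rcases eq_or_lt_of_le (h0 (f⁻¹ 1)) with h'|h'
    · exfalso; rw [h'] at h2; exact h h2
    · exact h'
  have := sm_subtype hf h3
  rw [h2] at this
  exact absurd (h0 (f 1)) (not_le.mpr this)

/-- if f x > x then all positive powers move x up -/
lemma pow_moves (hf : StrictMono fun x : I => ((f x : ℝ))) {x : I} (hx : x < f x) :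
    ∀ n : ℕ, 0 < n → x < (f ^ n) x := by
  intro n hn
  induction n with
  | zero => omega
  | succ m ih =>
    rcases Nat.eq_zero_or_pos m with hm|hm
    · subst hm; simpa using hx
    · have h1 := ih hm
      have h2 := sm_subtype hf h1
      calc x < f x := hx
        _ ≤ f ((f ^ m) x) := le_of_lt h2
        _ = (f ^ (m+1)) x := by
            rw [pow_succ', Equiv.Perm.mul_apply]

lemma pow_moves' (hf : StrictMono fun x : I => ((f x : ℝ))) {x : I} (hx : f x < x) :
    ∀ n : ℕ, 0 < n → (f ^ n) x < x := by
  intro n hn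
  induction n with
  | zero => omega
  | succ m ih =>
    rcases Nat.eq_zero_or_pos m with hm|hm
    · subst hm; simpa using hx
    · have h1 := ih hm
      have h2 := sm_subtype hf h1
      calc (f ^ (m+1)) x = f ((f^m) x) := by rw [pow_succ', Equiv.Perm.mul_apply]
        _ < f x := h2
        _ < x := hx

/-- supports of nonzero integer powers agree with the support -/
lemma zpow_fix_iff (hf : StrictMono fun x : I => ((f x : ℝ))) {m : ℤ} (hm : m ≠ 0) (x : I) :
    (f ^ m) x = x ↔ f x = x := by
  constructor
  · intro h
    obtain ⟨n, hpos, hn⟩ : ∃ n : ℕ, 0 < n ∧ (f ^ n) x = x := by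
      rcases m.lt_or_lt_of_ne hm with hm'|hm'
      · refine ⟨(-m).toNat, by omega, ?_⟩
        have h' : (f ^ (-m)) x = x := by
          have := congrArg (f ^ (-m)) h
          rw [← Equiv.Perm.mul_apply, ← zpow_add, neg_add_cancel, zpow_zero,
            Equiv.Perm.one_apply] at this
          exact this.symm
        rw [← zpow_natCast, Int.toNat_of_nonneg (by omega)]; exact h'
      · refine ⟨m.toNat, by omega, ?_⟩
        rw [← zpow_natCast, Int.toNat_of_nonneg (by omega)]; exact h
    by_contra hfx
    rcases lt_trichotomy (f x) x with h'|h'|h'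
    · exact absurd hn (ne_of_lt (pow_moves' hf h' n hpos))
    · exact hfx h'
    · exact absurd hn.symm (ne_of_lt (pow_moves hf h' n hpos))
  · intro h
    have key : ∀ n : ℕ, (f ^ n) x = x := by
      intro n; induction n with
      | zero => simp
      | succ k ih => rw [pow_succ', Equiv.Perm.mul_apply, ih, h]
    rcases m.lt_or_lt_of_ne hm with hm'|hm'
    · have h1 : (f ^ (-m)) x = x := by
        rw [show -m = ((-m).toNat : ℤ) by omega, zpow_natCast]; exact key _
      have := congrArg (f ^ m) h1
      rw [← Equiv.Perm.mul_apply, ← zpow_add, add_neg_cancel, zpow_zero,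
        Equiv.Perm.one_apply] at this
      exact this.symm
    · rw [show m = (m.toNat : ℤ) by omega, zpow_natCast]; exact key _

end PermBasic

section FreeGroupFacts

/-- two commuting elements of a free group are powers of a common element -/
lemma commute_common_power {u v : F₂} (h : Commute u v) :
    ∃ z : F₂, (∃ m : ℤ, u = z ^ m) ∧ (∃ n : ℤ, v = z ^ n) := by
  classical
  set H : Subgroup F₂ := Subgroup.closure {u, v} with hH
  have hu : u ∈ H := Subgroup.subset_closure (by simp)
  have hv : v ∈ H := Subgroup.subset_closure (by simp)
  -- H is commutative
  have hcomm : ∀ a b : H, a * b = b * a := by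
    have key : ∀ a ∈ H, ∀ b ∈ H, Commute a b := by
      intro a ha b hb
      induction ha using Subgroup.closure_induction generalizing b with
      | mem x hx =>
        induction hb using Subgroup.closure_induction with
        | mem y hy =>
          rcases hx with rfl|hx <;> rcases hy with rfl|hy
          · exact Commute.refl _
          · simp at hy; subst hy; exact h
          · simp at hx; subst hx; exact h.symm
          · simp at hx hy; subst hx; subst hy; exact Commute.refl _
        | one => exact Commute.one_right _
        | mul y z _ _ iy iz => exact iy.mul_right iz
        | inv y _ iy => exact iy.inv_right
      | one => exact Commute.one_left _
      | mul x y _ _ ix iy => exact (ix b hb).mul_left (iy b hb)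
      | inv x _ ix => exact (ix b hb).inv_left
    intro a b
    have h5 : (a : F₂) * b = b * a := key a a.2 b b.2
    exact Subtype.ext (by simpa using h5)
  -- generators of the free group H must be subsingleton
  haveI hfree : IsFreeGroup H := inferInstance
  have hsub : ∀ x y : IsFreeGroup.Generators H, x = y := by
    intro x y
    by_contra hxy
    let fgen : IsFreeGroup.Generators H → Equiv.Perm (Fin 3) := fun i =>
      if i = x then Equiv.swap 0 1 else if i = y then Equiv.swap 1 2 else 1
    let ψ : H →* Equiv.Perm (Fin 3) := IsFreeGroup.lift fgen
    have h1 : ψ (IsFreeGroup.of x) = Equiv.swap 0 1 := by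
      simp [ψ, fgen, IsFreeGroup.lift_of]
    have h2 : ψ (IsFreeGroup.of y) = Equiv.swap 1 2 := by
      simp only [ψ, IsFreeGroup.lift_of, fgen]
      simp [Ne.symm hxy]
    have h3 := hcomm (IsFreeGroup.of x) (IsFreeGroup.of y)
    have h4 := congrArg ψ h3
    rw [map_mul, map_mul, h1, h2] at h4
    have : Equiv.swap (0: Fin 3) 1 * Equiv.swap 1 2 ≠ Equiv.swap 1 2 * Equiv.swap 0 1 := by decide
    exact this h4
  -- elements of H are powers of a common element
  have main : ∃ z : H, (∃ m : ℤ, (⟨u, hu⟩ : H) = z ^ m) ∧ ∃ n : ℤ, (⟨v, hv⟩ : H) = z ^ n := by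
    let e := IsFreeGroup.toFreeGroup H
    by_cases hne : Nonempty (IsFreeGroup.Generators H)
    · obtain ⟨x0⟩ := hne
      have key : ∀ g : FreeGroup (IsFreeGroup.Generators H), ∃ k : ℤ, g = (FreeGroup.of x0) ^ k := by
        intro g
        induction g using FreeGroup.induction_on with
        | C1 => exact ⟨0, by simp⟩
        | of x => exact ⟨1, by rw [hsub x x0, zpow_one]⟩
        | inv_of x ih => obtain ⟨k, hk⟩ := ih; exact ⟨-k, by rw [hk]; simp⟩
        | mul a b iha ihb =>
          obtain ⟨k1, h1⟩ := iha; obtain ⟨k2, h2⟩ := ihb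
          exact ⟨k1 + k2, by rw [h1, h2, zpow_add]⟩
      obtain ⟨m, hm⟩ := key (e ⟨u, hu⟩)
      obtain ⟨n, hn⟩ := key (e ⟨v, hv⟩)
      refine ⟨e.symm (FreeGroup.of x0), ⟨m, ?_⟩, ⟨n, ?_⟩⟩
      · have := congrArg e.symm hm; rw [e.symm_apply_apply] at this
        rw [this, map_zpow]
      · have := congrArg e.symm hn; rw [e.symm_apply_apply] at this
        rw [this, map_zpow]
    · -- no generators: trivial group
      have key : ∀ g : FreeGroup (IsFreeGroup.Generators H), g = 1 := by
        intro g
        induction g using FreeGroup.induction_on with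
        | C1 => rfl
        | of x => exact absurd ⟨x⟩ hne
        | inv_of x ih => rw [ih]; simp
        | mul a b iha ihb => rw [iha, ihb]; simp
      have hu1 : (⟨u, hu⟩ : H) = 1 := by
        have := key (e ⟨u, hu⟩)
        have := congrArg e.symm this
        simpa using this
      have hv1 : (⟨v, hv⟩ : H) = 1 := by
        have := key (e ⟨v, hv⟩)
        have := congrArg e.symm this
        simpa using this
      exact ⟨1, ⟨1, by simp [hu1]⟩, ⟨1, by simp [hv1]⟩⟩
  obtain ⟨z, ⟨m, hm⟩, ⟨n, hn⟩⟩ := main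
  refine ⟨(z : F₂), ⟨m, ?_⟩, ⟨n, ?_⟩⟩
  · have := congrArg (Subtype.val) hm
    simpa using this
  · have := congrArg (Subtype.val) hn
    simpa using this

lemma base_ne_one : ⁅FreeGroup.of (0 : Fin 2), FreeGroup.of (1 : Fin 2)⁆ ≠ 1 := by
  intro h
  let f : Fin 2 → Equiv.Perm (Fin 3) := ![Equiv.swap 0 1, Equiv.swap 1 2]
  have := congrArg (FreeGroup.lift f) h
  rw [map_commutatorElement] at this
  simp only [FreeGroup.lift_apply_of, map_one] at this
  have h2 : ⁅Equiv.swap (0:Fin 3) 1, Equiv.swap (1:Fin 3) 2⁆ ≠ 1 := by decide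
  exact h2 (by simpa [f] using this)

end FreeGroupFacts


section Pieces

/-- find the piece containing a point, right-open version -/
lemma exists_piece {k : ℕ} (x : Fin (k+1) → ℝ) (mono : Monotone x) {y : ℝ}
    (h0 : x 0 ≤ y) (h1 : y < x (Fin.last k)) :
    ∃ i : Fin k, x i.castSucc ≤ y ∧ y < x i.succ := by
  induction k with
  | zero => exact absurd h1 (not_lt.mpr h0)
  | succ k ih =>
    by_cases hc : y < x (Fin.last k).castSucc
    · obtain ⟨i, hi1, hi2⟩ := ih (x ∘ Fin.castSucc) (fun a b hab => mono (by simpa using hab))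
        (by simpa using h0) (by simpa using hc)
      refine ⟨i.castSucc, ?_, ?_⟩
      · simpa using hi1
      · rw [Fin.succ_castSucc]; simpa using hi2
    · exact ⟨Fin.last k, not_lt.mp hc, by rwa [Fin.succ_last]⟩

/-- find the piece containing a point, left-open version -/
lemma exists_piece' {k : ℕ} (x : Fin (k+1) → ℝ) (mono : Monotone x) {y : ℝ}
    (h0 : x 0 < y) (h1 : y ≤ x (Fin.last k)) :
    ∃ i : Fin k, x i.castSucc < y ∧ y ≤ x i.succ := by
  induction k with
  | zero => exact absurd h0 (not_lt.mpr h1)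
  | succ k ih =>
    by_cases hc : x (Fin.succ 0) < y
    · obtain ⟨i, hi1, hi2⟩ := ih (x ∘ Fin.succ) (fun a b hab => mono (by simpa [Fin.succ_le_succ_iff] using hab))
        (by simpa using hc) (by simpa [Fin.succ_last] using h1)
      refine ⟨i.succ, ?_, ?_⟩
      · rw [← Fin.succ_castSucc]; simpa using hi1
      · simpa using hi2
    · exact ⟨0, by simpa using h0, by simpa using not_lt.mp hc⟩

/-- closed cover version -/
lemma exists_piece_closed {k : ℕ} (x : Fin (k+1) → ℝ) (mono : Monotone x) {y : ℝ}
    (h0 : x 0 ≤ y) (h1 : y ≤ x (Fin.last k)) (hk : 0 < k) :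
    ∃ i : Fin k, x i.castSucc ≤ y ∧ y ≤ x i.succ := by
  rcases lt_or_eq_of_le h1 with h|h
  · obtain ⟨i, hi1, hi2⟩ := exists_piece x mono h0 h
    exact ⟨i, hi1, hi2.le⟩
  · obtain ⟨k, rfl⟩ : ∃ m, k = m + 1 := ⟨k - 1, by omega⟩
    refine ⟨Fin.last k, ?_, ?_⟩
    · rw [h]; exact mono (Fin.le_last _)
    · rw [Fin.succ_last, h]

/-- the fixed-point set (in real coordinates) of a PL permutation is closed -/
lemma isClosed_fix {g : Equiv.Perm I} (hg : IsPLplus g) :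
    IsClosed {y : ℝ | ∃ h : y ∈ I, g ⟨y, h⟩ = ⟨y, h⟩} := by
  obtain ⟨hsm, k, x, hx, hx0, hx1, hpieces⟩ := hg
  choose a b hab using hpieces
  have hk : 0 < k := by
    by_contra hk
    have : k = 0 := by omega
    subst this
    rw [show (Fin.last 0) = 0 from rfl, hx0] at hx1
    norm_num at hx1
  have hset : {y : ℝ | ∃ h : y ∈ I, g ⟨y, h⟩ = ⟨y, h⟩} =
      ⋃ i : Fin k, (Set.Icc (x i.castSucc) (x i.succ) ∩ Set.Icc (0:ℝ) 1 ∩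
        {t : ℝ | a i * t + b i = t}) := by
    ext y
    constructor
    · rintro ⟨hy, hfix⟩
      obtain ⟨i, hi1, hi2⟩ := exists_piece_closed x hx.monotone (y := y) (by rw [hx0]; exact hy.1)
        (by rw [hx1]; exact hy.2) hk
      refine Set.mem_iUnion.mpr ⟨i, ⟨⟨hi1, hi2⟩, hy⟩, ?_⟩
      have := hab i ⟨y, hy⟩ hi1 hi2
      rw [hfix] at this
      exact this.symm
    · intro hy
      obtain ⟨i, ⟨⟨hi1, hi2⟩, hyI⟩, heq⟩ := Set.mem_iUnion.mp hy
      refine ⟨hyI, ?_⟩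
      have := hab i ⟨y, hyI⟩ hi1 hi2
      rw [heq] at this
      exact Subtype.ext this
  rw [hset]
  apply isClosed_iUnion_of_finite
  intro i
  exact ((isClosed_Icc.inter isClosed_Icc).inter
    (isClosed_eq (by continuity) continuous_id))

end Pieces

section Germs

/-- right germ at a point -/
def RightGerm (g : Equiv.Perm I) (e a : ℝ) : Prop :=
  ∃ ε > 0, ∀ t : I, e ≤ (t:ℝ) → (t:ℝ) ≤ e + ε → (g t : ℝ) = a * ((t:ℝ) - e) + e

/-- left germ at a point -/
def LeftGerm (g : Equiv.Perm I) (e a : ℝ) : Prop :=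
  ∃ ε > 0, ∀ t : I, e - ε ≤ (t:ℝ) → (t:ℝ) ≤ e → (g t : ℝ) = a * ((t:ℝ) - e) + e

lemma rightGerm_unique {g : Equiv.Perm I} {e a a' : ℝ} (he0 : 0 ≤ e) (he1 : e < 1)
    (h : RightGerm g e a) (h' : RightGerm g e a') : a = a' := by
  obtain ⟨ε, hε, hger⟩ := h
  obtain ⟨ε', hε', hger'⟩ := h'
  set t : ℝ := min (min (e + ε) (e + ε')) 1 with ht
  have hte : e < t := by
    apply lt_min (lt_min (by linarith) (by linarith)) he1
  have htI : t ∈ I := ⟨le_trans he0 hte.le, min_le_right _ _⟩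
  have h1 := hger ⟨t, htI⟩ hte.le (le_trans (min_le_left _ _) (min_le_left _ _))
  have h2 := hger' ⟨t, htI⟩ hte.le (le_trans (min_le_left _ _) (min_le_right _ _))
  rw [h1] at h2
  have : a * (t - e) = a' * (t - e) := by linarith
  have hne : t - e ≠ 0 := by linarith
  exact mul_right_cancel₀ hne this

lemma leftGerm_unique {g : Equiv.Perm I} {e a a' : ℝ} (he0 : 0 < e) (he1 : e ≤ 1)
    (h : LeftGerm g e a) (h' : LeftGerm g e a') : a = a' := by
  obtain ⟨ε, hε, hger⟩ := h
  obtain ⟨ε', hε', hger'⟩ := h'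
  set t : ℝ := max (max (e - ε) (e - ε')) 0 with ht
  have hte : t < e := by
    apply max_lt (max_lt (by linarith) (by linarith)) he0
  have htI : t ∈ I := ⟨le_max_right _ _, le_trans hte.le he1⟩
  have h1 := hger ⟨t, htI⟩ (le_trans (le_max_left _ _) (le_max_left _ _)) hte.le
  have h2 := hger' ⟨t, htI⟩ (le_trans (le_max_right _ _) (le_max_left _ _)) hte.le
  rw [h1] at h2
  have : a * (t - e) = a' * (t - e) := by linarith
  have hne : t - e ≠ 0 := by linarith
  exact mul_right_cancel₀ hne this

lemma rightGerm_exists {g : Equiv.Perm I} (hg : IsPLplus g) {e : ℝ} (he0 : 0 ≤ e) (he1 : e < 1)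
    (hfix : g ⟨e, ⟨he0, he1.le⟩⟩ = ⟨e, ⟨he0, he1.le⟩⟩) :
    ∃ a : ℝ, 0 < a ∧ RightGerm g e a := by
  obtain ⟨hsm, k, x, hx, hx0, hx1, hpieces⟩ := hg
  obtain ⟨i, hi1, hi2⟩ := exists_piece x hx.monotone (y := e) (by rw [hx0]; exact he0)
    (by rw [hx1]; exact he1)
  obtain ⟨a, b, hab⟩ := hpieces i
  have heq : a * e + b = e := by
    have := hab ⟨e, ⟨he0, he1.le⟩⟩ hi1 hi2.le
    rw [hfix] at this
    exact this.symm
  set ε : ℝ := min (x i.succ) 1 - e with hε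
  have hεpos : 0 < ε := by
    have h7 : e < min (x i.succ) 1 := lt_min hi2 he1
    rw [hε]; linarith
  have hgerm : ∀ t : I, e ≤ (t:ℝ) → (t:ℝ) ≤ e + ε → (g t : ℝ) = a * ((t:ℝ) - e) + e := by
    intro t ht1 ht2
    have h3 : (t : ℝ) ≤ x i.succ := by
      have h5 : e + ε ≤ x i.succ := by
        have := min_le_left (x i.succ) (1:ℝ); rw [hε]; linarith
      linarith
    have := hab t (le_trans hi1 ht1) h3
    rw [this]; ring_nf; linarith [heq]
  have hapos : 0 < a := by
    have htI : e + ε ∈ I := by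
      constructor
      · linarith
      · have h7 : e + ε = min (x i.succ) 1 := by rw [hε]; ring
        rw [h7]; exact min_le_right _ _
    have hlt : (⟨e, ⟨he0, he1.le⟩⟩ : I) < ⟨e + ε, htI⟩ := by
      rw [← Subtype.coe_lt_coe]; show e < e + ε; linarith
    have hmono := hsm hlt
    simp only at hmono
    rw [hfix] at hmono
    have h4 := hgerm ⟨e + ε, htI⟩ (by show e ≤ e + ε; linarith)
      (by show e + ε ≤ e + ε; linarith)
    rw [h4] at hmono
    simp only at hmono
    nlinarith
  exact ⟨a, hapos, ε, hεpos, hgerm⟩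

lemma leftGerm_exists {g : Equiv.Perm I} (hg : IsPLplus g) {e : ℝ} (he0 : 0 < e) (he1 : e ≤ 1)
    (hfix : g ⟨e, ⟨he0.le, he1⟩⟩ = ⟨e, ⟨he0.le, he1⟩⟩) :
    ∃ a : ℝ, 0 < a ∧ LeftGerm g e a := by
  obtain ⟨hsm, k, x, hx, hx0, hx1, hpieces⟩ := hg
  obtain ⟨i, hi1, hi2⟩ := exists_piece' x hx.monotone (y := e) (by rw [hx0]; exact he0)
    (by rw [hx1]; exact he1)
  obtain ⟨a, b, hab⟩ := hpieces i
  have heq : a * e + b = e := by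
    have := hab ⟨e, ⟨he0.le, he1⟩⟩ hi1.le hi2
    rw [hfix] at this
    exact this.symm
  set ε : ℝ := e - max (x i.castSucc) 0 with hε
  have hεpos : 0 < ε := by
    have h7 : max (x i.castSucc) 0 < e := max_lt hi1 he0
    rw [hε]; linarith
  have hgerm : ∀ t : I, e - ε ≤ (t:ℝ) → (t:ℝ) ≤ e → (g t : ℝ) = a * ((t:ℝ) - e) + e := by
    intro t ht1 ht2
    have h3 : x i.castSucc ≤ (t : ℝ) := by
      have h8 : x i.castSucc ≤ e - ε := by
        rw [hε]; have := le_max_left (x i.castSucc) (0:ℝ); linarith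
      linarith
    have := hab t h3 (le_trans ht2 hi2)
    rw [this]; ring_nf; linarith [heq]
  have hapos : 0 < a := by
    have htI : e - ε ∈ I := by
      constructor
      · have h7 : e - ε = max (x i.castSucc) 0 := by rw [hε]; ring
        rw [h7]; exact le_max_right _ _
      · linarith
    have hlt : (⟨e - ε, htI⟩ : I) < ⟨e, ⟨he0.le, he1⟩⟩ := by
      rw [← Subtype.coe_lt_coe]; show e - ε < e; linarith
    have hmono := hsm hlt
    simp only at hmono
    rw [hfix] at hmono
    have h4 := hgerm ⟨e - ε, htI⟩ (by show e - ε ≤ e - ε; linarith)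
      (by show e - ε ≤ e; linarith)
    rw [h4] at hmono
    simp only at hmono
    nlinarith
  exact ⟨a, hapos, ε, hεpos, hgerm⟩

lemma rightGerm_comp {g g' : Equiv.Perm I} {e a a' : ℝ} (ha' : 0 < a')
    (h : RightGerm g e a) (h' : RightGerm g' e a') :
    RightGerm (g * g') e (a * a') := by
  obtain ⟨ε, hε, hger⟩ := h
  obtain ⟨ε', hε', hger'⟩ := h'
  refine ⟨min ε' (ε / a'), lt_min hε' (by positivity), ?_⟩
  intro t ht1 ht2
  have h1 := hger' t ht1 (le_trans ht2 (by simp))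
  have h2 : e ≤ (g' t : ℝ) := by rw [h1]; nlinarith
  have h3 : (g' t : ℝ) ≤ e + ε := by
    rw [h1]
    have h6 : (t:ℝ) - e ≤ ε / a' := by
      have := min_le_right ε' (ε / a'); linarith
    have hmul : a' * ((t:ℝ) - e) ≤ a' * (ε / a') := mul_le_mul_of_nonneg_left h6 ha'.le
    have hdiv : a' * (ε / a') = ε := mul_div_cancel₀ ε (ne_of_gt ha')
    linarith
  have h4 := hger (g' t) h2 h3
  rw [Equiv.Perm.mul_apply, h4, h1]
  ring

lemma leftGerm_comp {g g' : Equiv.Perm I} {e a a' : ℝ} (ha' : 0 < a')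
    (h : LeftGerm g e a) (h' : LeftGerm g' e a') :
    LeftGerm (g * g') e (a * a') := by
  obtain ⟨ε, hε, hger⟩ := h
  obtain ⟨ε', hε', hger'⟩ := h'
  refine ⟨min ε' (ε / a'), lt_min hε' (by positivity), ?_⟩
  intro t ht1 ht2
  have h1 := hger' t (le_trans (by
    have := min_le_left ε' (ε / a'); linarith) ht1) ht2
  have h2 : (g' t : ℝ) ≤ e := by rw [h1]; nlinarith
  have h3 : e - ε ≤ (g' t : ℝ) := by
    rw [h1]
    have h6 : e - ε / a' ≤ (t:ℝ) := le_trans (by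
      have := min_le_right ε' (ε / a'); linarith) ht1
    have h5 : -(ε / a') ≤ (t:ℝ) - e := by linarith
    have hmul : a' * (-(ε / a')) ≤ a' * ((t:ℝ) - e) := mul_le_mul_of_nonneg_left h5 ha'.le
    have hdiv : a' * (ε / a') = ε := mul_div_cancel₀ ε (ne_of_gt ha')
    linarith
  have h4 := hger (g' t) h3 h2
  rw [Equiv.Perm.mul_apply, h4, h1]
  ring

end Germs

section SlopeHom

lemma commutator_trivial_right (φ : F₂ →* Equiv.Perm I) (hPL : ∀ w, IsPLplus (φ w))
    {e : ℝ} (he0 : 0 ≤ e) (he1 : e < 1)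
    (hfix : ∀ w, φ w ⟨e, ⟨he0, he1.le⟩⟩ = ⟨e, ⟨he0, he1.le⟩⟩)
    {w : F₂} (hw : w ∈ commutator F₂) :
    ∃ ε > 0, ∀ t : I, e ≤ (t:ℝ) → (t:ℝ) ≤ e + ε → φ w t = t := by
  choose σ hσpos hσgerm using fun v => rightGerm_exists (hPL v) he0 he1 (hfix v)
  have hmul : ∀ u v, σ (u * v) = σ u * σ v := fun u v =>
    rightGerm_unique he0 he1 (hσgerm (u * v))
      (by rw [map_mul φ]; exact rightGerm_comp (hσpos v) (hσgerm u) (hσgerm v))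
  let M : F₂ →* Multiplicative ℝ :=
    MonoidHom.mk' (fun v => Multiplicative.ofAdd (Real.log (σ v)))
      (by
        intro u v
        rw [hmul u v, Real.log_mul (ne_of_gt (hσpos u)) (ne_of_gt (hσpos v))]
        rfl)
  have hker : σ w = 1 := by
    have h1 : M w = 1 := by
      have hle : commutator F₂ ≤ M.ker := by
        rw [commutator_def, Subgroup.commutator_le]
        intro g1 _ g2 _
        rw [MonoidHom.mem_ker, map_commutatorElement]
        exact commutatorElement_eq_one_iff_commute.mpr (Commute.all _ _)
      exact hle hw
    have h2 : Real.log (σ w) = 0 := by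
      have := congrArg Multiplicative.toAdd h1
      simpa [M] using this
    have h3 := Real.exp_log (hσpos w)
    rw [h2, Real.exp_zero] at h3
    exact h3.symm
  obtain ⟨ε, hε, hger⟩ := hσgerm w
  refine ⟨ε, hε, fun t ht1 ht2 => ?_⟩
  have h4 := hger t ht1 ht2
  rw [hker] at h4
  apply Subtype.ext
  rw [h4]; ring

lemma commutator_trivial_left (φ : F₂ →* Equiv.Perm I) (hPL : ∀ w, IsPLplus (φ w))
    {e : ℝ} (he0 : 0 < e) (he1 : e ≤ 1)
    (hfix : ∀ w, φ w ⟨e, ⟨he0.le, he1⟩⟩ = ⟨e, ⟨he0.le, he1⟩⟩)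
    {w : F₂} (hw : w ∈ commutator F₂) :
    ∃ ε > 0, ∀ t : I, e - ε ≤ (t:ℝ) → (t:ℝ) ≤ e → φ w t = t := by
  choose σ hσpos hσgerm using fun v => leftGerm_exists (hPL v) he0 he1 (hfix v)
  have hmul : ∀ u v, σ (u * v) = σ u * σ v := fun u v =>
    leftGerm_unique he0 he1 (hσgerm (u * v))
      (by rw [map_mul φ]; exact leftGerm_comp (hσpos v) (hσgerm u) (hσgerm v))
  let M : F₂ →* Multiplicative ℝ :=
    MonoidHom.mk' (fun v => Multiplicative.ofAdd (Real.log (σ v)))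
      (by
        intro u v
        rw [hmul u v, Real.log_mul (ne_of_gt (hσpos u)) (ne_of_gt (hσpos v))]
        rfl)
  have hker : σ w = 1 := by
    have h1 : M w = 1 := by
      have hle : commutator F₂ ≤ M.ker := by
        rw [commutator_def, Subgroup.commutator_le]
        intro g1 _ g2 _
        rw [MonoidHom.mem_ker, map_commutatorElement]
        exact commutatorElement_eq_one_iff_commute.mpr (Commute.all _ _)
      exact hle hw
    have h2 : Real.log (σ w) = 0 := by
      have := congrArg Multiplicative.toAdd h1
      simpa [M] using this
    have h3 := Real.exp_log (hσpos w)
    rw [h2, Real.exp_zero] at h3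
    exact h3.symm
  obtain ⟨ε, hε, hger⟩ := hσgerm w
  refine ⟨ε, hε, fun t ht1 ht2 => ?_⟩
  have h4 := hger t ht1 ht2
  rw [hker] at h4
  apply Subtype.ext
  rw [h4]; ring

end SlopeHom

section Orbitals

/-- the common fixed set of the two generators, in real coordinates -/
def FixSet (φ : F₂ →* Equiv.Perm I) : Set ℝ :=
  {y : ℝ | ∃ h : y ∈ I, φ (FreeGroup.of 0) ⟨y, h⟩ = ⟨y, h⟩ ∧ φ (FreeGroup.of 1) ⟨y, h⟩ = ⟨y, h⟩}

variable {φ : F₂ →* Equiv.Perm I}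

lemma fixSet_subset {y : ℝ} (hy : y ∈ FixSet φ) : y ∈ I := hy.1

lemma fixSet_fixall {y : ℝ} (hy : y ∈ FixSet φ) (h : y ∈ I) (w : F₂) :
    φ w ⟨y, h⟩ = ⟨y, h⟩ := by
  obtain ⟨h', hfix0, hfix1⟩ := hy
  induction w using FreeGroup.induction_on with
  | C1 => simp
  | of x =>
    fin_cases x
    · exact hfix0
    · exact hfix1
  | inv_of x ih =>
    rw [map_inv]
    rw [Equiv.Perm.inv_eq_iff_eq]
    exact ih.symm
  | mul u v ihu ihv =>
    rw [map_mul, Equiv.Perm.mul_apply, ihv, ihu]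

lemma zero_mem_fixSet (hPL : ∀ w, IsPLplus (φ w)) : (0:ℝ) ∈ FixSet φ := by
  have h : (0:ℝ) ∈ I := ⟨le_refl _, zero_le_one⟩
  refine ⟨h, ?_, ?_⟩
  · have := fix_zero (hPL (FreeGroup.of 0)).1
    have he : (⟨(0:ℝ), h⟩ : I) = (0 : I) := rfl
    rw [he]; exact this
  · have := fix_zero (hPL (FreeGroup.of 1)).1
    have he : (⟨(0:ℝ), h⟩ : I) = (0 : I) := rfl
    rw [he]; exact this

lemma one_mem_fixSet (hPL : ∀ w, IsPLplus (φ w)) : (1:ℝ) ∈ FixSet φ := by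
  have h : (1:ℝ) ∈ I := ⟨zero_le_one, le_refl _⟩
  refine ⟨h, ?_, ?_⟩
  · have := fix_one (hPL (FreeGroup.of 0)).1
    have he : (⟨(1:ℝ), h⟩ : I) = (1 : I) := rfl
    rw [he]; exact this
  · have := fix_one (hPL (FreeGroup.of 1)).1
    have he : (⟨(1:ℝ), h⟩ : I) = (1 : I) := rfl
    rw [he]; exact this

lemma isClosed_fixSet (hPL : ∀ w, IsPLplus (φ w)) : IsClosed (FixSet φ) := by
  have : FixSet φ =
      {y : ℝ | ∃ h : y ∈ I, φ (FreeGroup.of 0) ⟨y,h⟩ = ⟨y,h⟩} ∩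
      {y : ℝ | ∃ h : y ∈ I, φ (FreeGroup.of 1) ⟨y,h⟩ = ⟨y,h⟩} := by
    ext y
    constructor
    · rintro ⟨h, h0, h1⟩; exact ⟨⟨h, h0⟩, ⟨h, h1⟩⟩
    · rintro ⟨⟨h, h0⟩, ⟨h', h1⟩⟩; exact ⟨h, h0, h1⟩
  rw [this]
  exact (isClosed_fix (hPL _)).inter (isClosed_fix (hPL _))

/-- every group element maps the interior of an interval with fixed endpoints to itself -/
lemma mapsO (hPL : ∀ w, IsPLplus (φ w)) {c d : ℝ}
    (hcF : c ∈ FixSet φ) (hdF : d ∈ FixSet φ) (v : F₂) (y : I)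
    (h1 : c < (y:ℝ)) (h2 : (y:ℝ) < d) : c < (φ v y : ℝ) ∧ (φ v y : ℝ) < d := by
  have hcI := fixSet_subset hcF
  have hdI := fixSet_subset hdF
  have e1 : φ v ⟨c, hcI⟩ = ⟨c, hcI⟩ := fixSet_fixall hcF hcI v
  have e2 : φ v ⟨d, hdI⟩ = ⟨d, hdI⟩ := fixSet_fixall hdF hdI v
  constructor
  · have hlt : (⟨c, hcI⟩ : I) < y := by rw [← Subtype.coe_lt_coe]; exact h1
    have h5 : φ v ⟨c, hcI⟩ < φ v y := sm_subtype (hPL v).1 hlt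
    rw [e1] at h5
    exact Subtype.coe_lt_coe.mpr h5
  · have hlt : y < (⟨d, hdI⟩ : I) := by rw [← Subtype.coe_lt_coe]; exact h2
    have h5 : φ v y < φ v ⟨d, hdI⟩ := sm_subtype (hPL v).1 hlt
    rw [e2] at h5
    exact Subtype.coe_lt_coe.mpr h5

lemma inv_trivial (u : F₂) {c d : ℝ}
    (hu : ∀ y : I, c < (y:ℝ) → (y:ℝ) < d → φ u y = y) :
    ∀ y : I, c < (y:ℝ) → (y:ℝ) < d → φ u⁻¹ y = y := by
  intro y h1 h2
  rw [map_inv, Equiv.Perm.inv_eq_iff_eq]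
  exact (hu y h1 h2).symm

lemma commConj_trivial (hPL : ∀ w, IsPLplus (φ w)) {c d : ℝ}
    (hcF : c ∈ FixSet φ) (hdF : d ∈ FixSet φ) (w g : F₂)
    (hw : ∀ y : I, c < (y:ℝ) → (y:ℝ) < d → φ w y = y) :
    ∀ y : I, c < (y:ℝ) → (y:ℝ) < d → φ ⁅w, g * w * g⁻¹⁆ y = y := by
  have hwg : ∀ y : I, c < (y:ℝ) → (y:ℝ) < d → φ (g * w * g⁻¹) y = y := by
    intro y h1 h2
    have h3 := mapsO hPL hcF hdF g⁻¹ y h1 h2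
    rw [map_mul, map_mul, Equiv.Perm.mul_apply, Equiv.Perm.mul_apply,
      hw (φ g⁻¹ y) h3.1 h3.2, map_inv, Equiv.Perm.coe_inv, Equiv.apply_symm_apply]
  intro y h1 h2
  rw [commutatorElement_def, map_mul, map_mul, map_mul,
    Equiv.Perm.mul_apply, Equiv.Perm.mul_apply, Equiv.Perm.mul_apply,
    inv_trivial _ hwg y h1 h2, inv_trivial _ hw y h1 h2,
    hwg y h1 h2, hw y h1 h2]

end Orbitals

section Step

variable {φ : F₂ →* Equiv.Perm I}

lemma orbital_step (hPL : ∀ w, IsPLplus (φ w)) {c d : ℝ}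
    (hcF : c ∈ FixSet φ) (hdF : d ∈ FixSet φ) (hcd : c < d)
    (hint : ∀ z, c < z → z < d → z ∉ FixSet φ)
    {w : F₂} (hw1 : w ≠ 1) (hwc : w ∈ commutator F₂) :
    ∃ w' : F₂, w' ≠ 1 ∧ w' ∈ commutator F₂ ∧
      (∀ y : I, c < (y:ℝ) → (y:ℝ) < d → φ w' y = y) ∧
      ((∃ g : F₂, w' = ⁅w, g * w * g⁻¹⁆) ∨ w' = w) := by
  classical
  by_cases htriv : ∀ y : I, c < (y:ℝ) → (y:ℝ) < d → φ w y = y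
  · exact ⟨w, hw1, hwc, htriv, Or.inr rfl⟩
  push_neg at htriv
  obtain ⟨y₀, hy₀c, hy₀d, hy₀m⟩ := htriv
  have hcI := fixSet_subset hcF
  have hdI := fixSet_subset hdF
  have hc0 : (0:ℝ) ≤ c := hcI.1
  have hd1 : d ≤ 1 := hdI.2
  have hc1 : c < 1 := lt_of_lt_of_le hcd hd1
  have hd0 : (0:ℝ) < d := lt_of_le_of_lt hc0 hcd
  -- triviality of w near the endpoints
  obtain ⟨ε₁, hε₁, htrc⟩ := commutator_trivial_right φ hPL hc0 hc1
    (fun v => fixSet_fixall hcF ⟨hc0, hc1.le⟩ v) hwc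
  obtain ⟨ε₂, hε₂, htrd⟩ := commutator_trivial_left φ hPL hd0 hd1
    (fun v => fixSet_fixall hdF ⟨hd0.le, hd1⟩ v) hwc
  set p : ℝ := min (c + ε₁) ((c + d) / 2) with hp_def
  set q : ℝ := max (d - ε₂) ((c + d) / 2) with hq_def
  have hcp : c < p := lt_min (by linarith) (by linarith)
  have hqd : q < d := max_lt (by linarith) (by linarith)
  have hpq : p ≤ q := le_trans (min_le_right _ _) (le_max_right _ _)
  have hpI : p ∈ I := ⟨le_trans hc0 hcp.le, le_trans (le_trans hpq hqd.le) hd1⟩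
  -- moved points of w inside the orbital lie in [p, q]
  have moved_in : ∀ y : I, c < (y:ℝ) → (y:ℝ) < d → φ w y ≠ y → p ≤ (y:ℝ) ∧ (y:ℝ) ≤ q := by
    intro y h1 h2 hm
    constructor
    · by_contra hlt
      push_neg at hlt
      exact hm (htrc y h1.le (by
        have := min_le_left (c + ε₁) ((c + d) / 2)
        linarith))
    · by_contra hlt
      push_neg at hlt
      exact hm (htrd y (by
        have := le_max_left (d - ε₂) ((c + d) / 2)
        linarith) h2.le)
  -- the sup argument: find g pushing p beyond q
  obtain ⟨g, hg⟩ : ∃ g : F₂, q < (φ g ⟨p, hpI⟩ : ℝ) := by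
    set S : Set ℝ := {r : ℝ | ∃ v : F₂, r = (φ v ⟨p, hpI⟩ : ℝ)} with hS_def
    have hSne : S.Nonempty := ⟨p, 1, by simp⟩
    have hSbdd : BddAbove S := by
      refine ⟨1, ?_⟩
      rintro r ⟨v, rfl⟩
      exact (φ v ⟨p, hpI⟩).2.2
    have hmem : ∀ v : F₂, (φ v ⟨p, hpI⟩ : ℝ) ∈ S := fun v => ⟨v, rfl⟩
    have hub : ∀ r ∈ S, c < r ∧ r < d := by
      rintro r ⟨v, rfl⟩
      exact mapsO hPL hcF hdF v ⟨p, hpI⟩ hcp (lt_of_le_of_lt hpq hqd)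
    set s : ℝ := sSup S with hs_def
    have hscd : s ≤ d := csSup_le hSne (fun r hr => (hub r hr).2.le)
    have hps : p ≤ s := le_csSup hSbdd ⟨1, by simp⟩
    have hsd : s = d := by
      by_contra hne
      have hsltd : s < d := lt_of_le_of_ne hscd hne
      have hsI : s ∈ I := ⟨le_trans hpI.1 hps, le_trans hsltd.le hd1⟩
      have hcs : c < s := lt_of_lt_of_le hcp hps
      have hsnF : s ∉ FixSet φ := hint s hcs hsltd
      -- some generator moves s
      have hmove : ∃ v₀ : F₂, φ v₀ ⟨s, hsI⟩ ≠ ⟨s, hsI⟩ := by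
        by_contra hfa
        push_neg at hfa
        exact hsnF ⟨hsI, hfa _, hfa _⟩
      obtain ⟨v₀, hv₀⟩ := hmove
      -- get an element pushing s strictly up
      obtain ⟨h, hh⟩ : ∃ h : F₂, (⟨s, hsI⟩ : I) < φ h ⟨s, hsI⟩ := by
        rcases lt_or_gt_of_ne hv₀ with hlt|hgt
        · refine ⟨v₀⁻¹, ?_⟩
          rw [map_inv]
          have hsm' := sm_subtype (sm_inv (hPL v₀).1)
          have := hsm' hlt
          rwa [Equiv.Perm.coe_inv, Equiv.symm_apply_apply] at this
        · exact ⟨v₀, hgt⟩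
      set u : I := φ h⁻¹ ⟨s, hsI⟩ with hu_def
      have hus : u < ⟨s, hsI⟩ := by
        have hsm' := sm_subtype (sm_inv (hPL h).1)
        have := hsm' hh
        rw [Equiv.Perm.coe_inv, Equiv.symm_apply_apply] at this
        rw [hu_def, map_inv]
        exact this
      have hur' : (u:ℝ) < s := Subtype.coe_lt_coe.mpr hus
      obtain ⟨r, hrS, hur⟩ := exists_lt_of_lt_csSup hSne (by rw [← hs_def]; exact hur')
      obtain ⟨v, rfl⟩ := hrS
      have hlt2 : u < φ v ⟨p, hpI⟩ := Subtype.coe_lt_coe.mp hur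
      have h3 : φ h u < φ h (φ v ⟨p, hpI⟩) := sm_subtype (hPL h).1 hlt2
      have h4 : φ h u = ⟨s, hsI⟩ := by rw [hu_def, map_inv, Equiv.Perm.coe_inv, Equiv.apply_symm_apply]
      rw [h4] at h3
      have h5 : (φ h (φ v ⟨p, hpI⟩) : ℝ) ∈ S := by
        refine ⟨h * v, ?_⟩
        rw [map_mul, Equiv.Perm.mul_apply]
      have h6 := le_csSup hSbdd h5
      rw [← hs_def] at h6
      have h7 : s < (φ h (φ v ⟨p, hpI⟩) : ℝ) := Subtype.coe_lt_coe.mpr h3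
      linarith
    -- now q < d = sSup S
    obtain ⟨r, hrS, hqr⟩ := exists_lt_of_lt_csSup hSne (by rw [← hs_def, hsd]; exact hqd)
    obtain ⟨g, rfl⟩ := hrS
    exact ⟨g, hqr⟩
  set wg : F₂ := g * w * g⁻¹ with hwg_def
  have hwg_apply : ∀ y : I, φ wg y = φ g (φ w (φ g⁻¹ y)) := by
    intro y
    rw [hwg_def, map_mul, map_mul, Equiv.Perm.mul_apply, Equiv.Perm.mul_apply]
  have moved_wg : ∀ y : I, c < (y:ℝ) → (y:ℝ) < d → φ wg y ≠ y → q < (y:ℝ) := by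
    intro y h1 h2 hm
    have hz := mapsO hPL hcF hdF g⁻¹ y h1 h2
    set z : I := φ g⁻¹ y with hz_def
    have hmz : φ w z ≠ z := by
      intro he
      apply hm
      rw [hwg_apply, ← hz_def, he, hz_def, map_inv, Equiv.Perm.coe_inv, Equiv.apply_symm_apply]
    have hpz : p ≤ (z:ℝ) := (moved_in z hz.1 hz.2 hmz).1
    have hle : (⟨p, hpI⟩ : I) ≤ z := Subtype.coe_le_coe.mp hpz
    have hmono := (sm_subtype (hPL g).1).monotone hle
    have hy_eq : φ g z = y := by rw [hz_def, map_inv, Equiv.Perm.coe_inv, Equiv.apply_symm_apply]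
    rw [hy_eq] at hmono
    exact lt_of_lt_of_le hg (Subtype.coe_le_coe.mpr hmono)
  have comm : ∀ y : I, c < (y:ℝ) → (y:ℝ) < d → φ w (φ wg y) = φ wg (φ w y) := by
    intro y h1 h2
    by_cases hwy : φ w y = y
    · by_cases hwgy : φ wg y = y
      · rw [hwgy, hwy]; exact hwgy.symm
      · have hy_gt : q < (y:ℝ) := moved_wg y h1 h2 hwgy
        have hmem := mapsO hPL hcF hdF wg y h1 h2
        have hwg_moves : φ wg (φ wg y) ≠ φ wg y := fun he => hwgy ((φ wg).injective he)
        have hgt2 : q < (φ wg y : ℝ) := moved_wg (φ wg y) hmem.1 hmem.2 hwg_moves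
        have hfix2 : φ w (φ wg y) = φ wg y := by
          by_contra hne
          have := (moved_in (φ wg y) hmem.1 hmem.2 hne).2
          linarith
        rw [hfix2, hwy]
    · have hyq := moved_in y h1 h2 hwy
      have hfix1 : φ wg y = y := by
        by_contra hne
        have := moved_wg y h1 h2 hne
        linarith [hyq.2]
      have hmem := mapsO hPL hcF hdF w y h1 h2
      have hw_moves : φ w (φ w y) ≠ φ w y := fun he => hwy ((φ w).injective he)
      have hyq2 := moved_in (φ w y) hmem.1 hmem.2 hw_moves
      have hfix2 : φ wg (φ w y) = φ w y := by
        by_contra hne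
        have := moved_wg (φ w y) hmem.1 hmem.2 hne
        linarith [hyq2.2]
      rw [hfix1, hfix2]
  set w' : F₂ := ⁅w, wg⁆ with hw'_def
  have htriv' : ∀ y : I, c < (y:ℝ) → (y:ℝ) < d → φ w' y = y := by
    intro y h1 h2
    have hy1 := mapsO hPL hcF hdF wg⁻¹ y h1 h2
    set y1 : I := φ wg⁻¹ y with hy1_def
    have hy2 := mapsO hPL hcF hdF w⁻¹ y1 hy1.1 hy1.2
    set y2 : I := φ w⁻¹ y1 with hy2_def
    have hc2 := comm y2 hy2.1 hy2.2
    have e1 : φ w y2 = y1 := by rw [hy2_def, map_inv, Equiv.Perm.coe_inv, Equiv.apply_symm_apply]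
    have e2 : φ wg y1 = y := by rw [hy1_def, map_inv, Equiv.Perm.coe_inv, Equiv.apply_symm_apply]
    have key : φ w (φ wg y2) = y := by rw [hc2, e1, e2]
    rw [hw'_def, commutatorElement_def, map_mul, map_mul, map_mul,
      Equiv.Perm.mul_apply, Equiv.Perm.mul_apply, Equiv.Perm.mul_apply, ← hy1_def, ← hy2_def]
    exact key
  refine ⟨w', ?_, ?_, htriv', Or.inl ⟨g, by rw [hw'_def, hwg_def]⟩⟩
  · intro hone
    have hcomm : Commute w wg :=
      commutatorElement_eq_one_iff_commute.mp (by rw [← hw'_def]; exact hone)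
    obtain ⟨z, ⟨m, hm⟩, ⟨n, hn⟩⟩ := commute_common_power hcomm
    have hm0 : m ≠ 0 := by rintro rfl; rw [zpow_zero] at hm; exact hw1 hm
    have hn0 : n ≠ 0 := by
      rintro rfl
      rw [zpow_zero] at hn
      have hwg1 : g * w * g⁻¹ = 1 := by rw [← hwg_def]; exact hn
      have hw_one : w = 1 := by
        have h8 := congrArg (fun t => g⁻¹ * t * g) hwg1
        simpa [mul_assoc] using h8
      exact hw1 hw_one
    have hz_m : φ (z ^ m) y₀ ≠ y₀ := by rw [← hm]; exact hy₀m
    have hz_moves : φ z y₀ ≠ y₀ := by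
      intro he
      apply hz_m
      rw [map_zpow]
      exact (zpow_fix_iff (hPL z).1 hm0 y₀).mpr he
    have hwg_moves : φ wg y₀ ≠ y₀ := by
      rw [hn, map_zpow]
      intro he
      exact hz_moves ((zpow_fix_iff (hPL z).1 hn0 y₀).mp he)
    have hq1 := (moved_in y₀ hy₀c hy₀d hy₀m).2
    have hq2 := moved_wg y₀ hy₀c hy₀d hwg_moves
    linarith
  · rw [hw'_def]
    exact commutator_def F₂ ▸
      Subgroup.commutator_mem_commutator (Subgroup.mem_top _) (Subgroup.mem_top _)

end Step

section Structure

lemma fix_structure {g : Equiv.Perm I} (hg : IsPLplus g) :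
    ∃ (N : ℕ) (T : Fin N → Set ℝ), (∀ j, (T j).OrdConnected) ∧
      {y : ℝ | ∃ h : y ∈ I, g ⟨y, h⟩ = ⟨y, h⟩} = ⋃ j, T j := by
  obtain ⟨hsm, k, x, hx, hx0, hx1, hpieces⟩ := hg
  choose a b hab using hpieces
  have hk : 0 < k := by
    by_contra hk
    have hk0 : k = 0 := by omega
    subst hk0
    rw [show (Fin.last 0) = 0 from rfl, hx0] at hx1
    norm_num at hx1
  refine ⟨k, fun i => Set.Icc (x i.castSucc) (x i.succ) ∩ Set.Icc (0:ℝ) 1 ∩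
    {t : ℝ | a i * t + b i = t}, ?_, ?_⟩
  · intro i
    refine (Set.ordConnected_Icc.inter Set.ordConnected_Icc).inter ⟨?_⟩
    intro u hu v hv z hz
    by_cases huv : u = v
    · subst huv
      have : z = u := le_antisymm hz.2 hz.1
      subst this
      exact hu
    · have ha1 : a i = 1 := by
        have h10 : (a i - 1) * (u - v) = 0 := by
          have hu' : a i * u + b i = u := hu
          have hv' : a i * v + b i = v := hv
          ring_nf
          nlinarith [hu', hv']
        rcases mul_eq_zero.mp h10 with h|h
        · linarith
        · exact absurd (by linarith : u = v) huv
      have hb0 : b i = 0 := by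
        have hu' : a i * u + b i = u := hu
        rw [ha1] at hu'
        linarith
      show a i * z + b i = z
      rw [ha1, hb0]
      ring
  · ext y
    constructor
    · rintro ⟨hy, hfix⟩
      obtain ⟨i, hi1, hi2⟩ := exists_piece_closed x hx.monotone (y := y)
        (by rw [hx0]; exact hy.1) (by rw [hx1]; exact hy.2) hk
      refine Set.mem_iUnion.mpr ⟨i, ⟨⟨hi1, hi2⟩, hy⟩, ?_⟩
      have := hab i ⟨y, hy⟩ hi1 hi2
      rw [hfix] at this
      exact this.symm
    · intro hy
      obtain ⟨i, ⟨⟨hi1, hi2⟩, hyI⟩, heq⟩ := Set.mem_iUnion.mp hy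
      refine ⟨hyI, ?_⟩
      have := hab i ⟨y, hyI⟩ hi1 hi2
      rw [heq] at this
      exact Subtype.ext this

noncomputable def oc (φ : F₂ →* Equiv.Perm I) (x : ℝ) : ℝ := sSup (FixSet φ ∩ Set.Icc 0 x)

noncomputable def od (φ : F₂ →* Equiv.Perm I) (x : ℝ) : ℝ := sInf (FixSet φ ∩ Set.Icc x 1)

variable {φ : F₂ →* Equiv.Perm I}

lemma oc_spec (hPL : ∀ w, IsPLplus (φ w)) {x : ℝ} (hxI : x ∈ I) (hx : x ∉ FixSet φ) :
    oc φ x ∈ FixSet φ ∧ 0 ≤ oc φ x ∧ oc φ x < x ∧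
      ∀ z ∈ FixSet φ, z ≤ x → z ≤ oc φ x := by
  have hcl : IsClosed (FixSet φ ∩ Set.Icc 0 x) := (isClosed_fixSet hPL).inter isClosed_Icc
  have hne : (FixSet φ ∩ Set.Icc 0 x).Nonempty :=
    ⟨0, zero_mem_fixSet hPL, le_refl _, hxI.1⟩
  have hbdd : BddAbove (FixSet φ ∩ Set.Icc 0 x) := ⟨x, fun z hz => hz.2.2⟩
  have hmem : oc φ x ∈ FixSet φ ∩ Set.Icc 0 x := hcl.csSup_mem hne hbdd
  obtain ⟨hF, h0, hx'⟩ := hmem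
  exact ⟨hF, h0, lt_of_le_of_ne hx' (fun he => hx (he ▸ hF)),
    fun z hzF hzx => le_csSup hbdd ⟨hzF, (fixSet_subset hzF).1, hzx⟩⟩

lemma od_spec (hPL : ∀ w, IsPLplus (φ w)) {x : ℝ} (hxI : x ∈ I) (hx : x ∉ FixSet φ) :
    od φ x ∈ FixSet φ ∧ od φ x ≤ 1 ∧ x < od φ x ∧
      ∀ z ∈ FixSet φ, x ≤ z → od φ x ≤ z := by
  have hcl : IsClosed (FixSet φ ∩ Set.Icc x 1) := (isClosed_fixSet hPL).inter isClosed_Icc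
  have hne : (FixSet φ ∩ Set.Icc x 1).Nonempty :=
    ⟨1, one_mem_fixSet hPL, hxI.2, le_refl _⟩
  have hbdd : BddBelow (FixSet φ ∩ Set.Icc x 1) := ⟨x, fun z hz => hz.2.1⟩
  have hmem : od φ x ∈ FixSet φ ∩ Set.Icc x 1 := hcl.csInf_mem hne hbdd
  obtain ⟨hF, hx', h1⟩ := hmem
  exact ⟨hF, h1, lt_of_le_of_ne hx' (fun he => hx (he.symm ▸ hF)),
    fun z hzF hzx => csInf_le hbdd ⟨hzF, hzx, (fixSet_subset hzF).2⟩⟩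

lemma orb_gap (hPL : ∀ w, IsPLplus (φ w)) {x : ℝ} (hxI : x ∈ I) (hx : x ∉ FixSet φ) :
    ∀ z, oc φ x < z → z < od φ x → z ∉ FixSet φ := by
  intro z h1 h2 hzF
  rcases le_or_gt z x with hle|hlt
  · exact absurd ((oc_spec hPL hxI hx).2.2.2 z hzF hle) (not_le.mpr h1)
  · exact absurd ((od_spec hPL hxI hx).2.2.2 z hzF hlt.le) (not_le.mpr h2)

lemma od_mono_of_oc_eq (hPL : ∀ w, IsPLplus (φ w)) {x x' : ℝ} (hxI : x ∈ I)
    (hx : x ∉ FixSet φ) (hx'I : x' ∈ I) (hx' : x' ∉ FixSet φ)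
    (h : oc φ x = oc φ x') : od φ x ≤ od φ x' := by
  by_contra hlt
  push_neg at hlt
  have hdF := (od_spec hPL hx'I hx').1
  refine orb_gap hPL hxI hx (od φ x') ?_ hlt hdF
  rw [h]
  calc oc φ x' < x' := (oc_spec hPL hx'I hx').2.2.1
    _ < od φ x' := (od_spec hPL hx'I hx').2.2.1

lemma oc_eq_sSup_piece (hPL : ∀ w, IsPLplus (φ w)) {ι : Type} (T : ι → Set ℝ)
    (hT : ∀ j, (T j).OrdConnected) (hrep : FixSet φ = ⋃ j, T j)
    {x : ℝ} (hxI : x ∈ I) (hx : x ∉ FixSet φ) :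
    ∃ j, oc φ x = sSup (T j) := by
  obtain ⟨hF, h0, hlt, hmax⟩ := oc_spec hPL hxI hx
  have hFu : oc φ x ∈ ⋃ j, T j := hrep ▸ hF
  obtain ⟨j, hj⟩ := Set.mem_iUnion.mp hFu
  have hmaxT : ∀ t ∈ T j, t ≤ oc φ x := by
    intro t ht
    by_contra hgt
    push_neg at hgt
    set t' := min t x with ht'
    have ht'mem : t' ∈ Set.Icc (oc φ x) t := ⟨le_min hgt.le hlt.le, min_le_left _ _⟩
    have ht'T : t' ∈ T j := (hT j).out hj ht ht'mem
    have ht'F : t' ∈ FixSet φ := hrep ▸ Set.mem_iUnion.mpr ⟨j, ht'T⟩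
    have h5 := hmax t' ht'F (min_le_right _ _)
    have h6 : oc φ x < t' := lt_min hgt hlt
    linarith
  exact ⟨j, le_antisymm (le_csSup ⟨oc φ x, fun t ht => hmaxT t ht⟩ hj)
    (csSup_le ⟨_, hj⟩ hmaxT)⟩

end Structure


/-- (Brin–Squier) $\mathrm{PL}^+(I)$ contains no nonabelian free subgroup: there is no
injective homomorphism from the free group on two generators whose image consists of
piecewise-linear homeomorphisms. -/
theorem no_free_subgroup_of_PL :
    ¬ ∃ φ : FreeGroup (Fin 2) →* Equiv.Perm unitInterval,
        Function.Injective φ ∧ ∀ w : FreeGroup (Fin 2), IsPLplus (φ w) := by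
  rintro ⟨φ, hinj, hPL⟩
  classical
  obtain ⟨N0, T0, hT0, hrep0⟩ := fix_structure (hPL (FreeGroup.of 0))
  obtain ⟨N1, T1, hT1, hrep1⟩ := fix_structure (hPL (FreeGroup.of 1))
  have hrep : FixSet φ = ⋃ ij : Fin N0 × Fin N1, (T0 ij.1 ∩ T1 ij.2) := by
    ext y
    constructor
    · rintro ⟨h, h0, h1⟩
      have m0 : y ∈ ⋃ j, T0 j := by rw [← hrep0]; exact ⟨h, h0⟩
      have m1 : y ∈ ⋃ j, T1 j := by rw [← hrep1]; exact ⟨h, h1⟩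
      obtain ⟨i, hi⟩ := Set.mem_iUnion.mp m0
      obtain ⟨i', hi'⟩ := Set.mem_iUnion.mp m1
      exact Set.mem_iUnion.mpr ⟨(i, i'), hi, hi'⟩
    · intro hy
      obtain ⟨⟨i, i'⟩, hi, hi'⟩ := Set.mem_iUnion.mp hy
      have m0 : y ∈ {y : ℝ | ∃ h : y ∈ I, φ (FreeGroup.of 0) ⟨y,h⟩ = ⟨y,h⟩} := by
        rw [hrep0]; exact Set.mem_iUnion.mpr ⟨i, hi⟩
      have m1 : y ∈ {y : ℝ | ∃ h : y ∈ I, φ (FreeGroup.of 1) ⟨y,h⟩ = ⟨y,h⟩} := by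
        rw [hrep1]; exact Set.mem_iUnion.mpr ⟨i', hi'⟩
      obtain ⟨h, h0⟩ := m0
      obtain ⟨h', h1⟩ := m1
      exact ⟨h, h0, h1⟩
  set OrbSet : Set (ℝ × ℝ) :=
    {pp | ∃ x : ℝ, ∃ hx : x ∈ I, x ∉ FixSet φ ∧ pp = (oc φ x, od φ x)} with hOrbSet
  have hfin : OrbSet.Finite := by
    apply Set.Finite.of_finite_image (f := Prod.fst)
    · apply Set.Finite.subset
        (Set.finite_range (fun ij : Fin N0 × Fin N1 => sSup (T0 ij.1 ∩ T1 ij.2)))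
      rintro r ⟨pp, ⟨x, hxI, hxF, rfl⟩, rfl⟩
      obtain ⟨ij, hij⟩ := oc_eq_sSup_piece hPL
        (fun ij : Fin N0 × Fin N1 => T0 ij.1 ∩ T1 ij.2)
        (fun ij => (hT0 ij.1).inter (hT1 ij.2)) hrep hxI hxF
      exact ⟨ij, hij.symm⟩
    · rintro ⟨c1, d1⟩ ⟨x, hxI, hxF, he⟩ ⟨c2, d2⟩ ⟨x', hx'I, hx'F, he'⟩ hfst
      rw [Prod.mk.injEq] at he he'
      obtain ⟨rfl, rfl⟩ := he
      obtain ⟨rfl, rfl⟩ := he'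
      simp only at hfst
      have hod := le_antisymm (od_mono_of_oc_eq hPL hxI hxF hx'I hx'F hfst)
        (od_mono_of_oc_eq hPL hx'I hx'F hxI hxF hfst.symm)
      rw [Prod.mk.injEq]
      exact ⟨hfst, hod⟩
  have main : ∀ s : Finset (ℝ × ℝ), (∀ pp ∈ s, pp.1 ∈ FixSet φ ∧ pp.2 ∈ FixSet φ ∧
      pp.1 < pp.2 ∧ ∀ z, pp.1 < z → z < pp.2 → z ∉ FixSet φ) →
      ∃ w : F₂, w ≠ 1 ∧ w ∈ commutator F₂ ∧
        ∀ pp ∈ s, ∀ y : I, pp.1 < (y:ℝ) → (y:ℝ) < pp.2 → φ w y = y := by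
    intro s
    induction s using Finset.induction_on with
    | empty =>
      intro _
      refine ⟨⁅FreeGroup.of 0, FreeGroup.of 1⁆, base_ne_one, ?_, by simp⟩
      exact commutator_def F₂ ▸
        Subgroup.commutator_mem_commutator (Subgroup.mem_top _) (Subgroup.mem_top _)
    | insert _ _ hps ih =>
      intro hOrb
      obtain ⟨w, hw1, hwc, hwtriv⟩ := ih (fun pp hpp => hOrb pp (Finset.mem_insert_of_mem hpp))
      obtain ⟨hc, hd, hlt, hgap⟩ := hOrb _ (Finset.mem_insert_self _ _)
      obtain ⟨w', hw'1, hw'c, hw'triv, hw'struct⟩ := orbital_step hPL hc hd hlt hgap hw1 hwc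
      refine ⟨w', hw'1, hw'c, ?_⟩
      intro pp hpp y h1 h2
      rcases Finset.mem_insert.mp hpp with rfl|hpp'
      · exact hw'triv y h1 h2
      · obtain ⟨hc', hd', -, -⟩ := hOrb pp (Finset.mem_insert_of_mem hpp')
        rcases hw'struct with ⟨g, rfl⟩|rfl
        · exact commConj_trivial hPL hc' hd' w g
            (fun y h1 h2 => hwtriv pp hpp' y h1 h2) y h1 h2
        · exact hwtriv pp hpp' y h1 h2
  obtain ⟨w, hw1, hwc, hwtriv⟩ := main hfin.toFinset (by
    intro pp hpp
    rw [Set.Finite.mem_toFinset] at hpp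
    obtain ⟨x, hxI, hxF, rfl⟩ := hpp
    obtain ⟨hocF, -, hoc_lt, -⟩ := oc_spec hPL hxI hxF
    obtain ⟨hodF, -, hod_gt, -⟩ := od_spec hPL hxI hxF
    exact ⟨hocF, hodF, lt_trans hoc_lt hod_gt, orb_gap hPL hxI hxF⟩)
  apply hw1
  apply hinj
  rw [map_one]
  apply Equiv.ext
  intro y
  rw [Equiv.Perm.one_apply]
  by_cases hy : (y:ℝ) ∈ FixSet φ
  · have := fixSet_fixall hy y.2 w
    simpa using this
  · have hpair : (oc φ (y:ℝ), od φ (y:ℝ)) ∈ OrbSet := ⟨(y:ℝ), y.2, hy, rfl⟩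
    exact hwtriv _ (hfin.mem_toFinset.mpr hpair) y
      (oc_spec hPL y.2 hy).2.2.1 (od_spec hPL y.2 hy).2.2.1
end

section
/- Let G be a group, let f : G → ℝ be a homogeneous quasimorphism with defect ε(f) > 0, and let g ∈ [G,G]. Then scl(g) ≥ |f(g)| / (2·ε(f)). In particular, if g is a product of m commutators and n ≥ 1, then |f(g)| ≤ 2·m·ε(f). -/
open Filter
open scoped commutatorElement

open Filter

section QMaux

variable {G : Type*} [Group G] {f : G → ℝ}

/-- Representability as a product of `m` commutators. -/
def RepComm (m : ℕ) (x : G) : Prop :=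
  ∃ a b : Fin m → G, x = (List.ofFn fun i => ⁅a i, b i⁆).prod

lemma qm_bound (hf : IsHomQM f) (a b : G) : |f a + f b - f (a * b)| ≤ defect f :=
  le_csSup hf.2 ⟨a, b, rfl⟩

lemma qm_one (hf : IsHomQM f) : f 1 = 0 := by
  simpa using hf.1 1 0

lemma qm_inv (hf : IsHomQM f) (a : G) : f a⁻¹ = -f a := by
  simpa using hf.1 a (-1)

lemma qm_pow (hf : IsHomQM f) (a : G) (n : ℕ) : f (a ^ n) = n * f a := by
  have := hf.1 a (n : ℤ)
  rw [zpow_natCast] at this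
  exact_mod_cast this

lemma qm_conj (hf : IsHomQM f) (a b : G) : f (a * b * a⁻¹) = f b := by
  have key : ∀ c : G, |f (a * c * a⁻¹) - f c| ≤ 2 * defect f := by
    intro c
    have h1 := qm_bound hf (a * c) a⁻¹
    have h2 := qm_bound hf a c
    have hinv := qm_inv hf a
    have e : |f (a * c * a⁻¹) - f c|
        = |(f (a * c) + f a⁻¹ - f (a * c * a⁻¹)) + (f a + f c - f (a * c))| := by
      rw [hinv]; rw [abs_sub_comm]; congr 1; ring
    rw [e]
    calc |(f (a * c) + f a⁻¹ - f (a * c * a⁻¹)) + (f a + f c - f (a * c))|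
        ≤ |f (a * c) + f a⁻¹ - f (a * c * a⁻¹)| + |f a + f c - f (a * c)| := abs_add_le _ _
      _ ≤ 2 * defect f := by linarith
  have hn : ∀ n : ℕ, (n : ℝ) * |f (a * b * a⁻¹) - f b| ≤ 2 * defect f := by
    intro n
    have hcp : (a * b * a⁻¹) ^ n = a * b ^ n * a⁻¹ := by
      rw [conj_pow]
    have := key (b ^ n)
    rw [← hcp, qm_pow hf _ n, qm_pow hf b n] at this
    calc (n : ℝ) * |f (a * b * a⁻¹) - f b| = |(n : ℝ) * f (a * b * a⁻¹) - n * f b| := by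
          rw [← mul_sub, abs_mul, Nat.abs_cast]
      _ ≤ 2 * defect f := this
  by_contra h
  have hne : 0 < |f (a * b * a⁻¹) - f b| := abs_pos.2 (sub_ne_zero.2 h)
  obtain ⟨n, hn'⟩ := exists_nat_gt ((2 * defect f) / |f (a * b * a⁻¹) - f b|)
  have := hn n
  rw [div_lt_iff₀ hne] at hn'
  linarith

lemma qm_comm (hf : IsHomQM f) (a b : G) : |f ⁅a, b⁆| ≤ defect f := by
  have h := qm_bound hf (a * b * a⁻¹) b⁻¹
  rw [qm_conj hf a b, qm_inv hf b] at h
  have e : ⁅a, b⁆ = a * b * a⁻¹ * b⁻¹ := commutatorElement_def a b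
  rw [e]
  simpa using h

lemma qm_list (hf : IsHomQM f) :
    ∀ L : List G, (∀ c ∈ L, |f c| ≤ defect f) → |f L.prod| ≤ 2 * L.length * defect f := by
  intro L
  induction L with
  | nil => intro _; simp [qm_one hf]
  | cons c t ih =>
    intro h
    have h1 := qm_bound hf c t.prod
    have h2 := ih fun x hx => h x (List.mem_cons_of_mem _ hx)
    have h3 := h c List.mem_cons_self
    have habs : |f (c * t.prod)| ≤ |f c| + |f t.prod| + |f c + f t.prod - f (c * t.prod)| := by
      have h4 := abs_sub (f c + f t.prod) (f c + f t.prod - f (c * t.prod))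
      have h5 := abs_add_le (f c) (f t.prod)
      have h6 : f c + f t.prod - (f c + f t.prod - f (c * t.prod)) = f (c * t.prod) := by ring
      rw [h6] at h4
      linarith
    simp only [List.prod_cons, List.length_cons]
    push_cast
    nlinarith

lemma RepComm.bound (hf : IsHomQM f) {m : ℕ} {x : G} (hx : RepComm m x) :
    |f x| ≤ 2 * m * defect f := by
  obtain ⟨a, b, rfl⟩ := hx
  have := qm_list hf (List.ofFn fun i => ⁅a i, b i⁆) ?_
  · simpa using this
  · intro c hc
    rw [List.mem_ofFn] at hc
    obtain ⟨i, rfl⟩ := hc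
    exact qm_comm hf _ _

lemma RepComm.mul {m k : ℕ} {x y : G} (hx : RepComm m x) (hy : RepComm k y) :
    RepComm (m + k) (x * y) := by
  obtain ⟨a, b, rfl⟩ := hx
  obtain ⟨a', b', rfl⟩ := hy
  refine ⟨Fin.append a a', Fin.append b b', ?_⟩
  rw [List.ofFn_add]
  simp [Fin.append_left, Fin.append_right]

lemma RepComm.one : RepComm (G := G) 0 1 := ⟨![], ![], by simp⟩

lemma RepComm.pow {m : ℕ} {x : G} (hx : RepComm m x) (n : ℕ) : RepComm (n * m) (x ^ n) := by
  induction n with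
  | zero => simpa using RepComm.one
  | succ n ih =>
    have := ih.mul hx
    rw [Nat.succ_mul]
    simpa [pow_succ] using this

lemma list_repComm : ∀ L : List G, (∀ y ∈ L, y ∈ commutatorSet G) →
    RepComm L.length L.prod := by
  intro L
  induction L with
  | nil => intro _; simpa using RepComm.one
  | cons c t ih =>
    intro hL'
    obtain ⟨p, q, rfl⟩ := hL' c List.mem_cons_self
    have h1 : RepComm 1 (⁅p, q⁆) := ⟨![p], ![q], by simp⟩
    have h2 := ih fun y hy => hL' y (List.mem_cons_of_mem _ hy)
    have := h1.mul h2
    simpa [List.prod_cons, Nat.add_comm] using this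

lemma exists_repComm {g : G} (hg : g ∈ commutator G) : ∃ m, RepComm m g := by
  rw [commutator_eq_closure] at hg
  have hmem : g ∈ Submonoid.closure (commutatorSet G ∪ (commutatorSet G)⁻¹) := by
    rw [← Subgroup.closure_toSubmonoid]; exact hg
  obtain ⟨L, hL, rfl⟩ := Submonoid.exists_list_of_mem_closure hmem
  refine ⟨L.length, list_repComm L fun y hy => ?_⟩
  rcases hL y hy with h | h
  · exact h
  · obtain ⟨p, q, hpq⟩ := Set.mem_inv.mp h
    exact ⟨q, p, by rw [← commutatorElement_inv, hpq, inv_inv]⟩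

end QMaux

/-- A homogeneous quasimorphism with positive defect gives a lower bound for scl:
$\mathrm{scl}(g) \geq |f(g)|/(2\varepsilon(f))$.  In particular a product of $m$
commutators has $|f(g)| \le 2m\varepsilon(f)$. -/
theorem scl_lower_bound_of_homQM (G : Type*) [Group G]
    (f : G → ℝ) (hf : IsHomQM f) (hpos : 0 < defect f)
    (g : G) (hg : g ∈ commutator G) :
    scl g ≥ |f g| / (2 * defect f) ∧
      ∀ (m : ℕ) (a b : Fin m → G),
        g = (List.ofFn fun i => ⁅a i, b i⁆).prod → |f g| ≤ 2 * m * defect f := by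

  refine ⟨?_, fun m a b hgp => RepComm.bound hf ⟨a, b, hgp⟩⟩
  obtain ⟨m₀, hm₀⟩ := exists_repComm hg
  have hrep : ∀ n : ℕ, RepComm (commLength (g ^ n)) (g ^ n) := by
    intro n
    have hne : {m : ℕ | ∃ a b : Fin m → G,
        g ^ n = (List.ofFn fun i => ⁅a i, b i⁆).prod}.Nonempty := ⟨n * m₀, hm₀.pow n⟩
    exact Nat.sInf_mem hne
  have hle : ∀ n : ℕ, (commLength (g ^ n) : ℝ) ≤ (n : ℝ) * m₀ := by
    intro n
    have h : commLength (g ^ n) ≤ n * m₀ := Nat.sInf_le (hm₀.pow n)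
    exact_mod_cast h
  have hge : ∀ n : ℕ, (n : ℝ) * |f g| ≤ 2 * (commLength (g ^ n) : ℝ) * defect f := by
    intro n
    have h := (hrep n).bound hf
    rw [qm_pow hf g n, abs_mul, Nat.abs_cast] at h
    exact h
  have hev : ∀ n : ℕ, 1 ≤ n → |f g| / (2 * defect f) ≤ (commLength (g ^ n) : ℝ) / n := by
    intro n hn
    have hn' : (0:ℝ) < n := by exact_mod_cast hn
    rw [div_le_div_iff₀ (by linarith) hn']
    nlinarith [hge n]
  have hcb : IsCoboundedUnder (· ≥ ·) atTop
      (fun n : ℕ => (commLength (g ^ n) : ℝ) / n) := by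
    refine ⟨(m₀ : ℝ), fun r hr => ?_⟩
    rw [eventually_map] at hr
    obtain ⟨n, hn1, hn2⟩ := (hr.and (eventually_ge_atTop 1)).exists
    have hn' : (0:ℝ) < n := by exact_mod_cast hn2
    have hub : (commLength (g ^ n) : ℝ) / n ≤ m₀ := by
      rw [div_le_iff₀ hn']
      nlinarith [hle n]
    exact le_trans hn1 hub
  have h := le_liminf_of_le hcb (eventually_atTop.2 ⟨1, hev⟩)
  exact h
end

section
/- Let G be a solvable group. Then scl(g) = 0 for every g in the commutator subgroup [G,G], and every homogeneous quasimorphism on G is a group homomorphism. -/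
open Filter
open scoped commutatorElement

namespace SclAux
variable {G : Type*} [Group G]

/-- product of commutators from a list of pairs -/
def pc {G : Type*} [Group G] (l : List (G × G)) : G := (l.map fun p => ⁅p.1, p.2⁆).prod

@[simp] lemma pc_nil : pc ([] : List (G × G)) = 1 := rfl

@[simp] lemma pc_cons (p : G × G) (l : List (G × G)) : pc (p :: l) = ⁅p.1, p.2⁆ * pc l := by
  simp [pc]

@[simp] lemma pc_append (l₁ l₂ : List (G × G)) : pc (l₁ ++ l₂) = pc l₁ * pc l₂ := by
  simp [pc]

lemma commLength_le (g : G) (l : List (G × G)) (h : pc l = g) :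
    commLength g ≤ l.length := by
  apply Nat.sInf_le
  refine ⟨fun i => (l.get i).1, fun i => (l.get i).2, ?_⟩
  rw [← h, pc]
  congr 1
  conv_lhs => rw [← List.ofFn_get l]
  rw [List.map_ofFn]
  rfl

lemma pc_reverse_swap (l : List (G × G)) :
    pc ((l.map fun p => (p.2, p.1)).reverse) = (pc l)⁻¹ := by
  induction l with
  | nil => simp
  | cons p l ih =>
      rw [List.map_cons, List.reverse_cons, pc_append, ih, pc_cons]
      simp [commutatorElement_inv, mul_inv_rev]

lemma mem_commutator_exists_list {H : Subgroup G} {g : G} (hg : g ∈ ⁅H, H⁆) :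
    ∃ l : List (G × G), (∀ p ∈ l, p.1 ∈ H ∧ p.2 ∈ H) ∧ pc l = g := by
  rw [Subgroup.commutator_def] at hg
  induction hg using Subgroup.closure_induction with
  | mem x hx =>
      obtain ⟨a, ha, b, hb, rfl⟩ := hx
      exact ⟨[(a, b)], by simp [ha, hb], by simp⟩
  | one => exact ⟨[], by simp, by simp⟩
  | mul x y hx hy ihx ihy =>
      obtain ⟨l₁, h₁, rfl⟩ := ihx
      obtain ⟨l₂, h₂, rfl⟩ := ihy
      refine ⟨l₁ ++ l₂, ?_, by simp⟩
      intro p hp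
      rcases List.mem_append.mp hp with h | h
      exacts [h₁ p h, h₂ p h]
  | inv x hx ihx =>
      obtain ⟨l, hl, rfl⟩ := ihx
      refine ⟨(l.map fun p => (p.2, p.1)).reverse, ?_, ?_⟩
      · intro p hp
        obtain ⟨q, hq, rfl⟩ := List.mem_map.mp (List.mem_reverse.mp hp)
        have := hl q hq
        exact ⟨this.2, this.1⟩
      · exact pc_reverse_swap l

lemma exists_list_commLength {g : G} (hg : g ∈ commutator G) :
    ∃ l : List (G × G), l.length = commLength g ∧ pc l = g := by
  have hne : {m : ℕ | ∃ a b : Fin m → G, g = (List.ofFn fun i => ⁅a i, b i⁆).prod}.Nonempty := by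
    obtain ⟨l, -, rfl⟩ := mem_commutator_exists_list hg
    refine ⟨l.length, fun i => (l.get i).1, fun i => (l.get i).2, ?_⟩
    rw [pc]
    congr 1
    conv_lhs => rw [← List.ofFn_get l]
    rw [List.map_ofFn]
    rfl
  obtain ⟨a, b, hab⟩ := Nat.sInf_mem hne
  refine ⟨List.ofFn (fun i => (a i, b i)), by simp [commLength], ?_⟩
  rw [pc, List.map_ofFn]
  exact (hab.symm : _)

lemma pc_map {G' : Type*} [Group G'] (φ : G →* G') (l : List (G × G)) :
    pc (l.map fun p => (φ p.1, φ p.2)) = φ (pc l) := by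
  induction l with
  | nil => simp
  | cons p l ih => simp [ih, map_commutatorElement]

lemma pc_mem_commutator {H K : Subgroup G} (l : List (G × G))
    (hl : ∀ p ∈ l, p.1 ∈ H ∧ p.2 ∈ K) : pc l ∈ ⁅H, K⁆ := by
  induction l with
  | nil => simpa using one_mem _
  | cons p l ih =>
      simp only [pc_cons]
      exact mul_mem (Subgroup.commutator_mem_commutator (hl p (by simp)).1 (hl p (by simp)).2)
        (ih fun q hq => hl q (by simp [hq]))


lemma ac5 {H : Type*} [CommGroup H] (A Q B c u : H) :
    A * Q * B * c * u = Q * u * (A * (B * c)) := by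
  simp only [mul_comm, mul_left_comm, mul_assoc]

section Core
variable (N : Subgroup G) [hN : N.Normal] (hc : ∀ x ∈ N, ∀ y ∈ N, Commute x y)

lemma comm_mem_right (x y : G) (hy : y ∈ N) : ⁅x, y⁆ ∈ N := by
  have h : ⁅x, y⁆ = (x * y * x⁻¹) * y⁻¹ := by group
  rw [h]
  exact mul_mem (hN.conj_mem y hy x) (inv_mem hy)

include hc in
lemma comm_merge (x z y : G) (hz : z ∈ N) (hy : y ∈ N) :
    ⁅x, z * y⁆ = ⁅x, z⁆ * ⁅x, y⁆ := by
  have h1 : ⁅x, z * y⁆ = ⁅x, z⁆ * (z * ⁅x, y⁆ * z⁻¹) := by group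
  have h2 : z * ⁅x, y⁆ = ⁅x, y⁆ * z := (hc z hz _ (comm_mem_right N x y hy)).eq
  rw [h1, h2, mul_assoc, mul_inv_cancel, mul_one]

include hc in
lemma core (w u : G) (hu : u ∈ N) (k : ℕ) :
    ∃ y ∈ N, (w * u) ^ k = w ^ k * u ^ k * ⁅w⁻¹, y⁆ := by
  induction k with
  | zero => exact ⟨1, one_mem N, by simp⟩
  | succ k ih =>
      obtain ⟨y, hy, heq⟩ := ih
      set c := ⁅w⁻¹, y⁆ with hcdef
      have hcm : c ∈ N := comm_mem_right N _ _ hy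
      have hQ : u ^ k ∈ N := pow_mem hu k
      have hA : ⁅w⁻¹, u ^ k⁆ ∈ N := comm_mem_right N _ _ hQ
      have hB : ⁅w⁻¹, c⁆ ∈ N := comm_mem_right N _ _ hcm
      refine ⟨u ^ k * (c * y), mul_mem hQ (mul_mem hcm hy), ?_⟩
      have hmerge : ⁅w⁻¹, u ^ k * (c * y)⁆ = ⁅w⁻¹, u ^ k⁆ * (⁅w⁻¹, c⁆ * ⁅w⁻¹, y⁆) :=
        by rw [comm_merge N hc _ _ _ hQ (mul_mem hcm hy), comm_merge N hc _ _ _ hcm hy]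
      rw [hmerge, pow_succ (w * u), heq]
      -- goal : w^k * u^k * c * (w*u) = w^(k+1) * u^(k+1) * (A * (B * c))
      have key : w ^ k * u ^ k * c * (w * u)
          = w ^ (k + 1) * (⁅w⁻¹, u ^ k⁆ * u ^ k * ⁅w⁻¹, c⁆ * c * u) := by
        group
      rw [key]
      -- now rearrange the N-part
      letI : CommGroup ↥N :=
        { (inferInstance : Group ↥N) with
          mul_comm := fun a b => Subtype.ext ((hc a a.2 b b.2).eq) }
      have hsub : (⟨⁅w⁻¹, u ^ k⁆, hA⟩ * ⟨u ^ k, hQ⟩ * ⟨⁅w⁻¹, c⁆, hB⟩ * ⟨c, hcm⟩ * ⟨u, hu⟩ : ↥N)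
          = ⟨u ^ k, hQ⟩ * ⟨u, hu⟩ * (⟨⁅w⁻¹, u ^ k⁆, hA⟩ * (⟨⁅w⁻¹, c⁆, hB⟩ * ⟨c, hcm⟩)) :=
        ac5 _ _ _ _ _
      have hG := congrArg (Subtype.val : ↥N → G) hsub
      simp only [Subgroup.coe_mul] at hG
      calc w ^ (k + 1) * (⁅w⁻¹, u ^ k⁆ * u ^ k * ⁅w⁻¹, c⁆ * c * u)
          = w ^ (k + 1) * (u ^ k * u * (⁅w⁻¹, u ^ k⁆ * (⁅w⁻¹, c⁆ * c))) := by rw [hG]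
        _ = w ^ (k + 1) * u ^ (k + 1) * (⁅w⁻¹, u ^ k⁆ * (⁅w⁻¹, c⁆ * c)) := by
            rw [pow_succ u]; simp only [mul_assoc]


include hc in
lemma meta_single (a b : G) (h : ⁅a, b⁆ ∈ N) (k : ℕ) :
    ∃ y : G, ⁅a, b⁆ ^ k = ⁅a ^ k, b⁆ * ⁅y, a⁆ := by
  obtain ⟨y, hy, hk⟩ := core N hc a⁻¹ ⁅a, b⁆ h k
  refine ⟨y, ?_⟩
  have h1 : ⁅a, b⁆ ^ k = ((a⁻¹) ^ k)⁻¹ * (a⁻¹ * ⁅a, b⁆) ^ k * ⁅a⁻¹⁻¹, y⁆⁻¹ := by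
    rw [hk]; group
  have h2 : a⁻¹ * ⁅a, b⁆ = b * a⁻¹ * b⁻¹ := by group
  have h3 : (b * a⁻¹ * b⁻¹) ^ k = b * (a⁻¹) ^ k * b⁻¹ := by
    rw [conj_pow]
  rw [h1, h2, h3]
  group


include hc in
lemma pc_mem_of_comms (l : List (G × G)) (hl : ∀ p ∈ l, ⁅p.1, p.2⁆ ∈ N) : pc l ∈ N := by
  induction l with
  | nil => simpa using one_mem N
  | cons p l ih =>
      rw [pc_cons]
      exact mul_mem (hl p (by simp)) (ih fun q hq => hl q (by simp [hq]))

include hc in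
lemma meta_bound (l : List (G × G)) (hl : ∀ p ∈ l, ⁅p.1, p.2⁆ ∈ N) (k : ℕ) :
    ∃ l' : List (G × G), l'.length = 2 * l.length ∧ pc l' = (pc l) ^ k := by
  induction l with
  | nil => exact ⟨[], by simp, by simp⟩
  | cons p l ih =>
      obtain ⟨l'', hlen, hpc⟩ := ih (fun q hq => hl q (by simp [hq]))
      have hmem : ⁅p.1, p.2⁆ ∈ N := hl p (by simp)
      have hprod : pc l ∈ N := pc_mem_of_comms N hc l (fun q hq => hl q (by simp [hq]))
      have hcm : Commute ⁅p.1, p.2⁆ (pc l) := hc _ hmem _ hprod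
      obtain ⟨y, hy⟩ := meta_single N hc p.1 p.2 hmem k
      refine ⟨(p.1 ^ k, p.2) :: (y, p.1) :: l'', by simp [hlen]; ring, ?_⟩
      rw [pc_cons, pc_cons, hpc, ← mul_assoc, ← hy, pc_cons, hcm.mul_pow]

end Core

lemma pc_pow (l : List (G × G)) (k : ℕ) :
    ∃ l' : List (G × G), l'.length = k * l.length ∧ pc l' = (pc l) ^ k := by
  induction k with
  | zero => exact ⟨[], by simp, by simp⟩
  | succ k ih =>
      obtain ⟨l', hlen, hpc⟩ := ih
      exact ⟨l' ++ l, by simp [hlen]; ring, by rw [pc_append, hpc, pow_succ]⟩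

lemma lift_list (A : Subgroup G) [A.Normal] (lb : List ((G ⧸ A) × (G ⧸ A))) :
    ∃ l : List (G × G), l.map (fun p => (QuotientGroup.mk' A p.1, QuotientGroup.mk' A p.2)) = lb := by
  induction lb with
  | nil => exact ⟨[], rfl⟩
  | cons p lb ih =>
      obtain ⟨l, hl⟩ := ih
      obtain ⟨x, hx⟩ := QuotientGroup.mk'_surjective A p.1
      obtain ⟨y, hy⟩ := QuotientGroup.mk'_surjective A p.2
      refine ⟨(x, y) :: l, ?_⟩
      simp only [List.map_cons, hl]
      rw [show ((QuotientGroup.mk' A) x, (QuotientGroup.mk' A) y) = p from Prod.ext hx hy]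

lemma commute_of_commutator_bot {A : Subgroup G} (h : ⁅A, A⁆ = ⊥) {x y : G}
    (hx : x ∈ A) (hy : y ∈ A) : Commute x y := by
  have : ⁅x, y⁆ ∈ (⊥ : Subgroup G) := h ▸ Subgroup.commutator_mem_commutator hx hy
  exact commutatorElement_eq_one_iff_commute.mp (Subgroup.mem_bot.mp this)

universe u

lemma key (j : ℕ) : ∀ {G : Type u} [Group G], derivedSeries G (j + 2) = ⊥ →
    ∀ g ∈ commutator G, ∀ ε : ℝ, 0 < ε → ∀ M : ℕ,
    ∃ n : ℕ, M ≤ n ∧ 1 ≤ n ∧ (commLength (g ^ n) : ℝ) ≤ ε * n := by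
  induction j with
  | zero =>
      intro G _ hbot g hg ε hε M
      -- metabelian case
      have hcc : ∀ x ∈ commutator G, ∀ y ∈ commutator G, Commute x y := by
        intro x hx y hy
        refine commute_of_commutator_bot ?_ hx hy
        rw [← derivedSeries_one] at *
        exact hbot
      obtain ⟨l, hlmem, hpc⟩ := mem_commutator_exists_list (by rwa [← commutator_def] : g ∈ ⁅(⊤ : Subgroup G), ⊤⁆)
      set m := l.length with hm
      set n := max (max M 1) (Nat.ceil ((2 * m : ℝ) / ε)) with hn
      refine ⟨n, le_trans (le_max_left M 1) (le_max_left _ _), le_trans (le_max_right M 1) (le_max_left _ _), ?_⟩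
      obtain ⟨l', hlen, hpcl'⟩ := meta_bound (commutator G) hcc l
        (fun p _ => Subgroup.commutator_mem_commutator (Subgroup.mem_top _) (Subgroup.mem_top _)) n
      have hle : commLength (g ^ n) ≤ 2 * m := by
        rw [← hlen]
        exact commLength_le _ l' (by rw [hpcl', hpc])
      have h1 : ((2 * m : ℝ) / ε) ≤ (n : ℝ) := by
        calc ((2 * m : ℝ) / ε) ≤ (Nat.ceil ((2 * m : ℝ) / ε) : ℝ) := Nat.le_ceil _
          _ ≤ (n : ℝ) := Nat.cast_le.mpr (le_max_right _ _)
      have h2 : (2 * m : ℝ) ≤ ε * n := by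
        rw [div_le_iff₀ hε] at h1
        linarith [h1]
      calc (commLength (g ^ n) : ℝ) ≤ (2 * m : ℝ) := by exact_mod_cast hle
        _ ≤ ε * n := h2
  | succ j ih =>
      intro G _ hbot g hg ε hε M
      set A := derivedSeries G (j + 2) with hA
      haveI hAnorm : A.Normal := derivedSeries_normal G (j + 2)
      have hsurj : Function.Surjective (QuotientGroup.mk' A) := QuotientGroup.mk'_surjective A
      have hquot : derivedSeries (G ⧸ A) (j + 2) = ⊥ := by
        rw [← map_derivedSeries_eq hsurj, Subgroup.map_eq_bot_iff, QuotientGroup.ker_mk']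
      have hgbar : (QuotientGroup.mk' A) g ∈ commutator (G ⧸ A) := by
        rw [← derivedSeries_one, ← map_derivedSeries_eq hsurj 1]
        exact Subgroup.mem_map_of_mem _ (by rwa [derivedSeries_one])
      obtain ⟨n, hnM, hn1, hcl⟩ := ih hquot _ hgbar (ε / 2) (by linarith) (max M 1)
      have hgn : ((QuotientGroup.mk' A) g) ^ n ∈ commutator (G ⧸ A) := pow_mem hgbar n
      obtain ⟨lb, hlb_len, hlb_pc⟩ := exists_list_commLength hgn
      obtain ⟨l, hl⟩ := lift_list A lb
      set W := pc l with hWdef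
      have hmkW : (QuotientGroup.mk' A) W = ((QuotientGroup.mk' A) g) ^ n := by
        rw [hWdef, ← pc_map (QuotientGroup.mk' A) l, hl, hlb_pc]
      set u := W⁻¹ * g ^ n with hu
      have humem : u ∈ A := by
        have h1 : (QuotientGroup.mk' A) u = 1 := by
          rw [hu, map_mul, map_inv, map_pow, hmkW]
          group
        rwa [← QuotientGroup.ker_mk' A, MonoidHom.mem_ker]
      have hcA : ∀ x ∈ A, ∀ y ∈ A, Commute x y := by
        intro x hx y hy
        refine commute_of_commutator_bot ?_ hx hy
        rw [hA, ← derivedSeries_succ]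
        exact hbot
      have hAB : A = ⁅derivedSeries G (j + 1), derivedSeries G (j + 1)⁆ :=
        derivedSeries_succ G (j + 1)
      obtain ⟨q, hqmem, hqpc⟩ := mem_commutator_exists_list (hAB ▸ humem)
      set p := q.length with hp
      have hqcomms : ∀ r ∈ q, ⁅r.1, r.2⁆ ∈ A := fun r hr =>
        hAB ▸ Subgroup.commutator_mem_commutator (hqmem r hr).1 (hqmem r hr).2
      set k := max 1 (Nat.ceil ((2 * (2 * p + 1) : ℝ) / (ε * n))) with hk
      have hk1 : 1 ≤ k := le_max_left _ _
      refine ⟨n * k, ?_, ?_, ?_⟩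
      · calc M ≤ max M 1 := le_max_left _ _
          _ ≤ n := hnM
          _ ≤ n * k := Nat.le_mul_of_pos_right n (by omega)
      · have := Nat.mul_le_mul hn1 hk1
        omega
      · obtain ⟨l2, hl2len, hl2pc⟩ := pc_pow l k
        obtain ⟨l3, hl3len, hl3pc⟩ := meta_bound A hcA q hqcomms k
        obtain ⟨y, hyA, hcore⟩ := core A hcA W u humem k
        have hWu : W * u = g ^ n := by rw [hu]; group
        have hexpr : pc (l2 ++ l3 ++ [(W⁻¹, y)]) = g ^ (n * k) := by
          rw [pc_append, pc_append, hl2pc, hl3pc, hqpc,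
            show pc [(W⁻¹, y)] = ⁅W⁻¹, y⁆ by simp, ← hcore, hWu, ← pow_mul]
        have hclbound : commLength (g ^ (n * k)) ≤ k * l.length + 2 * p + 1 := by
          have := commLength_le _ _ hexpr
          simpa [hl2len, hl3len, hp, add_assoc] using this
        -- arithmetic
        have hlslb : l.length = lb.length := by rw [← hl, List.length_map]
        have hs : (l.length : ℝ) ≤ ε / 2 * n := by
          rw [hlslb, hlb_len]
          exact hcl
        have hnR : (1 : ℝ) ≤ (n : ℝ) := by exact_mod_cast hn1
        have hεn : (0 : ℝ) < ε * n := by nlinarith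
        have hkceil : ((2 * (2 * p + 1) : ℝ) / (ε * n)) ≤ (k : ℝ) :=
          le_trans (Nat.le_ceil _) (Nat.cast_le.mpr (le_max_right _ _))
        have h1 : (2 * (2 * (p : ℝ) + 1)) ≤ (k : ℝ) * (ε * n) := by
          rw [div_le_iff₀ hεn] at hkceil
          push_cast at hkceil ⊢
          linarith
        have h2 : (k : ℝ) * l.length ≤ (k : ℝ) * (ε / 2 * n) :=
          mul_le_mul_of_nonneg_left hs (Nat.cast_nonneg k)
        calc (commLength (g ^ (n * k)) : ℝ) ≤ ((k * l.length + 2 * p + 1 : ℕ) : ℝ) := by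
              exact_mod_cast hclbound
          _ ≤ ε * ((n * k : ℕ) : ℝ) := by push_cast; linarith


lemma key_of_solvable {G : Type u} [Group G] (hs : IsSolvable G) {g : G} (hg : g ∈ commutator G) {ε : ℝ}
    (hε : 0 < ε) (M : ℕ) : ∃ n, M ≤ n ∧ 1 ≤ n ∧ (commLength (g ^ n) : ℝ) ≤ ε * n := by
  obtain ⟨ℓ, hℓ⟩ := hs.solvable
  have h1 : derivedSeries G (ℓ + 1) = ⊥ := by
    rw [derivedSeries_succ, hℓ, Subgroup.commutator_bot_left]
  have h2 : derivedSeries G (ℓ + 2) = ⊥ := by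
    rw [derivedSeries_succ, h1, Subgroup.commutator_bot_left]
  exact key ℓ h2 g hg ε hε M

lemma eq_zero_of_forall_nat_mul_le {c K : ℝ} (h : ∀ n : ℕ, (n : ℝ) * |c| ≤ K) : c = 0 := by
  by_contra hc
  have hpos : 0 < |c| := abs_pos.mpr hc
  obtain ⟨n, hn⟩ := exists_nat_gt (K / |c|)
  have h2 := h n
  rw [div_lt_iff₀ hpos] at hn
  linarith

lemma scl_zero (hs : IsSolvable G) {g : G} (hg : g ∈ commutator G) : scl g = 0 := by
  rw [scl, Filter.liminf_eq]
  have hset : {a : ℝ | ∀ᶠ (n : ℕ) in atTop, a ≤ (commLength (g ^ n) : ℝ) / (n : ℝ)} = Set.Iic 0 := by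
    ext a
    simp only [Set.mem_setOf_eq, Set.mem_Iic]
    constructor
    · intro h
      by_contra hpos
      push_neg at hpos
      obtain ⟨N, hN⟩ := eventually_atTop.mp h
      obtain ⟨n, hnN, hn1, hb⟩ := key_of_solvable hs hg (show (0:ℝ) < a/2 by linarith) N
      have h3 := hN n hnN
      have hnpos : (0 : ℝ) < n := by exact_mod_cast hn1
      have h4 : (commLength (g ^ n) : ℝ) / n ≤ a / 2 := by
        rw [div_le_iff₀ hnpos]
        calc (commLength (g ^ n) : ℝ) ≤ a / 2 * n := hb
          _ = a / 2 * n := rfl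
      linarith
    · intro ha
      refine Filter.Eventually.of_forall (fun n => le_trans ha ?_)
      positivity
  rw [hset, csSup_Iic]

section QM
variable (f : G → ℝ) (hf : IsHomQM f)
include hf

lemma qm_defect_bound (a b : G) : |f a + f b - f (a * b)| ≤ defect f :=
  le_csSup hf.2 ⟨a, b, rfl⟩

lemma qm_one : f 1 = 0 := by
  have := hf.1 1 0
  simpa using this

lemma qm_defect_nonneg : 0 ≤ defect f :=
  le_trans (abs_nonneg _) (qm_defect_bound f hf 1 1)

lemma qm_inv (a : G) : f a⁻¹ = - f a := by
  have := hf.1 a (-1)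
  simpa using this

lemma qm_pow (a : G) (n : ℕ) : f (a ^ n) = n * f a := by
  have := hf.1 a n
  simpa using this

lemma qm_conj (x a : G) : f (x * a * x⁻¹) = f a := by
  have key : ∀ n : ℕ, (n : ℝ) * |f (x * a * x⁻¹) - f a| ≤ 2 * defect f := by
    intro n
    have e1 : (x * a * x⁻¹) ^ n = x * (a ^ n * x⁻¹) := by rw [conj_pow, mul_assoc]
    have hA : (n : ℝ) * f (x * a * x⁻¹) = f (x * (a ^ n * x⁻¹)) := by
      rw [← e1, qm_pow f hf]
    have h1 := qm_defect_bound f hf x (a ^ n * x⁻¹)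
    have h2 := qm_defect_bound f hf (a ^ n) x⁻¹
    have h3 : (n : ℝ) * f a = f (a ^ n) := (qm_pow f hf a n).symm
    have h4 : f x⁻¹ = - f x := qm_inv f hf x
    rw [abs_le] at h1 h2
    have habs : |(n : ℝ) * (f (x * a * x⁻¹) - f a)| ≤ 2 * defect f := by
      rw [abs_le]
      constructor <;> nlinarith [h1.1, h1.2, h2.1, h2.2]
    rwa [abs_mul, abs_of_nonneg (by positivity : (0:ℝ) ≤ (n:ℝ))] at habs
  have h0 : f (x * a * x⁻¹) - f a = 0 := eq_zero_of_forall_nat_mul_le key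
  linarith

lemma qm_comm_eq (a b : G) : f (a * b) = f (b * a) := by
  have h := qm_conj f hf b (a * b)
  have e : b * (a * b) * b⁻¹ = b * a := by group
  rw [e] at h
  exact h.symm

lemma qm_commutator_bound (a b : G) : |f ⁅a, b⁆| ≤ defect f := by
  have h := qm_defect_bound f hf (a * b) ((b * a)⁻¹)
  have e : (a * b) * (b * a)⁻¹ = ⁅a, b⁆ := by group
  rw [e, qm_inv f hf] at h
  have hcomm := qm_comm_eq f hf a b
  rw [abs_le] at h ⊢
  constructor <;> linarith [h.1, h.2]

lemma qm_pc_bound (l : List (G × G)) : |f (pc l)| ≤ 2 * l.length * defect f := by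
  induction l with
  | nil => simp [qm_one f hf]
  | cons p l ih =>
      rw [pc_cons]
      have h1 := qm_defect_bound f hf ⁅p.1, p.2⁆ (pc l)
      have h2 := qm_commutator_bound f hf p.1 p.2
      rw [abs_le] at h1 h2 ih ⊢
      simp only [List.length_cons]
      have hD := qm_defect_nonneg f hf
      push_cast
      constructor <;> linarith [ih.1, ih.2, h1.1, h1.2, h2.1, h2.2]

lemma qm_vanish (hs : IsSolvable G) {g : G} (hg : g ∈ commutator G) : f g = 0 := by
  have hD := qm_defect_nonneg f hf
  have hle : ∀ ε' : ℝ, 0 < ε' → |f g| ≤ ε' := by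
    intro ε' hε'
    have h2D : (0 : ℝ) < 2 * defect f + 1 := by linarith
    obtain ⟨n, -, hn1, hcl⟩ := key_of_solvable hs hg
      (show (0:ℝ) < ε' / (2 * defect f + 1) by positivity) 1
    have hgn : g ^ n ∈ commutator G := pow_mem hg n
    obtain ⟨l, hlen, hpc⟩ := exists_list_commLength hgn
    have hb := qm_pc_bound f hf l
    rw [hpc, hlen, qm_pow f hf] at hb
    have hnpos : (0 : ℝ) < n := by exact_mod_cast hn1
    have habs : (n : ℝ) * |f g| ≤ 2 * (commLength (g ^ n) : ℝ) * defect f := by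
      rwa [abs_mul, Nat.abs_cast] at hb
    have hstep : (n : ℝ) * |f g| ≤ 2 * (ε' / (2 * defect f + 1) * n) * defect f := by
      calc (n : ℝ) * |f g| ≤ 2 * (commLength (g ^ n) : ℝ) * defect f := habs
        _ ≤ 2 * (ε' / (2 * defect f + 1) * n) * defect f := by nlinarith [hcl]
    have hfinal : |f g| ≤ 2 * (ε' / (2 * defect f + 1)) * defect f := by nlinarith [hstep]
    calc |f g| ≤ 2 * (ε' / (2 * defect f + 1)) * defect f := hfinal
      _ = (2 * ε' * defect f) / (2 * defect f + 1) := by ring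
      _ ≤ ε' := by rw [div_le_iff₀ h2D]; nlinarith
  have : |f g| ≤ 0 := by
    by_contra hpos
    push_neg at hpos
    have := hle (|f g| / 2) (by linarith)
    linarith
  have := abs_nonneg (f g)
  have : |f g| = 0 := le_antisymm ‹|f g| ≤ 0› (abs_nonneg _)
  exact abs_eq_zero.mp this

lemma qm_hom (hs : IsSolvable G) (a b : G) : f (a * b) = f a + f b := by
  have key : ∀ n : ℕ, (n : ℝ) * |f (a * b) - f a - f b| ≤ 2 * defect f := by
    intro n
    set z := (a * b) ^ n * b⁻¹ ^ n * a⁻¹ ^ n with hz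
    have hzmem : z ∈ commutator G := by
      have h1 : (Abelianization.of z : Abelianization G) = 1 := by
        rw [hz]
        rw [map_mul, map_mul, map_pow, map_pow, map_pow, map_mul, map_inv, map_inv, mul_pow]
        group
      exact (QuotientGroup.eq_one_iff z).mp h1
    have hfz : f z = 0 := qm_vanish f hf hs hzmem
    have he : z * (a ^ n * b ^ n) = (a * b) ^ n := by rw [hz]; group
    have h1 := qm_defect_bound f hf z (a ^ n * b ^ n)
    rw [he, hfz] at h1
    have h2 := qm_defect_bound f hf (a ^ n) (b ^ n)
    rw [qm_pow f hf] at h1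
    rw [qm_pow f hf, qm_pow f hf] at h2
    rw [abs_le] at h1 h2
    have habs : |(n : ℝ) * (f (a * b) - f a - f b)| ≤ 2 * defect f := by
      rw [abs_le]
      constructor <;> nlinarith [h1.1, h1.2, h2.1, h2.2]
    rwa [abs_mul, abs_of_nonneg (by positivity : (0:ℝ) ≤ (n:ℝ))] at habs
  have := eq_zero_of_forall_nat_mul_le key
  linarith

end QM

end SclAux

/-- In a solvable group, scl vanishes on the commutator subgroup and every homogeneous
quasimorphism is a homomorphism. -/
theorem scl_eq_zero_of_solvable (G : Type*) [Group G] (hsolv : IsSolvable G) :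
    (∀ g ∈ commutator G, scl g = 0) ∧
      (∀ f : G → ℝ, IsHomQM f → ∀ a b : G, f (a * b) = f a + f b) := by
  constructor
  · intro g hg
    exact SclAux.scl_zero hsolv hg
  · intro f hf a b
    exact SclAux.qm_hom f hf hsolv a b
end

section
/- Let α be a set and G a subgroup of the group of bijections of α. Suppose g, a₁, b₁, …, a_m, b_m ∈ G satisfy g = ⁅a₁,b₁⁆⁅a₂,b₂⁆⋯⁅a_m,b_m⁆, the supports of g and of each aᵢ and bᵢ are all contained in a subset S ⊆ α, and there exists j ∈ G with jⁿ(S) ∩ S = ∅ for every integer n ≠ 0. Then for every integer N ≥ 1, the element g^N is a product of at most m+1 commutators of elements of G. -/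
open Filter
open scoped commutatorElement

namespace DiagTrickAux

open Finset

variable {α : Type*}

def Spt (S : Set α) (j : Equiv.Perm α) (k : ℕ) (p : Equiv.Perm α) : Prop :=
  ∀ x : α, p ((j ^ k) x) ≠ (j ^ k) x → x ∈ S

variable {S : Set α} {j : Equiv.Perm α}

theorem spt_commute (hjS : ∀ n : ℤ, n ≠ 0 → ∀ x ∈ S, (j ^ n) x ∉ S)
    {k l : ℕ} (hkl : k ≠ l) {p q : Equiv.Perm α}
    (hp : Spt S j k p) (hq : Spt S j l q) : Commute p q := by
  apply Equiv.Perm.Disjoint.commute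
  intro x
  by_contra hx
  push_neg at hx
  have hy : ((j ^ k)⁻¹ : Equiv.Perm α) x ∈ S := hp _ (by simpa using hx.1)
  have hz : ((j ^ l)⁻¹ : Equiv.Perm α) x ∈ S := hq _ (by simpa using hx.2)
  have key : ((j : Equiv.Perm α) ^ ((k : ℤ) - l)) (((j ^ k)⁻¹ : Equiv.Perm α) x)
      = ((j ^ l)⁻¹ : Equiv.Perm α) x := by
    have h1 : (j : Equiv.Perm α) ^ ((k : ℤ) - l) * (j ^ k)⁻¹ = (j ^ l)⁻¹ := by
      rw [← zpow_natCast j k, ← zpow_natCast j l, ← zpow_neg, ← zpow_neg, ← zpow_add]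
      congr 1
      ring
    rw [← h1]
    rfl
  exact hjS _ (sub_ne_zero.2 (by exact_mod_cast hkl)) _ hy (key ▸ hz)

theorem spt_mul {k : ℕ} {p q : Equiv.Perm α} (hp : Spt S j k p) (hq : Spt S j k q) :
    Spt S j k (p * q) := by
  intro x hx
  by_cases h : q ((j ^ k) x) = (j ^ k) x
  · exact hp x (by rwa [Equiv.Perm.mul_apply, h] at hx)
  · exact hq x h

theorem spt_inv {k : ℕ} {p : Equiv.Perm α} (hp : Spt S j k p) : Spt S j k p⁻¹ := by
  intro x hx
  apply hp x
  intro h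
  apply hx
  conv_lhs => rw [← h]
  exact p.symm_apply_apply _

theorem spt_conj {k : ℕ} {p : Equiv.Perm α} (hp : ∀ x, p x ≠ x → x ∈ S) :
    Spt S j k (j ^ k * p * (j ^ k)⁻¹) := by
  intro x hx
  apply hp x
  intro h
  apply hx
  simp [Equiv.Perm.mul_apply, h]

theorem spt_pairwise (hjS : ∀ n : ℤ, n ≠ 0 → ∀ x ∈ S, (j ^ n) x ∉ S)
    {f : ℕ → Equiv.Perm α} (hf : ∀ k, Spt S j k (f k)) (s : Finset ℕ) :
    (↑s : Set ℕ).Pairwise (Function.onFun Commute f) :=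
  fun x _ y _ hxy => spt_commute hjS hxy (hf x) (hf y)

theorem nCP_mul (hjS : ∀ n : ℤ, n ≠ 0 → ∀ x ∈ S, (j ^ n) x ∉ S)
    {f g : ℕ → Equiv.Perm α} (hf : ∀ k, Spt S j k (f k)) (hg : ∀ k, Spt S j k (g k))
    (s : Finset ℕ) :
    s.noncommProd (fun k => f k * g k)
        (spt_pairwise hjS (fun k => spt_mul (hf k) (hg k)) s) =
      s.noncommProd f (spt_pairwise hjS hf s) * s.noncommProd g (spt_pairwise hjS hg s) :=
  Finset.noncommProd_mul_distrib f g _ _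
    (fun x _ y _ hxy => spt_commute hjS hxy (hg x) (hf y))

theorem nCP_one (s : Finset ℕ) {f : ℕ → Equiv.Perm α} (hf : ∀ k ∈ s, f k = 1) (comm) :
    s.noncommProd f comm = 1 := by
  rw [Finset.noncommProd_eq_pow_card s f comm 1 hf]
  exact one_pow _

theorem nCP_inv (hjS : ∀ n : ℤ, n ≠ 0 → ∀ x ∈ S, (j ^ n) x ∉ S)
    {f : ℕ → Equiv.Perm α} (hf : ∀ k, Spt S j k (f k)) (s : Finset ℕ) :
    (s.noncommProd f (spt_pairwise hjS hf s))⁻¹ =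
      s.noncommProd (fun k => (f k)⁻¹)
        (spt_pairwise hjS (fun k => spt_inv (hf k)) s) := by
  apply inv_eq_of_mul_eq_one_right
  calc s.noncommProd f (spt_pairwise hjS hf s) *
        s.noncommProd (fun k => (f k)⁻¹) (spt_pairwise hjS (fun k => spt_inv (hf k)) s)
      = s.noncommProd (fun k => f k * (f k)⁻¹)
          (spt_pairwise hjS (fun k => spt_mul (hf k) (spt_inv (hf k))) s) :=
        (nCP_mul hjS hf (fun k => spt_inv (hf k)) s).symm
    _ = 1 := nCP_one s (fun k _ => mul_inv_cancel (f k)) _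

theorem nCP_range_shift {M : Type*} [Monoid M] (f : ℕ → M)
    (hf : ∀ k l, Commute (f k) (f l)) (n : ℕ) :
    (Finset.range (n + 1)).noncommProd f (fun x _ y _ _ => hf x y) =
      f 0 * (Finset.range n).noncommProd (fun k => f (k + 1))
        (fun x _ y _ _ => hf _ _) := by
  induction n with
  | zero =>
      simp [Finset.noncommProd_singleton]
  | succ n ih =>
      erw [Finset.noncommProd_congr Finset.range_add_one (fun _ _ => rfl), Finset.noncommProd_insert_of_notMem' _ _ _ _ (by simp), ih,
        mul_assoc, Finset.noncommProd_congr Finset.range_add_one (fun _ _ => rfl),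
        Finset.noncommProd_insert_of_notMem' _ _ _ _ (by simp)]

theorem supp_mul {p q : Equiv.Perm α} (hp : ∀ x, p x ≠ x → x ∈ S)
    (hq : ∀ x, q x ≠ x → x ∈ S) : ∀ x, (p * q) x ≠ x → x ∈ S := by
  intro x hx
  by_cases h : q x = x
  · exact hp x (by rwa [Equiv.Perm.mul_apply, h] at hx)
  · exact hq x h

theorem supp_inv {p : Equiv.Perm α} (hp : ∀ x, p x ≠ x → x ∈ S) :
    ∀ x, p⁻¹ x ≠ x → x ∈ S := by
  intro x hx
  apply hp x
  intro h
  apply hx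
  conv_lhs => rw [← h]
  exact p.symm_apply_apply _

theorem supp_pow {p : Equiv.Perm α} (hp : ∀ x, p x ≠ x → x ∈ S) (e : ℕ) :
    ∀ x, (p ^ e) x ≠ x → x ∈ S := by
  induction e with
  | zero => intro x hx; simp at hx
  | succ e ih =>
      intro x hx
      rw [pow_succ] at hx
      exact supp_mul ih hp x hx

theorem supp_comm {p q : Equiv.Perm α} (hp : ∀ x, p x ≠ x → x ∈ S)
    (hq : ∀ x, q x ≠ x → x ∈ S) : ∀ x, ⁅p, q⁆ x ≠ x → x ∈ S := by
  intro x hx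
  rw [commutatorElement_def] at hx
  exact supp_mul (supp_mul (supp_mul hp hq) (supp_inv hp)) (supp_inv hq) x hx

theorem list_supp {l : List (Equiv.Perm α)} (h : ∀ p ∈ l, ∀ x, p x ≠ x → x ∈ S) :
    ∀ x, l.prod x ≠ x → x ∈ S := by
  induction l with
  | nil => intro x hx; simp at hx
  | cons r t ih =>
      rw [List.prod_cons]
      exact supp_mul (h r (by simp)) (ih fun p hp => h p (by simp [hp]))

/-- The core diagonal-trick identity. -/
theorem core (hjS : ∀ n : ℤ, n ≠ 0 → ∀ x ∈ S, (j ^ n) x ∉ S)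
    {g : Equiv.Perm α} (hgS : ∀ x, g x ≠ x → x ∈ S) (n : ℕ) :
    g ^ (n + 1) =
      ⁅(Finset.range (n + 1)).noncommProd (fun k => j ^ k * g ^ (n - k) * (j ^ k)⁻¹)
          (spt_pairwise hjS (fun k => spt_conj (supp_pow hgS (n - k))) (Finset.range (n + 1))),
        j⁆ *
      (Finset.range (n + 1)).noncommProd (fun k => j ^ k * g * (j ^ k)⁻¹)
          (spt_pairwise hjS (fun k => spt_conj hgS) (Finset.range (n + 1))) := by
  have hfU : ∀ k, Spt S j k (j ^ k * g ^ (n - k) * (j ^ k)⁻¹) :=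
    fun k => spt_conj (supp_pow hgS (n - k))
  have hfZ : ∀ k, Spt S j k (j ^ k * g * (j ^ k)⁻¹) := fun k => spt_conj hgS
  have hw : ∀ s e t f : ℕ,
      Commute (j ^ s * g ^ e * (j ^ s)⁻¹) (j ^ t * g ^ f * (j ^ t)⁻¹) := by
    intro s e t f
    rcases eq_or_ne s t with rfl | hst
    · have h1 : ∀ e : ℕ, j ^ s * g ^ e * (j ^ s)⁻¹ = (j ^ s * g * (j ^ s)⁻¹) ^ e := by
        intro e
        induction e with
        | zero => simp
        | succ e ih => rw [pow_succ, pow_succ, ← ih]; group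
      rw [h1 e, h1 f]
      exact (Commute.refl _).pow_pow e f
    · exact spt_commute hjS hst (spt_conj (supp_pow hgS e)) (spt_conj (supp_pow hgS f))
  have hw1 : ∀ s t f : ℕ, Commute (j ^ s * g * (j ^ s)⁻¹) (j ^ t * g ^ f * (j ^ t)⁻¹) := by
    intro s t f
    have := hw s 1 t f
    rwa [pow_one] at this
  -- abbreviations (as equations)
  -- e1 : U * Z = nCP (fun k => j^k * g^(n+1-k) * (j^k)⁻¹)
  have e1 : (Finset.range (n + 1)).noncommProd (fun k => j ^ k * g ^ (n - k) * (j ^ k)⁻¹)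
        (spt_pairwise hjS hfU (Finset.range (n + 1))) *
      (Finset.range (n + 1)).noncommProd (fun k => j ^ k * g * (j ^ k)⁻¹)
        (spt_pairwise hjS hfZ (Finset.range (n + 1))) =
      (Finset.range (n + 1)).noncommProd (fun k => j ^ k * g ^ (n + 1 - k) * (j ^ k)⁻¹)
        (spt_pairwise hjS (fun k => spt_conj (supp_pow hgS (n + 1 - k)))
          (Finset.range (n + 1))) := by
    refine Eq.trans (nCP_mul hjS hfU hfZ _).symm ?_
    refine Finset.noncommProd_congr rfl (fun k hk => ?_) _
    have hk' : k ≤ n := by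
      have := Finset.mem_range.mp hk
      omega
    have h2 : n + 1 - k = (n - k) + 1 := by omega
    rw [h2, pow_succ]
    group
  have e2 : (Finset.range (n + 1)).noncommProd (fun k => j ^ k * g ^ (n + 1 - k) * (j ^ k)⁻¹)
        (spt_pairwise hjS (fun k => spt_conj (supp_pow hgS (n + 1 - k)))
          (Finset.range (n + 1))) =
      g ^ (n + 1) *
        (Finset.range n).noncommProd (fun k => j ^ (k + 1) * g ^ (n - k) * (j ^ (k + 1))⁻¹)
          (fun x _ y _ _ => hw _ _ _ _) := by
    refine Eq.trans (nCP_range_shift (fun k => j ^ k * g ^ (n + 1 - k) * (j ^ k)⁻¹)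
      (fun k l => hw _ _ _ _) n) ?_
    congr 1
    simp
  have e3 : (Finset.range (n + 1)).noncommProd
        (fun k => j ^ (k + 1) * g ^ (n - k) * (j ^ (k + 1))⁻¹)
        (fun x _ y _ _ => hw _ _ _ _) =
      (Finset.range n).noncommProd (fun k => j ^ (k + 1) * g ^ (n - k) * (j ^ (k + 1))⁻¹)
        (fun x _ y _ _ => hw _ _ _ _) := by
    erw [Finset.noncommProd_congr Finset.range_add_one (fun _ _ => rfl), Finset.noncommProd_insert_of_notMem' _ _ _ _ (by simp)]
    have h0 : j ^ (n + 1) * g ^ (n - n) * (j ^ (n + 1))⁻¹ = 1 := by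
      simp [Nat.sub_self]
    rw [h0, mul_one]
  have e4 : j * (Finset.range (n + 1)).noncommProd
        (fun k => j ^ k * g ^ (n - k) * (j ^ k)⁻¹)
        (spt_pairwise hjS hfU (Finset.range (n + 1))) * j⁻¹ =
      (Finset.range (n + 1)).noncommProd
        (fun k => j ^ (k + 1) * g ^ (n - k) * (j ^ (k + 1))⁻¹)
        (fun x _ y _ _ => hw _ _ _ _) := by
    have h := Finset.map_noncommProd (Finset.range (n + 1))
      (fun k => j ^ k * g ^ (n - k) * (j ^ k)⁻¹)
      (spt_pairwise hjS hfU (Finset.range (n + 1))) (MulAut.conj j)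
    calc j * (Finset.range (n + 1)).noncommProd
          (fun k => j ^ k * g ^ (n - k) * (j ^ k)⁻¹)
          (spt_pairwise hjS hfU (Finset.range (n + 1))) * j⁻¹
        = (MulAut.conj j) ((Finset.range (n + 1)).noncommProd
          (fun k => j ^ k * g ^ (n - k) * (j ^ k)⁻¹)
          (spt_pairwise hjS hfU (Finset.range (n + 1)))) := by rw [MulAut.conj_apply]
      _ = (Finset.range (n + 1)).noncommProd
          (fun k => (MulAut.conj j) (j ^ k * g ^ (n - k) * (j ^ k)⁻¹)) _ := h
      _ = (Finset.range (n + 1)).noncommProd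
          (fun k => j ^ (k + 1) * g ^ (n - k) * (j ^ (k + 1))⁻¹)
          (fun x _ y _ _ => hw _ _ _ _) := by
            refine Finset.noncommProd_congr rfl (fun k _ => ?_) _
            rw [MulAut.conj_apply, pow_succ']
            simp [mul_assoc]
  have hU'Z : Commute ((Finset.range (n + 1)).noncommProd
        (fun k => j ^ (k + 1) * g ^ (n - k) * (j ^ (k + 1))⁻¹)
        (fun x _ y _ _ => hw _ _ _ _))
      ((Finset.range (n + 1)).noncommProd (fun k => j ^ k * g * (j ^ k)⁻¹)
        (spt_pairwise hjS hfZ (Finset.range (n + 1)))) := by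
    apply Finset.noncommProd_commute
    intro k _
    exact (Finset.noncommProd_commute _ _ _ _ (fun l _ => hw1 k (l + 1) (n - l))).symm
  have main : (Finset.range (n + 1)).noncommProd (fun k => j ^ k * g ^ (n - k) * (j ^ k)⁻¹)
        (spt_pairwise hjS hfU (Finset.range (n + 1))) *
      (Finset.range (n + 1)).noncommProd (fun k => j ^ k * g * (j ^ k)⁻¹)
        (spt_pairwise hjS hfZ (Finset.range (n + 1))) =
      g ^ (n + 1) * (Finset.range (n + 1)).noncommProd
        (fun k => j ^ (k + 1) * g ^ (n - k) * (j ^ (k + 1))⁻¹)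
        (fun x _ y _ _ => hw _ _ _ _) := by
    rw [e1, e2, e3]
  -- final algebra
  set U := (Finset.range (n + 1)).noncommProd (fun k => j ^ k * g ^ (n - k) * (j ^ k)⁻¹)
    (spt_pairwise hjS hfU (Finset.range (n + 1))) with hU
  set Z := (Finset.range (n + 1)).noncommProd (fun k => j ^ k * g * (j ^ k)⁻¹)
    (spt_pairwise hjS hfZ (Finset.range (n + 1))) with hZ
  set U' := (Finset.range (n + 1)).noncommProd
    (fun k => j ^ (k + 1) * g ^ (n - k) * (j ^ (k + 1))⁻¹)
    (fun x _ y _ _ => hw _ _ _ _) with hU'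
  symm
  calc ⁅U, j⁆ * Z = U * j * U⁻¹ * j⁻¹ * Z := by rw [commutatorElement_def]
    _ = U * (j * U * j⁻¹)⁻¹ * Z := by group
    _ = U * U'⁻¹ * Z := by rw [e4]
    _ = U * (Z * U'⁻¹) := by rw [mul_assoc]; exact congrArg (U * ·) hU'Z.inv_left.eq
    _ = U * Z * U'⁻¹ := by rw [mul_assoc]
    _ = g ^ (n + 1) * U' * U'⁻¹ := by rw [main]
    _ = g ^ (n + 1) := by group

theorem z_decomp (hjS : ∀ n : ℤ, n ≠ 0 → ∀ x ∈ S, (j ^ n) x ∉ S) (n : ℕ)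
    (G : Subgroup (Equiv.Perm α)) (hjG : j ∈ G) :
    ∀ (m : ℕ) (a b : Fin m → Equiv.Perm α), (∀ i, a i ∈ G) → (∀ i, b i ∈ G) →
      (∀ i x, a i x ≠ x → x ∈ S) → (∀ i x, b i x ≠ x → x ∈ S) →
      ∀ (p : Equiv.Perm α) (hpS : ∀ x, p x ≠ x → x ∈ S),
        p = (List.ofFn fun i => ⁅a i, b i⁆).prod →
        ∃ A B : Fin m → Equiv.Perm α, (∀ i, A i ∈ G) ∧ (∀ i, B i ∈ G) ∧
          (List.ofFn fun i => ⁅A i, B i⁆).prod =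
            (Finset.range (n + 1)).noncommProd (fun k => j ^ k * p * (j ^ k)⁻¹)
              (spt_pairwise hjS (fun k => spt_conj hpS) (Finset.range (n + 1))) := by
  intro m
  induction m with
  | zero =>
      intro a b _ _ _ _ p hpS hp
      refine ⟨Fin.elim0, Fin.elim0, fun i => i.elim0, fun i => i.elim0, ?_⟩
      have hp1 : p = 1 := by simpa using hp
      simp only [List.ofFn_zero, List.prod_nil]
      exact (nCP_one _ (fun k _ => by rw [hp1]; group) _).symm
  | succ m ih =>
      intro a b haG hbG haS hbS p hpS hp
      have hqS : ∀ x, (List.ofFn fun i : Fin m => ⁅a i.succ, b i.succ⁆).prod x ≠ x → x ∈ S := by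
        apply list_supp
        intro r hr
        rw [List.mem_ofFn] at hr
        obtain ⟨i, rfl⟩ := hr
        exact supp_comm (haS i.succ) (hbS i.succ)
      have hpq : p = ⁅a 0, b 0⁆ * (List.ofFn fun i : Fin m => ⁅a i.succ, b i.succ⁆).prod := by
        rw [hp, List.ofFn_succ, List.prod_cons]
      obtain ⟨A', B', hA'G, hB'G, htail⟩ := ih (fun i => a i.succ) (fun i => b i.succ)
        (fun i => haG _) (fun i => hbG _) (fun i => haS _) (fun i => hbS _)
        ((List.ofFn fun i : Fin m => ⁅a i.succ, b i.succ⁆).prod) hqS rfl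
      have sa : ∀ k, Spt S j k (j ^ k * a 0 * (j ^ k)⁻¹) := fun k => spt_conj (haS 0)
      have sb : ∀ k, Spt S j k (j ^ k * b 0 * (j ^ k)⁻¹) := fun k => spt_conj (hbS 0)
      have hcS : ∀ x, ⁅a 0, b 0⁆ x ≠ x → x ∈ S := supp_comm (haS 0) (hbS 0)
      have hmemA0 : (Finset.range (n + 1)).noncommProd (fun k => j ^ k * a 0 * (j ^ k)⁻¹)
          (spt_pairwise hjS sa (Finset.range (n + 1))) ∈ G :=
        Subgroup.noncommProd_mem G _
          (fun k _ => mul_mem (mul_mem (pow_mem hjG k) (haG 0)) (inv_mem (pow_mem hjG k)))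
      have hmemB0 : (Finset.range (n + 1)).noncommProd (fun k => j ^ k * b 0 * (j ^ k)⁻¹)
          (spt_pairwise hjS sb (Finset.range (n + 1))) ∈ G :=
        Subgroup.noncommProd_mem G _
          (fun k _ => mul_mem (mul_mem (pow_mem hjG k) (hbG 0)) (inv_mem (pow_mem hjG k)))
      have hAi : ((Finset.range (n + 1)).noncommProd (fun k => j ^ k * a 0 * (j ^ k)⁻¹)
            (spt_pairwise hjS sa (Finset.range (n + 1))))⁻¹ =
          (Finset.range (n + 1)).noncommProd (fun k => (j ^ k * a 0 * (j ^ k)⁻¹)⁻¹)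
            (spt_pairwise hjS (fun k => spt_inv (sa k)) (Finset.range (n + 1))) :=
        nCP_inv hjS sa _
      have hBi : ((Finset.range (n + 1)).noncommProd (fun k => j ^ k * b 0 * (j ^ k)⁻¹)
            (spt_pairwise hjS sb (Finset.range (n + 1))))⁻¹ =
          (Finset.range (n + 1)).noncommProd (fun k => (j ^ k * b 0 * (j ^ k)⁻¹)⁻¹)
            (spt_pairwise hjS (fun k => spt_inv (sb k)) (Finset.range (n + 1))) :=
        nCP_inv hjS sb _
      have hhead : ⁅(Finset.range (n + 1)).noncommProd (fun k => j ^ k * a 0 * (j ^ k)⁻¹)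
            (spt_pairwise hjS sa (Finset.range (n + 1))),
          (Finset.range (n + 1)).noncommProd (fun k => j ^ k * b 0 * (j ^ k)⁻¹)
            (spt_pairwise hjS sb (Finset.range (n + 1)))⁆ =
          (Finset.range (n + 1)).noncommProd (fun k => j ^ k * ⁅a 0, b 0⁆ * (j ^ k)⁻¹)
            (spt_pairwise hjS (fun k => spt_conj hcS) (Finset.range (n + 1))) := by
        rw [commutatorElement_def, hAi, hBi]
        rw [← nCP_mul hjS sa sb]
        rw [← nCP_mul hjS (fun k => spt_mul (sa k) (sb k)) (fun k => spt_inv (sa k))]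
        rw [← nCP_mul hjS (fun k => spt_mul (spt_mul (sa k) (sb k)) (spt_inv (sa k)))
          (fun k => spt_inv (sb k))]
        refine Finset.noncommProd_congr rfl (fun k _ => ?_) _
        rw [commutatorElement_def]
        group
      refine ⟨Fin.cons ((Finset.range (n + 1)).noncommProd (fun k => j ^ k * a 0 * (j ^ k)⁻¹)
            (spt_pairwise hjS sa (Finset.range (n + 1)))) A',
          Fin.cons ((Finset.range (n + 1)).noncommProd (fun k => j ^ k * b 0 * (j ^ k)⁻¹)
            (spt_pairwise hjS sb (Finset.range (n + 1)))) B',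
          fun i => Fin.cases hmemA0 hA'G i, fun i => Fin.cases hmemB0 hB'G i, ?_⟩
      rw [List.ofFn_succ, List.prod_cons]
      simp only [Fin.cons_zero, Fin.cons_succ]
      rw [htail, hhead]
      refine Eq.trans (nCP_mul hjS (fun k => spt_conj hcS) (fun k => spt_conj hqS) _).symm ?_
      refine Finset.noncommProd_congr rfl (fun k _ => ?_) _
      rw [hpq]
      group

end DiagTrickAux

/-- The diagonal trick: if $g$ is a product of $m$ commutators of elements of $G$
all supported in a set $S$ that can be displaced off itself by all nonzero powers of some
$j \in G$, then every positive power $g^N$ is a product of at most $m+1$ commutators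
of elements of $G$. -/
theorem power_is_product_of_few_commutators {α : Type*}
    (G : Subgroup (Equiv.Perm α)) (S : Set α)
    (g : Equiv.Perm α) (hgG : g ∈ G)
    (m : ℕ) (a b : Fin m → Equiv.Perm α)
    (haG : ∀ i, a i ∈ G) (hbG : ∀ i, b i ∈ G)
    (hprod : g = (List.ofFn fun i => ⁅a i, b i⁆).prod)
    (hgS : ∀ x, g x ≠ x → x ∈ S)
    (haS : ∀ i, ∀ x, a i x ≠ x → x ∈ S)
    (hbS : ∀ i, ∀ x, b i x ≠ x → x ∈ S)
    (j : Equiv.Perm α) (hjG : j ∈ G)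
    (hjS : ∀ n : ℤ, n ≠ 0 → ∀ x ∈ S, (j ^ n) x ∉ S) :
    ∀ N : ℕ, 1 ≤ N →
      ∃ m' ≤ m + 1, ∃ a' b' : Fin m' → Equiv.Perm α,
        (∀ i, a' i ∈ G) ∧ (∀ i, b' i ∈ G) ∧
        g ^ N = (List.ofFn fun i => ⁅a' i, b' i⁆).prod := by
  intro N hN
  obtain ⟨n, rfl⟩ : ∃ n, N = n + 1 := ⟨N - 1, by omega⟩
  obtain ⟨A, B, hAG, hBG, hzdec⟩ :=
    DiagTrickAux.z_decomp hjS n G hjG m a b haG hbG haS hbS g hgS hprod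
  have hmemU : (Finset.range (n + 1)).noncommProd
      (fun k => j ^ k * g ^ (n - k) * (j ^ k)⁻¹)
      (DiagTrickAux.spt_pairwise hjS
        (fun k => DiagTrickAux.spt_conj (DiagTrickAux.supp_pow hgS (n - k)))
        (Finset.range (n + 1))) ∈ G :=
    Subgroup.noncommProd_mem G _
      (fun k _ => mul_mem (mul_mem (pow_mem hjG k) (pow_mem hgG (n - k)))
        (inv_mem (pow_mem hjG k)))
  refine ⟨m + 1, le_refl _,
    Fin.cons ((Finset.range (n + 1)).noncommProd
      (fun k => j ^ k * g ^ (n - k) * (j ^ k)⁻¹)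
      (DiagTrickAux.spt_pairwise hjS
        (fun k => DiagTrickAux.spt_conj (DiagTrickAux.supp_pow hgS (n - k)))
        (Finset.range (n + 1)))) A,
    Fin.cons j B, fun i => Fin.cases hmemU hAG i, fun i => Fin.cases hjG hBG i, ?_⟩
  rw [List.ofFn_succ, List.prod_cons]
  simp only [Fin.cons_zero, Fin.cons_succ]
  rw [hzdec]
  exact DiagTrickAux.core hjS hgS n
end

section
/- Let α be a set and G a subgroup of the group of bijections of α. Suppose g ∈ [G,G] is a product of commutators of elements of G whose supports, together with the support of g, are all contained in a subset S ⊆ α, and there exists j ∈ G with jⁿ(S) ∩ S = ∅ for every integer n ≠ 0. Then scl(g) = 0. -/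
open Filter
open scoped commutatorElement

namespace SclAux

/-! ### Generic group constructions -/

def conjBy {G : Type*} [Group G] (j : G) (k : ℕ) (x : G) : G := j ^ k * x * (j ^ k)⁻¹

def famA {G : Type*} [Group G] {β : Type*} (j : G) (a : β → G) : ℕ → β → G
  | 0 => fun _ => 1
  | n + 1 => fun i => famA j a n i * conjBy j n (a i)

def Cprod {G : Type*} [Group G] (j g : G) : ℕ → G
  | 0 => 1
  | n + 1 => Cprod j g n * conjBy j n g

def Dprod {G : Type*} [Group G] (j g : G) : ℕ → G
  | 0 => 1
  | n + 1 => Dprod j g n * conjBy j (n + 1) g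

def Hseq {G : Type*} [Group G] (j g : G) : ℕ → G
  | 0 => 1
  | n + 1 => g ^ (n + 1) * (j * Hseq j g n * j⁻¹)

theorem conjBy_succ {G : Type*} [Group G] (j : G) (k : ℕ) (x : G) :
    j * conjBy j k x * j⁻¹ = conjBy j (k + 1) x := by
  simp only [conjBy, pow_succ']
  group

theorem shift_C {G : Type*} [Group G] (j g : G) (n : ℕ) :
    j * Cprod j g n * j⁻¹ = Dprod j g n := by
  induction n with
  | zero => simp [Cprod, Dprod]
  | succ n ih =>
    have : j * Cprod j g (n + 1) * j⁻¹ =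
        (j * Cprod j g n * j⁻¹) * (j * conjBy j n g * j⁻¹) := by
      simp [Cprod, mul_assoc]
    rw [this, ih, conjBy_succ]
    rfl

theorem C_eq_g_mul_D {G : Type*} [Group G] (j g : G) (n : ℕ) :
    Cprod j g (n + 1) = g * Dprod j g n := by
  induction n with
  | zero => simp [Cprod, Dprod, conjBy]
  | succ n ih =>
    show Cprod j g (n + 1) * conjBy j (n + 1) g = g * (Dprod j g n * conjBy j (n + 1) g)
    rw [ih, mul_assoc]

theorem H_eq_C_mul_H {G : Type*} [Group G] (j g : G)
    (hcomm : ∀ k, Commute g (Dprod j g k)) (n : ℕ) :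
    Hseq j g (n + 1) = Cprod j g (n + 1) * Hseq j g n := by
  induction n with
  | zero =>
    show g ^ 1 * (j * 1 * j⁻¹) = Cprod j g 1 * 1
    rw [C_eq_g_mul_D]
    simp [Dprod]
  | succ n ih =>
    have h1 : j * (Cprod j g (n + 1) * Hseq j g n) * j⁻¹ =
        Dprod j g (n + 1) * (j * Hseq j g n * j⁻¹) := by
      rw [← shift_C]; group
    have h2 : g ^ (n + 2) * Dprod j g (n + 1) = g * Dprod j g (n + 1) * g ^ (n + 1) := by
      have h3 := ((hcomm (n + 1)).pow_left (n + 1)).eq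
      calc g ^ (n + 2) * Dprod j g (n + 1) = g * (g ^ (n + 1) * Dprod j g (n + 1)) := by
            rw [← mul_assoc, ← pow_succ']
          _ = g * (Dprod j g (n + 1) * g ^ (n + 1)) := by rw [h3]
          _ = g * Dprod j g (n + 1) * g ^ (n + 1) := by rw [mul_assoc]
    calc Hseq j g (n + 2)
        = g ^ (n + 2) * (j * Hseq j g (n + 1) * j⁻¹) := rfl
      _ = g ^ (n + 2) * (j * (Cprod j g (n + 1) * Hseq j g n) * j⁻¹) := by rw [ih]
      _ = (g ^ (n + 2) * Dprod j g (n + 1)) * (j * Hseq j g n * j⁻¹) := by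
          rw [h1]; group
      _ = (g * Dprod j g (n + 1) * g ^ (n + 1)) * (j * Hseq j g n * j⁻¹) := by rw [h2]
      _ = (g * Dprod j g (n + 1)) * (g ^ (n + 1) * (j * Hseq j g n * j⁻¹)) := by
          rw [mul_assoc]
      _ = Cprod j g (n + 2) * Hseq j g (n + 1) := by rw [C_eq_g_mul_D]; rfl

theorem pow_eq_C_mul_comm {G : Type*} [Group G] (j g : G)
    (hcomm : ∀ k, Commute g (Dprod j g k)) (n : ℕ) :
    g ^ (n + 1) = Cprod j g (n + 1) * ⁅Hseq j g n, j⁆ := by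
  have h := H_eq_C_mul_H j g hcomm n
  have hd : Hseq j g (n + 1) = g ^ (n + 1) * (j * Hseq j g n * j⁻¹) := rfl
  rw [hd] at h
  rw [commutatorElement_def]
  have := h.symm
  -- g^(n+1) * (j * H n * j⁻¹) = C(n+1) * H n
  -- ⇒ g^(n+1) = C(n+1) * H n * j * (H n)⁻¹ * j⁻¹
  have : g ^ (n + 1) = Cprod j g (n + 1) * Hseq j g n * (j * Hseq j g n * j⁻¹)⁻¹ := by
    rw [← h]; group
  rw [this]; group

theorem commutator_mul_of_commute {G : Type*} [Group G] {x y u v : G}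
    (hux : Commute u x) (huy : Commute u y) (hvx : Commute v x) (hvy : Commute v y) :
    ⁅x * u, y * v⁆ = ⁅x, y⁆ * ⁅u, v⁆ := by
  simp only [commutatorElement_def, mul_inv_rev, mul_assoc]
  rw [huy.left_comm]
  rw [(hux.inv_inv).left_comm]
  rw [hvx.inv_right.left_comm]
  rw [hux.inv_right.left_comm]
  rw [(hvy.inv_inv).eq]
  rw [(huy.inv_inv).left_comm]
  rw [hvy.inv_right.left_comm]
  rw [huy.inv_right.left_comm]

theorem ofFn_mul_prod {G : Type*} [Group G] : ∀ {m : ℕ} (X q : Fin m → G),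
    (∀ i i', Commute (X i) (q i')) →
    (List.ofFn fun i => X i * q i).prod = (List.ofFn X).prod * (List.ofFn q).prod := by
  intro m
  induction m with
  | zero => intro X q h; simp
  | succ n ih =>
    intro X q h
    rw [List.ofFn_succ (f := fun i => X i * q i), List.ofFn_succ (f := X), List.ofFn_succ (f := q),
      List.prod_cons, List.prod_cons, List.prod_cons]
    rw [ih (fun i => X i.succ) (fun i => q i.succ) (fun i i' => h _ _)]
    have hq : Commute (q 0) (List.ofFn fun i => X i.succ).prod := by
      apply Commute.list_prod_right
      intro y hy
      rw [List.mem_ofFn] at hy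
      obtain ⟨i, rfl⟩ := hy
      exact (h _ _).symm
    calc X 0 * q 0 * ((List.ofFn fun i => X i.succ).prod * (List.ofFn fun i => q i.succ).prod)
        = X 0 * (q 0 * (List.ofFn fun i => X i.succ).prod * (List.ofFn fun i => q i.succ).prod) := by
          simp [mul_assoc]
      _ = X 0 * ((List.ofFn fun i => X i.succ).prod * q 0 * (List.ofFn fun i => q i.succ).prod) := by
          rw [hq.eq]
      _ = X 0 * (List.ofFn fun i => X i.succ).prod * (q 0 * (List.ofFn fun i => q i.succ).prod) := by
          simp [mul_assoc]


/-! ### Supports of permutations in a subgroup -/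

variable {α : Type*} {G : Subgroup (Equiv.Perm α)}

def SuppIn (x : G) (T : Set α) : Prop := ∀ p, (x : Equiv.Perm α) p ≠ p → p ∈ T

theorem suppIn_mono {x : G} {T T' : Set α} (h : T ⊆ T') (hx : SuppIn x T) : SuppIn x T' :=
  fun p hp => h (hx p hp)

theorem suppIn_one (T : Set α) : SuppIn (1 : G) T := by
  intro p hp
  simp at hp

theorem suppIn_mul {x y : G} {T : Set α} (hx : SuppIn x T) (hy : SuppIn y T) :
    SuppIn (x * y) T := by
  intro p hp
  by_cases h : (y : Equiv.Perm α) p = p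
  · apply hx
    simpa [Equiv.Perm.mul_apply, h] using hp
  · exact hy p h

theorem suppIn_inv {x : G} {T : Set α} (hx : SuppIn x T) : SuppIn x⁻¹ T := by
  intro p hp
  by_contra hpT
  have hfix : (x : Equiv.Perm α) p = p := by
    by_contra h; exact hpT (hx p h)
  apply hp
  show ((x : Equiv.Perm α))⁻¹ p = p
  conv_lhs => rw [← hfix]
  exact (x : Equiv.Perm α).symm_apply_apply p

theorem suppIn_commutator {x y : G} {T : Set α} (hx : SuppIn x T) (hy : SuppIn y T) :
    SuppIn ⁅x, y⁆ T := by
  rw [commutatorElement_def]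
  exact suppIn_mul (suppIn_mul (suppIn_mul hx hy) (suppIn_inv hx)) (suppIn_inv hy)

theorem suppIn_listProd {T : Set α} : ∀ (l : List G), (∀ x ∈ l, SuppIn x T) → SuppIn l.prod T := by
  intro l
  induction l with
  | nil => intro _; simpa using suppIn_one T
  | cons x l ih =>
    intro h
    rw [List.prod_cons]
    exact suppIn_mul (h x (by simp)) (ih fun y hy => h y (by simp [hy]))

theorem suppIn_conjBy {x : G} (u : G) {T : Set α} (hx : SuppIn x T) :
    SuppIn (u * x * u⁻¹) ((u : Equiv.Perm α) '' T) := by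
  intro p hp
  have h1 : (x : Equiv.Perm α) (((u : Equiv.Perm α))⁻¹ p) ≠ ((u : Equiv.Perm α))⁻¹ p := by
    intro h
    apply hp
    show ((u * x * u⁻¹ : G) : Equiv.Perm α) p = p
    simp only [Subgroup.coe_mul, Subgroup.coe_inv, Equiv.Perm.mul_apply]
    rw [h]
    exact (u : Equiv.Perm α).apply_symm_apply p
  exact ⟨((u : Equiv.Perm α))⁻¹ p, hx _ h1, (u : Equiv.Perm α).apply_symm_apply p⟩

theorem commute_of_disjoint {x y : G} {A B : Set α}
    (hx : SuppIn x A) (hy : SuppIn y B) (hAB : ∀ p, p ∈ A → p ∉ B) :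
    Commute x y := by
  have key : ((x * y : G) : Equiv.Perm α) = ((y * x : G) : Equiv.Perm α) := by
    simp only [Subgroup.coe_mul]
    ext p
    simp only [Equiv.Perm.mul_apply]
    by_cases hxp : (x : Equiv.Perm α) p = p
    · by_cases hyp : (y : Equiv.Perm α) p = p
      · simp [hxp, hyp]
      · have hypB : (y : Equiv.Perm α) p ∈ B := by
          apply hy
          intro hcon
          exact hyp ((y : Equiv.Perm α).injective hcon)
        have hfix : (x : Equiv.Perm α) ((y : Equiv.Perm α) p) = (y : Equiv.Perm α) p := by
          by_contra h
          exact hAB _ (hx _ h) hypB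
        rw [hxp, hfix]
    · have hpA : p ∈ A := hx p hxp
      have hyp : (y : Equiv.Perm α) p = p := by
        by_contra h
        exact hAB p hpA (hy p h)
      have hxpA : (x : Equiv.Perm α) p ∈ A := by
        apply hx
        intro hcon
        exact hxp ((x : Equiv.Perm α).injective hcon)
      have hfix : (y : Equiv.Perm α) ((x : Equiv.Perm α) p) = (x : Equiv.Perm α) p := by
        by_contra h
        exact hAB _ hxpA (hy _ h)
      rw [hyp, hfix]
  exact Subtype.coe_injective key


/-! ### Displaced images -/

def USet (J : Equiv.Perm α) (S : Set α) (k : ℕ) : Set α := ⇑(J ^ k) '' S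

def TSet (J : Equiv.Perm α) (S : Set α) (n : ℕ) : Set α := {p | ∃ k < n, p ∈ USet J S k}

def VSet (J : Equiv.Perm α) (S : Set α) : Set α := {p | ∃ k ≠ 0, p ∈ USet J S k}

theorem USet_disj {J : Equiv.Perm α} {S : Set α}
    (hjS : ∀ n : ℤ, n ≠ 0 → ∀ x ∈ S, (J ^ n) x ∉ S)
    {k l : ℕ} (hkl : k ≠ l) : ∀ p ∈ USet J S k, p ∉ USet J S l := by
  rintro p ⟨s, hs, hsp⟩ ⟨t, ht, htp⟩
  have hst : (J ^ ((k : ℤ) - l)) s = t := by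
    apply (J ^ (l : ℤ)).injective
    have he : (l : ℤ) + ((k : ℤ) - l) = k := by ring
    have h1 : (J ^ (l : ℤ)) ((J ^ ((k : ℤ) - l)) s) = (J ^ (k : ℤ)) s := by
      rw [← Equiv.Perm.mul_apply, ← zpow_add, he]
    rw [h1, zpow_natCast, zpow_natCast, hsp, htp]
  have hne : (k : ℤ) - l ≠ 0 := sub_ne_zero.mpr (by exact_mod_cast hkl)
  exact hjS _ hne s hs (hst ▸ ht)

theorem USet_zero (J : Equiv.Perm α) (S : Set α) : USet J S 0 = S := by
  simp [USet]

theorem suppIn_conjBy' {j x : G} {S : Set α} (hx : SuppIn x S) (k : ℕ) :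
    SuppIn (conjBy j k x) (USet (j : Equiv.Perm α) S k) := by
  have h := suppIn_conjBy (j ^ k) hx
  have hc : ((j ^ k : G) : Equiv.Perm α) = (j : Equiv.Perm α) ^ k := by
    push_cast
    rfl
  rw [hc] at h
  exact h

end SclAux


open SclAux in
/-- If $g \in [G,G]$ is a product of commutators of elements of $G$, all supported
(along with $g$) in a set $S$ that is displaced off itself by all nonzero powers of
some $j \in G$, then $\mathrm{scl}(g) = 0$. -/
theorem scl_eq_zero_of_displaceable_support {α : Type*}
    (G : Subgroup (Equiv.Perm α)) (S : Set α) (g : G)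
    (m : ℕ) (a b : Fin m → G)
    (hprod : g = (List.ofFn fun i => ⁅a i, b i⁆).prod)
    (hgS : ∀ x, (g : Equiv.Perm α) x ≠ x → x ∈ S)
    (haS : ∀ i, ∀ x, (a i : Equiv.Perm α) x ≠ x → x ∈ S)
    (hbS : ∀ i, ∀ x, (b i : Equiv.Perm α) x ≠ x → x ∈ S)
    (j : G) (hjS : ∀ n : ℤ, n ≠ 0 → ∀ x ∈ S, ((j : Equiv.Perm α) ^ n) x ∉ S) :
    scl g = 0 := by
  set J : Equiv.Perm α := (j : Equiv.Perm α) with hJ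
  -- disjointness facts
  have hTU : ∀ n : ℕ, ∀ p ∈ TSet J S n, p ∉ USet J S n := by
    rintro n p ⟨k, hk, hpk⟩
    exact USet_disj hjS (Nat.ne_of_lt hk) p hpk
  have hUT : ∀ n : ℕ, ∀ p ∈ USet J S n, p ∉ TSet J S n :=
    fun n p hp hq => hTU n p hq hp
  have hUV : ∀ p ∈ USet J S 0, p ∉ VSet J S := by
    rintro p hp ⟨k, hk, hpk⟩
    exact USet_disj hjS hk p hpk hp
  have hUsubV : ∀ n : ℕ, USet J S (n + 1) ⊆ VSet J S :=
    fun n p hp => ⟨n + 1, Nat.succ_ne_zero n, hp⟩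
  have hTsubT : ∀ n : ℕ, TSet J S n ⊆ TSet J S (n + 1) :=
    fun n p ⟨k, hk, hpk⟩ => ⟨k, hk.trans (Nat.lt_succ_self n), hpk⟩
  have hUsubT : ∀ n : ℕ, USet J S n ⊆ TSet J S (n + 1) :=
    fun n p hp => ⟨n, Nat.lt_succ_self n, hp⟩
  -- support facts
  have hgSu : SuppIn g S := hgS
  have hgU0 : SuppIn g (USet J S 0) := by
    rw [USet_zero]; exact hgS
  have hDsupp : ∀ n, SuppIn (Dprod j g n) (VSet J S) := by
    intro n
    induction n with
    | zero => exact suppIn_one _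
    | succ n ih =>
      exact suppIn_mul ih (suppIn_mono (hUsubV n) (suppIn_conjBy' hgSu (n + 1)))
  have hcommD : ∀ n, Commute g (Dprod j g n) :=
    fun n => commute_of_disjoint hgU0 (hDsupp n) hUV
  have haT : ∀ n (i : Fin m), SuppIn (famA j a n i) (TSet J S n) := by
    intro n
    induction n with
    | zero => intro i; exact suppIn_one _
    | succ n ih =>
      intro i
      exact suppIn_mul (suppIn_mono (hTsubT n) (ih i))
        (suppIn_mono (hUsubT n) (suppIn_conjBy' (haS i) n))
  have hbT : ∀ n (i : Fin m), SuppIn (famA j b n i) (TSet J S n) := by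
    intro n
    induction n with
    | zero => intro i; exact suppIn_one _
    | succ n ih =>
      intro i
      exact suppIn_mul (suppIn_mono (hTsubT n) (ih i))
        (suppIn_mono (hUsubT n) (suppIn_conjBy' (hbS i) n))
  -- the key product identity
  have hC : ∀ n, (List.ofFn fun i => ⁅famA j a n i, famA j b n i⁆).prod = Cprod j g n := by
    intro n
    induction n with
    | zero =>
      show (List.ofFn fun _ : Fin m => ⁅(1 : G), (1 : G)⁆).prod = 1
      simp
    | succ n ih =>
      have hXq : ∀ i : Fin m, ⁅famA j a (n + 1) i, famA j b (n + 1) i⁆ =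
          ⁅famA j a n i, famA j b n i⁆ * ⁅conjBy j n (a i), conjBy j n (b i)⁆ := by
        intro i
        show ⁅famA j a n i * conjBy j n (a i), famA j b n i * conjBy j n (b i)⁆ = _
        exact commutator_mul_of_commute
          (commute_of_disjoint (suppIn_conjBy' (haS i) n) (haT n i) (hUT n))
          (commute_of_disjoint (suppIn_conjBy' (haS i) n) (hbT n i) (hUT n))
          (commute_of_disjoint (suppIn_conjBy' (hbS i) n) (haT n i) (hUT n))
          (commute_of_disjoint (suppIn_conjBy' (hbS i) n) (hbT n i) (hUT n))
      have hsplit := ofFn_mul_prod (fun i => ⁅famA j a n i, famA j b n i⁆)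
        (fun i => ⁅conjBy j n (a i), conjBy j n (b i)⁆)
        (fun i i' => commute_of_disjoint
          (suppIn_commutator (haT n i) (hbT n i))
          (suppIn_commutator (suppIn_conjBy' (haS i') n) (suppIn_conjBy' (hbS i') n))
          (hTU n))
      have hconjprod :
          (List.ofFn fun i => ⁅conjBy j n (a i), conjBy j n (b i)⁆).prod = conjBy j n g := by
        have hq : (fun i => ⁅conjBy j n (a i), conjBy j n (b i)⁆) =
            (MulAut.conj (j ^ n)).toMonoidHom ∘ (fun i => ⁅a i, b i⁆) := by
          funext i
          show _ = (MulAut.conj (j ^ n)).toMonoidHom ⁅a i, b i⁆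
          rw [map_commutatorElement]
          rfl
        rw [hq, ← List.map_ofFn, ← map_list_prod, ← hprod]
        rfl
      calc (List.ofFn fun i => ⁅famA j a (n + 1) i, famA j b (n + 1) i⁆).prod
          = (List.ofFn fun i => ⁅famA j a n i, famA j b n i⁆ *
              ⁅conjBy j n (a i), conjBy j n (b i)⁆).prod := by
            simp only [hXq]
        _ = (List.ofFn fun i => ⁅famA j a n i, famA j b n i⁆).prod *
              (List.ofFn fun i => ⁅conjBy j n (a i), conjBy j n (b i)⁆).prod := hsplit
        _ = Cprod j g n * conjBy j n g := by rw [ih, hconjprod]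
        _ = Cprod j g (n + 1) := rfl
  -- commutator length bound
  have hcl : ∀ n : ℕ, commLength (g ^ (n + 1)) ≤ m + 1 := by
    intro n
    apply Nat.sInf_le
    refine ⟨Fin.snoc (famA j a (n + 1)) (Hseq j g n), Fin.snoc (famA j b (n + 1)) j, ?_⟩
    rw [pow_eq_C_mul_comm j g hcommD n, ← hC (n + 1)]
    rw [List.ofFn_succ', List.prod_concat]
    simp only [Fin.snoc_castSucc, Fin.snoc_last]
  -- conclude
  show Filter.liminf (fun n : ℕ => (commLength (g ^ n) : ℝ) / n) Filter.atTop = 0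
  apply Filter.Tendsto.liminf_eq
  apply squeeze_zero' (g := fun n : ℕ => ((m : ℝ) + 1) / n)
  · exact Filter.Eventually.of_forall fun n => by positivity
  · filter_upwards [Filter.eventually_ge_atTop 1] with n hn
    match n, hn with
    | (k + 1), _ =>
      have hnum : (commLength (g ^ (k + 1)) : ℝ) ≤ (m : ℝ) + 1 := by
        exact_mod_cast hcl k
      have hpos : (0 : ℝ) ≤ (k + 1 : ℕ) := by positivity
      exact div_le_div_of_nonneg_right hnum hpos |>.trans_eq rfl
  · exact tendsto_const_div_atTop_nhds_zero_nat _
end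

section
/- Let α be a set, let g and j be bijections of α, let S ⊆ α contain the support of g, and suppose jⁿ(S) ∩ S = ∅ for every integer n ≠ 0. Fix an integer n ≥ 0 and define Δₙ(g) = ∏_{i=0}^{n} jⁱ g j⁻ⁱ and g′ = ∏_{i=0}^{n} jⁱ g^{i+1} j⁻ⁱ (products taken in order of increasing i). Then g′ j g′⁻¹ j⁻¹ = Δₙ(g) · j^{n+1} g^{-(n+1)} j^{-(n+1)}. -/
open Filter
open scoped commutatorElement

lemma shuffle_lemma {G : Type*} [Group G] (p q x y : G)
    (h1 : Commute x q) (h2 : Commute y q) :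
    p * x * (y * q) = p * q * (x * y) := by
  simp only [mul_assoc]
  rw [h2.eq, ← mul_assoc x, h1.eq, mul_assoc]

theorem key_comm_lemma {G : Type*} [Group G] (A : ℕ → G)
    (hc : ∀ i k, Commute (A i) (A k)) (n : ℕ) :
    (List.ofFn fun i : Fin (n + 1) => A (i : ℕ) ^ ((i : ℕ) + 1)).prod *
      ((List.ofFn fun i : Fin (n + 1) => A ((i : ℕ) + 1) ^ ((i : ℕ) + 1)).prod)⁻¹ =
    (List.ofFn fun i : Fin (n + 1) => A (i : ℕ)).prod * (A (n + 1) ^ (n + 1))⁻¹ := by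
  induction n with
  | zero => simp
  | succ n ih =>
    rw [List.ofFn_succ' (fun i : Fin (n + 2) => A (i : ℕ) ^ ((i : ℕ) + 1)),
        List.ofFn_succ' (fun i : Fin (n + 2) => A ((i : ℕ) + 1) ^ ((i : ℕ) + 1)),
        List.ofFn_succ' (fun i : Fin (n + 2) => A (i : ℕ))]
    simp only [Function.comp, Fin.coe_castSucc, Fin.val_last, List.concat_eq_append,
      List.prod_append, List.prod_cons, List.prod_nil, mul_one]
    set P := (List.ofFn fun i : Fin (n + 1) => A (i : ℕ) ^ ((i : ℕ) + 1)).prod with hP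
    set Q := (List.ofFn fun i : Fin (n + 1) => A ((i : ℕ) + 1) ^ ((i : ℕ) + 1)).prod with hQ
    set D := (List.ofFn fun i : Fin (n + 1) => A (i : ℕ)).prod with hD
    have hQc : ∀ m l : ℕ, Commute (A m ^ l) Q := by
      intro m l
      refine (Commute.list_prod_right _ _ ?_).pow_left l
      intro x hx
      rw [List.mem_ofFn] at hx
      obtain ⟨i, rfl⟩ := hx
      exact (hc m _).pow_right _
    have step : P * A (n + 1) ^ (n + 1 + 1) * (Q * A (n + 1 + 1) ^ (n + 1 + 1))⁻¹
        = P * Q⁻¹ * (A (n + 1) ^ (n + 2) * (A (n + 2) ^ (n + 2))⁻¹) := by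
      rw [mul_inv_rev]
      exact shuffle_lemma P Q⁻¹ _ _ ((hQc _ _).inv_right) (((hQc _ _).inv_right).inv_left)
    rw [step, ih, mul_assoc]
    have : (A (n + 1) ^ (n + 1))⁻¹ * (A (n + 1) ^ (n + 2) * (A (n + 2) ^ (n + 2))⁻¹)
        = A (n + 1) * (A (n + 2) ^ (n + 2))⁻¹ := by
      rw [pow_succ (A (n + 1)) (n + 1), mul_assoc (A (n + 1) ^ (n + 1)), inv_mul_cancel_left]
    rw [this, ← mul_assoc]

/-- The key commutator identity in the diagonal trick: with
$\Delta_n(g) = \prod_{i=0}^n j^i g j^{-i}$ and $g' = \prod_{i=0}^n j^i g^{i+1} j^{-i}$,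
one has $[g',j] = \Delta_n(g)\, j^{n+1} g^{-(n+1)} j^{-(n+1)}$. -/
theorem diagonal_trick_commutator_identity {α : Type*}
    (g j : Equiv.Perm α) (S : Set α)
    (hg : ∀ x, g x ≠ x → x ∈ S)
    (hj : ∀ n : ℤ, n ≠ 0 → ∀ x ∈ S, (j ^ n) x ∉ S)
    (n : ℕ) :
    (List.ofFn fun i : Fin (n + 1) => j ^ (i : ℕ) * g ^ ((i : ℕ) + 1) * (j ^ (i : ℕ))⁻¹).prod
        * j *
      ((List.ofFn fun i : Fin (n + 1) =>
          j ^ (i : ℕ) * g ^ ((i : ℕ) + 1) * (j ^ (i : ℕ))⁻¹).prod)⁻¹ * j⁻¹ =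
    (List.ofFn fun i : Fin (n + 1) => j ^ (i : ℕ) * g * (j ^ (i : ℕ))⁻¹).prod *
      (j ^ (n + 1) * (g ^ (n + 1))⁻¹ * (j ^ (n + 1))⁻¹) := by
  set A : ℕ → Equiv.Perm α := fun i => j ^ i * g * (j ^ i)⁻¹ with hA
  -- pairwise commutation
  have hmem : ∀ (i : ℕ) (x : α), A i x ≠ x → (j ^ i)⁻¹ x ∈ S := by
    intro i x hx
    apply hg
    intro hgx
    apply hx
    simp only [hA, Equiv.Perm.mul_apply, hgx]
    exact (j ^ i).apply_symm_apply x
  have hcomm : ∀ i k, Commute (A i) (A k) := by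
    intro i k
    rcases eq_or_ne i k with rfl | hik
    · exact Commute.refl _
    · refine Equiv.Perm.Disjoint.commute ?_
      intro x
      by_contra hx
      push_neg at hx
      obtain ⟨h1, h2⟩ := hx
      have hi : (j ^ i)⁻¹ x ∈ S := hmem i x h1
      have hk : (j ^ k)⁻¹ x ∈ S := hmem k x h2
      have hne : (i : ℤ) - (k : ℤ) ≠ 0 := by
        intro h; apply hik; omega
      apply hj ((i : ℤ) - (k : ℤ)) hne _ hi
      have hmul : (j ^ ((i : ℤ) - (k : ℤ))) * (j ^ i)⁻¹ = (j ^ k)⁻¹ := by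
        rw [← zpow_natCast j i, ← zpow_natCast j k, ← zpow_neg, ← zpow_neg, ← zpow_add]
        congr 1
        ring
      have heq : (j ^ ((i : ℤ) - (k : ℤ))) ((j ^ i)⁻¹ x) = (j ^ k)⁻¹ x := by
        rw [← Equiv.Perm.mul_apply, hmul]
      rw [heq]
      exact hk
  -- rewrite terms as powers of A
  have h1 : (List.ofFn fun i : Fin (n + 1) =>
      j ^ (i : ℕ) * g ^ ((i : ℕ) + 1) * (j ^ (i : ℕ))⁻¹) =
      List.ofFn fun i : Fin (n + 1) => A (i : ℕ) ^ ((i : ℕ) + 1) := by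
    congr 1; funext i; rw [hA]; exact (conj_pow).symm
  have h2 : (List.ofFn fun i : Fin (n + 1) => j ^ (i : ℕ) * g * (j ^ (i : ℕ))⁻¹) =
      List.ofFn fun i : Fin (n + 1) => A (i : ℕ) := rfl
  rw [h1, h2]
  -- conjugation by j
  have hconj : ∀ i : ℕ, j * A i * j⁻¹ = A (i + 1) := by
    intro i
    simp only [hA, pow_succ']
    group
  set P := (List.ofFn fun i : Fin (n + 1) => A (i : ℕ) ^ ((i : ℕ) + 1)).prod with hP
  have hjP : j * P⁻¹ * j⁻¹ =
      ((List.ofFn fun i : Fin (n + 1) => A ((i : ℕ) + 1) ^ ((i : ℕ) + 1)).prod)⁻¹ := by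
    have : j * P * j⁻¹ =
        (List.ofFn fun i : Fin (n + 1) => A ((i : ℕ) + 1) ^ ((i : ℕ) + 1)).prod := by
      have := map_list_prod (MulAut.conj j).toMonoidHom
        (List.ofFn fun i : Fin (n + 1) => A (i : ℕ) ^ ((i : ℕ) + 1))
      simp only [MulEquiv.coe_toMonoidHom, MulAut.conj_apply, List.map_ofFn] at this
      rw [hP, this]
      refine congrArg List.prod (congrArg List.ofFn (funext fun i => ?_))
      simp only [Function.comp, MulAut.conj_apply]
      rw [← conj_pow, hconj]
    calc j * P⁻¹ * j⁻¹ = (j * P * j⁻¹)⁻¹ := by group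
      _ = _ := by rw [this]
  have htail : j ^ (n + 1) * (g ^ (n + 1))⁻¹ * (j ^ (n + 1))⁻¹ = (A (n + 1) ^ (n + 1))⁻¹ := by
    have h3 : A (n + 1) ^ (n + 1) = j ^ (n + 1) * g ^ (n + 1) * (j ^ (n + 1))⁻¹ := conj_pow
    rw [h3]
    group
  rw [htail, mul_assoc P j, mul_assoc P, hjP]
  exact key_comm_lemma A hcomm n
end

section
/- Let α be a set, let j be a bijection of α, and let S ⊆ α satisfy jⁿ(S) ∩ S = ∅ for every integer n ≠ 0. Fix an integer n ≥ 0 and for a bijection c of α define Δₙ(c) = ∏_{i=0}^{n} jⁱ c j⁻ⁱ (product in order of increasing i). Then for all bijections a, b of α with support contained in S: Δₙ(ab) = Δₙ(a)·Δₙ(b), and consequently Δₙ(⁅a,b⁆) = ⁅Δₙ(a), Δₙ(b)⁆. -/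
open Filter
open scoped commutatorElement

private lemma conj_supp {α : Type*} (j : Equiv.Perm α) (S : Set α)
    (c : Equiv.Perm α) (hc : ∀ x, c x ≠ x → x ∈ S) (i : ℕ) (x : α)
    (hx : (j ^ i * c * (j ^ i)⁻¹) x ≠ x) : ((j ^ i)⁻¹ : Equiv.Perm α) x ∈ S := by
  apply hc
  intro h
  apply hx
  simp only [Equiv.Perm.mul_apply] at *
  rw [h]
  simp

private lemma conj_disj {α : Type*} (j : Equiv.Perm α) (S : Set α)
    (hj : ∀ n : ℤ, n ≠ 0 → ∀ x ∈ S, (j ^ n) x ∉ S)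
    (c d : Equiv.Perm α) (hc : ∀ x, c x ≠ x → x ∈ S) (hd : ∀ x, d x ≠ x → x ∈ S)
    (i k : ℕ) (hik : i ≠ k) :
    (j ^ i * c * (j ^ i)⁻¹).Disjoint (j ^ k * d * (j ^ k)⁻¹) := by
  intro x
  by_contra h
  push_neg at h
  obtain ⟨h1, h2⟩ := h
  have hy := conj_supp j S c hc i x h1
  have hz := conj_supp j S d hd k x h2
  have hne : (k : ℤ) - i ≠ 0 := by intro h; apply hik; omega
  refine hj _ hne _ hz ?_
  have key : j ^ ((k:ℤ) - i) * ((j ^ k)⁻¹ : Equiv.Perm α) = (j ^ i)⁻¹ := by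
    rw [← zpow_natCast j k, ← zpow_natCast j i]; group
  have : (j ^ ((k:ℤ) - i)) (((j ^ k)⁻¹ : Equiv.Perm α) x) = ((j ^ i)⁻¹ : Equiv.Perm α) x := by
    rw [← Equiv.Perm.mul_apply, key]
  rw [this]; exact hy

private lemma D_mul {α : Type*} (j : Equiv.Perm α) (S : Set α)
    (hj : ∀ n : ℤ, n ≠ 0 → ∀ x ∈ S, (j ^ n) x ∉ S) (n : ℕ) :
    ∀ a b : Equiv.Perm α, (∀ x, a x ≠ x → x ∈ S) → (∀ x, b x ≠ x → x ∈ S) →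
    (List.ofFn fun i : Fin (n + 1) => j ^ (i : ℕ) * (a * b) * (j ^ (i : ℕ))⁻¹).prod =
      (List.ofFn fun i : Fin (n + 1) => j ^ (i : ℕ) * a * (j ^ (i : ℕ))⁻¹).prod *
        (List.ofFn fun i : Fin (n + 1) => j ^ (i : ℕ) * b * (j ^ (i : ℕ))⁻¹).prod := by
  induction n with
  | zero =>
    intro a b ha hb
    simp [mul_assoc]
  | succ n ih =>
    intro a b ha hb
    rw [List.ofFn_succ', List.ofFn_succ' (f := fun i : Fin (n+2) => j ^ (i : ℕ) * a * (j ^ (i : ℕ))⁻¹),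
      List.ofFn_succ' (f := fun i : Fin (n+2) => j ^ (i : ℕ) * b * (j ^ (i : ℕ))⁻¹)]
    simp only [Function.comp, Fin.coe_castSucc, Fin.val_last, List.concat_eq_append,
      List.prod_append, List.prod_cons, List.prod_nil, mul_one]
    rw [ih a b ha hb]
    have hsplit : j ^ (n+1) * (a * b) * (j ^ (n+1))⁻¹ =
        (j ^ (n+1) * a * (j ^ (n+1))⁻¹) * (j ^ (n+1) * b * (j ^ (n+1))⁻¹) := by group
    rw [hsplit]
    have hcomm : Commute (j ^ (n+1) * a * (j ^ (n+1))⁻¹)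
        (List.ofFn fun i : Fin (n+1) => j ^ (i : ℕ) * b * (j ^ (i : ℕ))⁻¹).prod := by
      apply Commute.list_prod_right
      intro x hx
      rw [List.mem_ofFn] at hx
      obtain ⟨i, rfl⟩ := hx
      exact ((conj_disj j S hj a b ha hb (n+1) i (by omega)).commute)
    calc (List.ofFn fun i : Fin (n+1) => j ^ (i:ℕ) * a * (j ^ (i:ℕ))⁻¹).prod *
          (List.ofFn fun i : Fin (n+1) => j ^ (i:ℕ) * b * (j ^ (i:ℕ))⁻¹).prod *
          ((j ^ (n+1) * a * (j ^ (n+1))⁻¹) * (j ^ (n+1) * b * (j ^ (n+1))⁻¹))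
        = (List.ofFn fun i : Fin (n+1) => j ^ (i:ℕ) * a * (j ^ (i:ℕ))⁻¹).prod *
          ((List.ofFn fun i : Fin (n+1) => j ^ (i:ℕ) * b * (j ^ (i:ℕ))⁻¹).prod *
          (j ^ (n+1) * a * (j ^ (n+1))⁻¹)) * (j ^ (n+1) * b * (j ^ (n+1))⁻¹) := by
          simp [mul_assoc]
      _ = _ := by rw [← hcomm.eq]; simp [mul_assoc]

/-- The diagonal map $\Delta_n(c) = \prod_{i=0}^n j^i c j^{-i}$ is multiplicative on
elements supported in a set $S$ displaced off itself by all nonzero powers of $j$,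
and hence sends commutators to commutators. -/
theorem diagonal_map_multiplicative {α : Type*}
    (j : Equiv.Perm α) (S : Set α)
    (hj : ∀ n : ℤ, n ≠ 0 → ∀ x ∈ S, (j ^ n) x ∉ S)
    (n : ℕ) (a b : Equiv.Perm α)
    (ha : ∀ x, a x ≠ x → x ∈ S) (hb : ∀ x, b x ≠ x → x ∈ S) :
    (List.ofFn fun i : Fin (n + 1) => j ^ (i : ℕ) * (a * b) * (j ^ (i : ℕ))⁻¹).prod =
      (List.ofFn fun i : Fin (n + 1) => j ^ (i : ℕ) * a * (j ^ (i : ℕ))⁻¹).prod *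
        (List.ofFn fun i : Fin (n + 1) => j ^ (i : ℕ) * b * (j ^ (i : ℕ))⁻¹).prod ∧
    (List.ofFn fun i : Fin (n + 1) => j ^ (i : ℕ) * ⁅a, b⁆ * (j ^ (i : ℕ))⁻¹).prod =
      ⁅(List.ofFn fun i : Fin (n + 1) => j ^ (i : ℕ) * a * (j ^ (i : ℕ))⁻¹).prod,
        (List.ofFn fun i : Fin (n + 1) => j ^ (i : ℕ) * b * (j ^ (i : ℕ))⁻¹).prod⁆ := by
  set D : Equiv.Perm α → Equiv.Perm α := fun c =>
    (List.ofFn fun i : Fin (n + 1) => j ^ (i : ℕ) * c * (j ^ (i : ℕ))⁻¹).prod with hD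
  have hinv : ∀ c : Equiv.Perm α, (∀ x, c x ≠ x → x ∈ S) → ∀ x, c⁻¹ x ≠ x → x ∈ S := by
    intro c hc x hx
    apply hc
    intro h
    apply hx
    rw [← h]
    simp
    exact h.symm
  have hmulsupp : ∀ c d : Equiv.Perm α, (∀ x, c x ≠ x → x ∈ S) → (∀ x, d x ≠ x → x ∈ S) →
      ∀ x, (c * d) x ≠ x → x ∈ S := by
    intro c d hc hd x hx
    by_cases h : d x = x
    · apply hc; intro h'; apply hx; simp [Equiv.Perm.mul_apply, h, h']
    · exact hd x h
  have hone : D 1 = 1 := by simp [hD]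
  have M : ∀ c d : Equiv.Perm α, (∀ x, c x ≠ x → x ∈ S) → (∀ x, d x ≠ x → x ∈ S) →
      D (c * d) = D c * D d := fun c d hc hd => D_mul j S hj n c d hc hd
  have Minv : ∀ c : Equiv.Perm α, (∀ x, c x ≠ x → x ∈ S) → D c⁻¹ = (D c)⁻¹ := by
    intro c hc
    have := M c c⁻¹ hc (hinv c hc)
    rw [mul_inv_cancel, hone] at this
    exact (inv_eq_of_mul_eq_one_right this.symm).symm
  refine ⟨M a b ha hb, ?_⟩
  have hcomm : ⁅a, b⁆ = (a * b) * (a⁻¹ * b⁻¹) := by group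
  have h1 : D ⁅a, b⁆ = D (a * b) * D (a⁻¹ * b⁻¹) := by
    rw [hcomm]
    exact M _ _ (hmulsupp a b ha hb) (hmulsupp a⁻¹ b⁻¹ (hinv a ha) (hinv b hb))
  rw [show (List.ofFn fun i : Fin (n + 1) => j ^ (i : ℕ) * ⁅a, b⁆ * (j ^ (i : ℕ))⁻¹).prod
      = D ⁅a, b⁆ from rfl, h1, M a b ha hb, M a⁻¹ b⁻¹ (hinv a ha) (hinv b hb),
    Minv a ha, Minv b hb]
  rw [commutatorElement_def]
  simp [hD, mul_assoc]
end

section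
/- Let H be a group of increasing bijections of [0,1]. Let I₁ = [p₁,q₁], …, Iₙ = [pₙ,qₙ] be pairwise disjoint nondegenerate closed subintervals of [0,1] such that every element of H fixes each pᵢ and each qᵢ. For each i let Jᵢ be a nonempty closed interval contained in the open interval (pᵢ, qᵢ), and suppose that for each i there exists jᵢ ∈ H with jᵢ(Jᵢ) ∩ Jᵢ = ∅. Then there exists a single element j ∈ H such that j(Jᵢ) ∩ Jᵢ = ∅ for all i = 1, …, n simultaneously. -/
open Filter
open scoped commutatorElement

namespace Equiv.Perm

theorem apply_inv_self {α : Type*} (f : Equiv.Perm α) (x : α) : f (f⁻¹ x) = x :=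
  Equiv.apply_symm_apply f x

theorem inv_apply_self {α : Type*} (f : Equiv.Perm α) (x : α) : f⁻¹ (f x) = x :=
  Equiv.symm_apply_apply f x

end Equiv.Perm

namespace SimDisp

local notation "X" => unitInterval

/-- The inverse of a strictly monotone permutation is strictly monotone. -/
lemma sm_inv (f : Equiv.Perm X) (hf : StrictMono ⇑f) : StrictMono ⇑f⁻¹ := by
  intro a b hab
  have : f (f⁻¹ a) < f (f⁻¹ b) := by
    rwa [Equiv.Perm.apply_inv_self, Equiv.Perm.apply_inv_self]
  exact hf.lt_iff_lt.mp this

/-- Powers of a strictly monotone permutation are strictly monotone. -/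
lemma sm_pow (f : Equiv.Perm X) (hf : StrictMono ⇑f) : ∀ m : ℕ, StrictMono ⇑(f ^ m) := by
  intro m
  induction m with
  | zero => simpa [pow_zero, Equiv.Perm.coe_one] using strictMono_id
  | succ m ih =>
      intro a b hab
      rw [pow_succ]
      simp only [Equiv.Perm.mul_apply]
      exact ih (hf hab)

lemma pow_succ_apply (f : Equiv.Perm X) (m : ℕ) (x : X) :
    (f ^ (m + 1)) x = (f ^ m) (f x) := by
  rw [pow_succ, Equiv.Perm.mul_apply]

lemma pow_succ_apply' (f : Equiv.Perm X) (m : ℕ) (x : X) :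
    (f ^ (m + 1)) x = f ((f ^ m) x) := by
  rw [pow_succ', Equiv.Perm.mul_apply]

/-- If `x ≤ f x` then `x ≤ fᵐ x` for all m. -/
lemma le_pow_apply (f : Equiv.Perm X) (hf : StrictMono ⇑f) {x : X} (hx : x ≤ f x) :
    ∀ m : ℕ, x ≤ (f ^ m) x := by
  intro m
  induction m with
  | zero => simp [pow_zero, Equiv.Perm.coe_one]
  | succ m ih =>
      rw [pow_succ_apply]
      exact le_trans ih ((sm_pow f hf m).monotone hx)

/-- If `f x ≤ x` then `fᵐ x ≤ x` for all m. -/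
lemma pow_apply_le (f : Equiv.Perm X) (hf : StrictMono ⇑f) {x : X} (hx : f x ≤ x) :
    ∀ m : ℕ, (f ^ m) x ≤ x := by
  intro m
  induction m with
  | zero => simp [pow_zero, Equiv.Perm.coe_one]
  | succ m ih =>
      rw [pow_succ_apply]
      exact le_trans ((sm_pow f hf m).monotone hx) ih

/-- The increasing orbit is monotone in the exponent. -/
lemma orbit_mono (f : Equiv.Perm X) (hf : StrictMono ⇑f) {x : X} (hx : x ≤ f x) :
    Monotone (fun m : ℕ => (f ^ m) x) := by
  apply monotone_nat_of_le_succ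
  intro m
  rw [pow_succ_apply]
  exact (sm_pow f hf m).monotone hx

lemma orbit_anti (f : Equiv.Perm X) (hf : StrictMono ⇑f) {x : X} (hx : f x ≤ x) :
    Antitone (fun m : ℕ => (f ^ m) x) := by
  apply antitone_nat_of_succ_le
  intro m
  rw [pow_succ_apply]
  exact (sm_pow f hf m).monotone hx

/-- Order-theoretic fixed point between `x ≤ f x` and `f y ≤ y`. -/
lemma exists_fixed (f : Equiv.Perm X) (hf : StrictMono ⇑f) {x y : X}
    (hxy : x ≤ y) (hx : x ≤ f x) (hy : f y ≤ y) :
    ∃ z : X, x ≤ z ∧ z ≤ y ∧ f z = z := by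
  set S : Set ℝ := (fun t : X => (t : ℝ)) '' {t : X | x ≤ t ∧ t ≤ y ∧ t ≤ f t} with hS
  have hxS : (x : ℝ) ∈ S := ⟨x, ⟨le_refl x, hxy, hx⟩, rfl⟩
  have hne : S.Nonempty := ⟨_, hxS⟩
  have hbdd : BddAbove S := by
    refine ⟨(y : ℝ), ?_⟩
    rintro _ ⟨t, ⟨_, hty, _⟩, rfl⟩
    exact Subtype.coe_le_coe.mpr hty
  set R : ℝ := sSup S with hR
  have hxR : (x : ℝ) ≤ R := le_csSup hbdd hxS
  have hRy : R ≤ (y : ℝ) := csSup_le hne (by rintro _ ⟨t, ⟨_, hty, _⟩, rfl⟩; exact hty)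
  have hR0 : 0 ≤ R := le_trans x.2.1 hxR
  have hR1 : R ≤ 1 := le_trans hRy y.2.2
  set z : X := ⟨R, hR0, hR1⟩ with hz
  have hub : ∀ t : X, x ≤ t → t ≤ y → t ≤ f t → t ≤ z := by
    intro t h1 h2 h3
    exact Subtype.coe_le_coe.mp (le_csSup hbdd ⟨t, ⟨h1, h2, h3⟩, rfl⟩)
  have hxz : x ≤ z := Subtype.coe_le_coe.mp hxR
  have hzy : z ≤ y := Subtype.coe_le_coe.mp hRy
  have hzfz : z ≤ f z := by
    apply Subtype.coe_le_coe.mp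
    apply csSup_le hne
    rintro _ ⟨t, ⟨h1, h2, h3⟩, rfl⟩
    have : t ≤ f z := le_trans h3 (hf.monotone (hub t h1 h2 h3))
    exact Subtype.coe_le_coe.mpr this
  have hfz_le : f z ≤ z := by
    apply hub
    · exact le_trans hxz hzfz
    · exact le_trans (hf.monotone hzy) hy
    · exact hf.monotone hzfz
  exact ⟨z, hxz, hzy, le_antisymm hfz_le hzfz⟩

/-- On an interval without fixed points, a strictly monotone permutation has constant sign. -/
lemma sign_const (f : Equiv.Perm X) (hf : StrictMono ⇑f) {c d : X} (hcd : c ≤ d)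
    (hff : ∀ x : X, c ≤ x → x ≤ d → f x ≠ x) :
    (∀ x : X, c ≤ x → x ≤ d → x < f x) ∨ (∀ x : X, c ≤ x → x ≤ d → f x < x) := by
  rcases lt_trichotomy (f c) c with h | h | h
  · right
    intro x hx1 hx2
    by_contra hcon
    push_neg at hcon
    have hcx : c < f⁻¹ c := by
      have := sm_inv f hf h
      rwa [Equiv.Perm.inv_apply_self] at this
    have hxx : f⁻¹ x ≤ x := by
      have := (sm_inv f hf).monotone hcon
      rwa [Equiv.Perm.inv_apply_self] at this
    obtain ⟨z, hz1, hz2, hz3⟩ := exists_fixed f⁻¹ (sm_inv f hf) hx1 hcx.le hxx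
    have : f z = z := by
      conv_lhs => rw [← hz3]
      exact Equiv.Perm.apply_inv_self f z
    exact hff z hz1 (le_trans hz2 hx2) this
  · exact absurd h (hff c (le_refl c) hcd)
  · left
    intro x hx1 hx2
    by_contra hcon
    push_neg at hcon
    obtain ⟨z, hz1, hz2, hz3⟩ := exists_fixed f hf hx1 h.le hcon
    exact hff z hz1 (le_trans hz2 hx2) hz3

/-- Limit of an increasing orbit: a fixed point dominating the orbit, approximated by it. -/
lemma forward_limit (f : Equiv.Perm X) (hf : StrictMono ⇑f) (x : X) (hx : x ≤ f x) :
    ∃ P : X, f P = P ∧ (∀ m : ℕ, (f ^ m) x ≤ P) ∧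
      ∀ z : X, z < P → ∀ᶠ m in atTop, z < (f ^ m) x := by
  set s : ℕ → ℝ := fun m => ((f ^ m) x : ℝ) with hs
  have hbdd : BddAbove (Set.range s) := ⟨1, by rintro _ ⟨m, rfl⟩; exact ((f ^ m) x).2.2⟩
  set R : ℝ := ⨆ m, s m with hR
  have hub : ∀ m, s m ≤ R := fun m => le_ciSup hbdd m
  have hlub : ∀ r : ℝ, (∀ m, s m ≤ r) → R ≤ r := fun r hr => ciSup_le hr
  have hR0 : 0 ≤ R := le_trans ((f ^ 0) x).2.1 (hub 0)
  have hR1 : R ≤ 1 := hlub 1 fun m => ((f ^ m) x).2.2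
  set P : X := ⟨R, hR0, hR1⟩ with hP
  have hubP : ∀ m, (f ^ m) x ≤ P := fun m => Subtype.coe_le_coe.mp (hub m)
  have hPfP : P ≤ f P := by
    apply Subtype.coe_le_coe.mp
    apply hlub
    intro m
    have h1 : (f ^ m) x ≤ (f ^ (m + 1)) x := orbit_mono f hf hx (Nat.le_succ m)
    have h2 : (f ^ (m + 1)) x = f ((f ^ m) x) := pow_succ_apply' f m x
    have h3 : f ((f ^ m) x) ≤ f P := hf.monotone (hubP m)
    exact Subtype.coe_le_coe.mpr (le_trans h1 (h2 ▸ h3))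
  have hfPP : ¬ P < f P := by
    intro hlt
    have hinv : f⁻¹ P < P := by
      have := (sm_inv f hf) hlt
      rwa [Equiv.Perm.inv_apply_self] at this
    have hexm : ∃ m, f⁻¹ P < (f ^ m) x := by
      by_contra hall
      push_neg at hall
      have h' : (P : ℝ) ≤ ((f⁻¹ P : unitInterval) : ℝ) :=
        hlub _ fun m => Subtype.coe_le_coe.mpr (hall m)
      exact absurd (Subtype.coe_le_coe.mp h') (not_le.mpr hinv)
    obtain ⟨m, hm⟩ := hexm
    have : P < (f ^ (m + 1)) x := by
      have := hf hm
      rwa [Equiv.Perm.apply_inv_self, ← pow_succ_apply' f m x] at this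
    exact absurd (hubP (m + 1)) (not_le.mpr this)
  have hfix : f P = P := by
    rcases hPfP.lt_or_eq with h | h
    · exact absurd h hfPP
    · exact h.symm
  refine ⟨P, hfix, hubP, ?_⟩
  intro z hz
  have hexm : ∃ m₀, z < (f ^ m₀) x := by
    by_contra hall
    push_neg at hall
    have h' : (P : ℝ) ≤ (z : ℝ) := hlub _ fun m => Subtype.coe_le_coe.mpr (hall m)
    exact absurd (Subtype.coe_le_coe.mp h') (not_le.mpr hz)
  obtain ⟨m₀, hm₀⟩ := hexm
  exact eventually_atTop.mpr ⟨m₀, fun m hm => lt_of_lt_of_le hm₀ (orbit_mono f hf hx hm)⟩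

/-- Limit of a decreasing orbit. -/
lemma backward_limit (f : Equiv.Perm X) (hf : StrictMono ⇑f) (x : X) (hx : f x ≤ x) :
    ∃ P : X, f P = P ∧ (∀ m : ℕ, P ≤ (f ^ m) x) ∧
      ∀ z : X, P < z → ∀ᶠ m in atTop, (f ^ m) x < z := by
  set s : ℕ → ℝ := fun m => ((f ^ m) x : ℝ) with hs
  have hbdd : BddBelow (Set.range s) := ⟨0, by rintro _ ⟨m, rfl⟩; exact ((f ^ m) x).2.1⟩
  set R : ℝ := ⨅ m, s m with hR
  have hlb : ∀ m, R ≤ s m := fun m => ciInf_le hbdd m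
  have hglb : ∀ r : ℝ, (∀ m, r ≤ s m) → r ≤ R := fun r hr => le_ciInf hr
  have hR0 : 0 ≤ R := hglb 0 fun m => ((f ^ m) x).2.1
  have hR1 : R ≤ 1 := le_trans (hlb 0) ((f ^ 0) x).2.2
  set P : X := ⟨R, hR0, hR1⟩ with hP
  have hlbP : ∀ m, P ≤ (f ^ m) x := fun m => Subtype.coe_le_coe.mp (hlb m)
  have hfPP : f P ≤ P := by
    apply Subtype.coe_le_coe.mp
    apply hglb
    intro m
    have h1 : (f ^ (m + 1)) x ≤ (f ^ m) x := orbit_anti f hf hx (Nat.le_succ m)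
    have h2 : (f ^ (m + 1)) x = f ((f ^ m) x) := pow_succ_apply' f m x
    have h3 : f P ≤ f ((f ^ m) x) := hf.monotone (hlbP m)
    exact Subtype.coe_le_coe.mpr (le_trans (h2 ▸ h3) h1)
  have hPfP : ¬ f P < P := by
    intro hlt
    have hinv : P < f⁻¹ P := by
      have := (sm_inv f hf) hlt
      rwa [Equiv.Perm.inv_apply_self] at this
    have hexm : ∃ m, (f ^ m) x < f⁻¹ P := by
      by_contra hall
      push_neg at hall
      have h' : ((f⁻¹ P : unitInterval) : ℝ) ≤ (P : ℝ) :=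
        hglb _ fun m => Subtype.coe_le_coe.mpr (hall m)
      exact absurd (Subtype.coe_le_coe.mp h') (not_le.mpr hinv)
    obtain ⟨m, hm⟩ := hexm
    have : (f ^ (m + 1)) x < P := by
      have := hf hm
      rwa [Equiv.Perm.apply_inv_self, ← pow_succ_apply' f m x] at this
    exact absurd (hlbP (m + 1)) (not_le.mpr this)
  have hfix : f P = P := le_antisymm hfPP (not_lt.mp hPfP)
  refine ⟨P, hfix, hlbP, ?_⟩
  intro z hz
  have hexm : ∃ m₀, (f ^ m₀) x < z := by
    by_contra hall
    push_neg at hall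
    have h' : (z : ℝ) ≤ (P : ℝ) := hglb _ fun m => Subtype.coe_le_coe.mpr (hall m)
    exact absurd (Subtype.coe_le_coe.mp h') (not_le.mpr hz)
  obtain ⟨m₀, hm₀⟩ := hexm
  exact eventually_atTop.mpr ⟨m₀, fun m hm => lt_of_le_of_lt (orbit_anti f hf hx hm) hm₀⟩

/-- Orbit data for an upward displacer: both endpoints approach a limit strictly from below. -/
lemma up_bundle (u : Equiv.Perm X) (hu : StrictMono ⇑u) {c d : X} (hcd : c ≤ d)
    (h : d < u c) :
    ∃ P : X, (∀ m : ℕ, (u ^ m) d < P) ∧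
      ∀ z : X, z < P → ∀ᶠ m in atTop, z < (u ^ m) c := by
  have hx : c ≤ u c := le_trans hcd h.le
  obtain ⟨P, _, hub, happ⟩ := forward_limit u hu c hx
  refine ⟨P, ?_, happ⟩
  intro m
  have h1 : (u ^ m) d < (u ^ m) (u c) := sm_pow u hu m h
  have h2 : (u ^ m) (u c) = (u ^ (m + 1)) c := (pow_succ_apply u m c).symm
  exact lt_of_lt_of_le (h2 ▸ h1) (hub (m + 1))

/-- Orbit data for a downward displacer. -/
lemma down_bundle (u : Equiv.Perm X) (hu : StrictMono ⇑u) {c d : X} (hcd : c ≤ d)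
    (h : u d < c) :
    ∃ P : X, (∀ m : ℕ, P < (u ^ m) c) ∧
      ∀ z : X, P < z → ∀ᶠ m in atTop, (u ^ m) d < z := by
  have hx : u d ≤ d := le_trans h.le hcd
  obtain ⟨P, _, hlb, happ⟩ := backward_limit u hu d hx
  refine ⟨P, ?_, happ⟩
  intro m
  have h1 : (u ^ m) (u d) < (u ^ m) c := sm_pow u hu m h
  have h2 : (u ^ m) (u d) = (u ^ (m + 1)) d := (pow_succ_apply u m d).symm
  exact lt_of_le_of_lt (h2 ▸ hlb (m + 1)) h1

/-- Core combination lemma: if `u` and `v` both displace `[c,d]`, then for any `g`,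
for all large `m`, then all large `M`, the sets `g(uᵐ [c,d])` and `vᴹ [c,d]` are disjoint. -/
lemma core (u v g : Equiv.Perm X) (hu : StrictMono ⇑u) (hv : StrictMono ⇑v)
    (hg : StrictMono ⇑g) {c d : X} (hcd : c ≤ d)
    (hud : d < u c ∨ u d < c) (hvd : d < v c ∨ v d < c) :
    ∀ᶠ m in atTop, ∀ᶠ M in atTop,
      ∀ x : X, c ≤ x → x ≤ d → ∀ y : X, c ≤ y → y ≤ d →
        g ((u ^ m) x) ≠ (v ^ M) y := by
  rcases hud with hu1 | hu1
  · -- u displaces upward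
    obtain ⟨P, hP1, hP2⟩ := up_bundle u hu hcd hu1
    rcases hvd with hv1 | hv1
    · -- v upward
      obtain ⟨Q, hQ1, hQ2⟩ := up_bundle v hv hcd hv1
      by_cases hPQ : g P ≤ Q
      · refine Eventually.of_forall fun m => ?_
        have hz : g ((u ^ m) d) < Q := lt_of_lt_of_le (hg (hP1 m)) hPQ
        filter_upwards [hQ2 _ hz] with M hM x hx1 hx2 y hy1 hy2
        have h1 : g ((u ^ m) x) ≤ g ((u ^ m) d) :=
          hg.monotone ((sm_pow u hu m).monotone hx2)
        have h2 : (v ^ M) c ≤ (v ^ M) y := (sm_pow v hv M).monotone hy1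
        exact ne_of_lt (lt_of_le_of_lt h1 (lt_of_lt_of_le hM h2))
      · push_neg at hPQ
        have hgi : g⁻¹ Q < P := by
          have := (sm_inv g hg) hPQ
          rwa [Equiv.Perm.inv_apply_self] at this
        filter_upwards [hP2 _ hgi] with m hm
        refine Eventually.of_forall fun M x hx1 hx2 y hy1 hy2 => ?_
        have h1 : Q < g ((u ^ m) c) := by
          have := hg hm
          rwa [Equiv.Perm.apply_inv_self] at this
        have h2 : (v ^ M) y ≤ (v ^ M) d := (sm_pow v hv M).monotone hy2
        have h3 : g ((u ^ m) c) ≤ g ((u ^ m) x) :=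
          hg.monotone ((sm_pow u hu m).monotone hx1)
        exact (lt_of_le_of_lt h2 (lt_of_lt_of_le (lt_trans (hQ1 M) h1) h3)).ne'
    · -- v downward
      obtain ⟨Q, hQ1, hQ2⟩ := down_bundle v hv hcd hv1
      by_cases hPQ : g P ≤ Q
      · refine Eventually.of_forall fun m => ?_
        refine Eventually.of_forall fun M x hx1 hx2 y hy1 hy2 => ?_
        have h1 : g ((u ^ m) x) ≤ g ((u ^ m) d) :=
          hg.monotone ((sm_pow u hu m).monotone hx2)
        have h2 : g ((u ^ m) d) < Q := lt_of_lt_of_le (hg (hP1 m)) hPQ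
        have h3 : (v ^ M) c ≤ (v ^ M) y := (sm_pow v hv M).monotone hy1
        exact ne_of_lt (lt_of_le_of_lt h1 (lt_of_lt_of_le (lt_trans h2 (hQ1 M)) h3))
      · push_neg at hPQ
        have hgi : g⁻¹ Q < P := by
          have := (sm_inv g hg) hPQ
          rwa [Equiv.Perm.inv_apply_self] at this
        filter_upwards [hP2 _ hgi] with m hm
        have h1 : Q < g ((u ^ m) c) := by
          have := hg hm
          rwa [Equiv.Perm.apply_inv_self] at this
        filter_upwards [hQ2 _ h1] with M hM x hx1 hx2 y hy1 hy2
        have h2 : (v ^ M) y ≤ (v ^ M) d := (sm_pow v hv M).monotone hy2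
        have h3 : g ((u ^ m) c) ≤ g ((u ^ m) x) :=
          hg.monotone ((sm_pow u hu m).monotone hx1)
        exact (lt_of_le_of_lt h2 (lt_of_lt_of_le hM h3)).ne'
  · -- u displaces downward
    obtain ⟨P, hP1, hP2⟩ := down_bundle u hu hcd hu1
    rcases hvd with hv1 | hv1
    · -- v upward
      obtain ⟨Q, hQ1, hQ2⟩ := up_bundle v hv hcd hv1
      by_cases hPQ : Q ≤ g P
      · refine Eventually.of_forall fun m => ?_
        refine Eventually.of_forall fun M x hx1 hx2 y hy1 hy2 => ?_
        have h1 : (v ^ M) y ≤ (v ^ M) d := (sm_pow v hv M).monotone hy2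
        have h2 : g P < g ((u ^ m) c) := hg (hP1 m)
        have h3 : g ((u ^ m) c) ≤ g ((u ^ m) x) :=
          hg.monotone ((sm_pow u hu m).monotone hx1)
        exact (lt_of_le_of_lt h1 (lt_of_lt_of_le (hQ1 M) (le_trans hPQ (le_trans h2.le h3)))).ne'
      · push_neg at hPQ
        have hgi : P < g⁻¹ Q := by
          have := (sm_inv g hg) hPQ
          rwa [Equiv.Perm.inv_apply_self] at this
        filter_upwards [hP2 _ hgi] with m hm
        have h1 : g ((u ^ m) d) < Q := by
          have := hg hm
          rwa [Equiv.Perm.apply_inv_self] at this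
        filter_upwards [hQ2 _ h1] with M hM x hx1 hx2 y hy1 hy2
        have h2 : g ((u ^ m) x) ≤ g ((u ^ m) d) :=
          hg.monotone ((sm_pow u hu m).monotone hx2)
        have h3 : (v ^ M) c ≤ (v ^ M) y := (sm_pow v hv M).monotone hy1
        exact ne_of_lt (lt_of_le_of_lt h2 (lt_of_lt_of_le hM h3))
    · -- v downward
      obtain ⟨Q, hQ1, hQ2⟩ := down_bundle v hv hcd hv1
      by_cases hPQ : Q ≤ g P
      · refine Eventually.of_forall fun m => ?_
        have hz : Q < g ((u ^ m) c) := lt_of_le_of_lt hPQ (hg (hP1 m))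
        filter_upwards [hQ2 _ hz] with M hM x hx1 hx2 y hy1 hy2
        have h1 : (v ^ M) y ≤ (v ^ M) d := (sm_pow v hv M).monotone hy2
        have h2 : g ((u ^ m) c) ≤ g ((u ^ m) x) :=
          hg.monotone ((sm_pow u hu m).monotone hx1)
        exact (lt_of_le_of_lt h1 (lt_of_lt_of_le hM h2)).ne'
      · push_neg at hPQ
        have hgi : P < g⁻¹ Q := by
          have := (sm_inv g hg) hPQ
          rwa [Equiv.Perm.inv_apply_self] at this
        filter_upwards [hP2 _ hgi] with m hm
        refine Eventually.of_forall fun M x hx1 hx2 y hy1 hy2 => ?_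
        have h1 : g ((u ^ m) d) < Q := by
          have := hg hm
          rwa [Equiv.Perm.apply_inv_self] at this
        have h2 : g ((u ^ m) x) ≤ g ((u ^ m) d) :=
          hg.monotone ((sm_pow u hu m).monotone hx2)
        have h3 : (v ^ M) c ≤ (v ^ M) y := (sm_pow v hv M).monotone hy1
        exact ne_of_lt (lt_of_le_of_lt h2 (lt_of_lt_of_le (lt_trans h1 (hQ1 M)) h3))

/-- If `h` has no fixed points on `[c,d]`, then eventually all powers displace `[c,d]`. -/
lemma evt_displace (h : Equiv.Perm X) (hh : StrictMono ⇑h) {c d : X} (hcd : c ≤ d)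
    (hff : ∀ x : X, c ≤ x → x ≤ d → h x ≠ x) :
    ∀ᶠ N in atTop, d < (h ^ N) c ∨ (h ^ N) d < c := by
  rcases sign_const h hh hcd hff with hup | hdn
  · have hc : c ≤ h c := (hup c (le_refl c) hcd).le
    obtain ⟨P, hfix, hub, happ⟩ := forward_limit h hh c hc
    have hdP : d < P := by
      by_contra hcon
      push_neg at hcon
      have hcP : c ≤ P := by
        have := hub 0
        simpa [pow_zero, Equiv.Perm.coe_one] using this
      exact hff P hcP hcon hfix
    filter_upwards [happ d hdP] with N hN
    exact Or.inl hN
  · have hd : h d ≤ d := (hdn d hcd (le_refl d)).le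
    obtain ⟨P, hfix, hlb, happ⟩ := backward_limit h hh d hd
    have hPc : P < c := by
      by_contra hcon
      push_neg at hcon
      have hPd : P ≤ d := by
        have := hlb 0
        simpa [pow_zero, Equiv.Perm.coe_one] using this
      exact hff P hcon hPd hfix
    filter_upwards [happ c hPc] with N hN
    exact Or.inr hN

lemma disjoint_of_up (h : Equiv.Perm X) (hh : StrictMono ⇑h) {c d : X}
    (H1 : d < h c) : Disjoint (⇑h '' Set.Icc c d) (Set.Icc c d) := by
  rw [Set.disjoint_left]
  rintro _ ⟨x, ⟨hx1, _⟩, rfl⟩ ⟨_, hm2⟩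
  exact absurd hm2 (not_le.mpr (lt_of_lt_of_le H1 (hh.monotone hx1)))

lemma disjoint_of_down (h : Equiv.Perm X) (hh : StrictMono ⇑h) {c d : X}
    (H1 : h d < c) : Disjoint (⇑h '' Set.Icc c d) (Set.Icc c d) := by
  rw [Set.disjoint_left]
  rintro _ ⟨x, ⟨_, hx2⟩, rfl⟩ ⟨hm1, _⟩
  exact absurd hm1 (not_le.mpr (lt_of_le_of_lt (hh.monotone hx2) H1))

/-- A displacement is either upward or downward. -/
lemma up_or_down (h : Equiv.Perm X) (hh : StrictMono ⇑h) {c d : X} (hcd : c ≤ d)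
    (hdisj : Disjoint (⇑h '' Set.Icc c d) (Set.Icc c d)) :
    d < h c ∨ h d < c := by
  by_contra hcon
  push_neg at hcon
  obtain ⟨h1, h2⟩ := hcon
  rw [Set.disjoint_left] at hdisj
  rcases le_or_gt c (h c) with h3 | h3
  · exact hdisj ⟨c, ⟨le_refl c, hcd⟩, rfl⟩ ⟨h3, h1⟩
  · rcases le_or_gt (h d) d with h4 | h4
    · exact hdisj ⟨d, ⟨hcd, le_refl d⟩, rfl⟩ ⟨h2, h4⟩
    · have hc : c ≤ h⁻¹ c := by
        have := (sm_inv h hh) h3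
        rw [Equiv.Perm.inv_apply_self] at this
        exact this.le
      have hd : h⁻¹ d ≤ d := by
        have := (sm_inv h hh) h4
        rw [Equiv.Perm.inv_apply_self] at this
        exact this.le
      obtain ⟨z, hz1, hz2, hz3⟩ := exists_fixed h⁻¹ (sm_inv h hh) hcd hc hd
      have hzz : h z = z := by
        conv_lhs => rw [← hz3]
        exact Equiv.Perm.apply_inv_self h z
      exact hdisj ⟨z, ⟨hz1, hz2⟩, hzz⟩ ⟨hz1, hz2⟩

end SimDisp

/-- Simultaneous displacement: if $H$ is a group of increasing bijections of $[0,1]$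
preserving each of finitely many pairwise disjoint closed intervals
$I_i = [p_i,q_i]$, and each closed interval $J_i \subset (p_i,q_i)$ can be displaced
off itself by some element of $H$, then a single element of $H$ displaces all the
$J_i$ off themselves simultaneously. -/
theorem simultaneous_displacement
    (H : Subgroup (Equiv.Perm unitInterval))
    (hH : ∀ h ∈ H, StrictMono (h : unitInterval → unitInterval))
    (n : ℕ) (p q : Fin n → unitInterval)
    (hpq : ∀ i, p i < q i)
    (hdisjI : ∀ i k, i ≠ k → Disjoint (Set.Icc (p i) (q i)) (Set.Icc (p k) (q k)))
    (hfix : ∀ h ∈ H, ∀ i, h (p i) = p i ∧ h (q i) = q i)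
    (c d : Fin n → unitInterval)
    (hJ : ∀ i, p i < c i ∧ c i ≤ d i ∧ d i < q i)
    (hdispl : ∀ i, ∃ jᵢ ∈ H, Disjoint ((jᵢ : unitInterval → unitInterval) '' Set.Icc (c i) (d i)) (Set.Icc (c i) (d i))) :
    ∃ j ∈ H, ∀ i, Disjoint ((j : unitInterval → unitInterval) '' Set.Icc (c i) (d i)) (Set.Icc (c i) (d i)) := by
  classical
  have hcd : ∀ i, c i ≤ d i := fun i => (hJ i).2.1
  -- Main induction: find an element with no fixed points on the first k intervals.
  have key : ∀ k : ℕ, k ≤ n → ∃ h ∈ H, ∀ i : Fin n, (i : ℕ) < k →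
      ∀ x : unitInterval, c i ≤ x → x ≤ d i → h x ≠ x := by
    intro k
    induction k with
    | zero => exact fun _ => ⟨1, H.one_mem, fun i hik => absurd hik (Nat.not_lt_zero _)⟩
    | succ k ih =>
        intro hk1
        obtain ⟨a, haH, hafree⟩ := ih (Nat.le_of_succ_le hk1)
        have hkn : k < n := hk1
        set ik : Fin n := ⟨k, hkn⟩ with hik_def
        have hsa : StrictMono ⇑a := hH a haH
        -- find a power of a displacing all earlier intervals
        have hdispA : ∀ᶠ N in atTop, ∀ i : Fin n, (i : ℕ) < k →
            (d i < (a ^ N) (c i) ∨ (a ^ N) (d i) < c i) := by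
          rw [Filter.eventually_all]
          intro i
          by_cases hik : (i : ℕ) < k
          · exact (SimDisp.evt_displace a hsa (hcd i)
              (fun x hx1 hx2 => hafree i hik x hx1 hx2)).mono (fun N hN _ => hN)
          · exact Eventually.of_forall fun N hik' => absurd hik' hik
        obtain ⟨N, hN⟩ := hdispA.exists
        set A : Equiv.Perm unitInterval := a ^ N with hA_def
        have hAH : A ∈ H := H.pow_mem haH N
        have hsA : StrictMono ⇑A := hH A hAH
        -- normalized displacer for interval k
        obtain ⟨b, hbH, hbc⟩ : ∃ b ∈ H, d ik < b (c ik) := by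
          obtain ⟨b₀, hb₀H, hb₀d⟩ := hdispl ik
          rcases SimDisp.up_or_down b₀ (hH b₀ hb₀H) (hcd ik) hb₀d with h1 | h1
          · exact ⟨b₀, hb₀H, h1⟩
          · refine ⟨b₀⁻¹, H.inv_mem hb₀H, ?_⟩
            have := (SimDisp.sm_inv b₀ (hH b₀ hb₀H)) h1
            rwa [Equiv.Perm.inv_apply_self] at this
        have hsb : StrictMono ⇑b := hH b hbH
        -- choose f₁ with c ik ≤ f₁ (c ik), displacing all earlier intervals
        obtain ⟨f₁, hf₁H, hf₁c, hf₁disp⟩ : ∃ f₁ ∈ H, c ik ≤ f₁ (c ik) ∧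
            ∀ i : Fin n, (i : ℕ) < k → (d i < f₁ (c i) ∨ f₁ (d i) < c i) := by
          by_cases h1 : c ik ≤ A (c ik)
          · exact ⟨A, hAH, h1, fun i hik' => hN i hik'⟩
          · push_neg at h1
            refine ⟨A⁻¹, H.inv_mem hAH, ?_, ?_⟩
            · have := (SimDisp.sm_inv A hsA) h1
              rw [Equiv.Perm.inv_apply_self] at this
              exact this.le
            · intro i hik'
              rcases hN i hik' with h2 | h2
              · right
                have := (SimDisp.sm_inv A hsA) h2
                rwa [Equiv.Perm.inv_apply_self] at this
              · left
                have := (SimDisp.sm_inv A hsA) h2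
                rwa [Equiv.Perm.inv_apply_self] at this
        -- choose v with v (d ik) ≤ d ik, displacing all earlier intervals
        obtain ⟨v, hvH, hvd, hvdisp⟩ : ∃ v ∈ H, v (d ik) ≤ d ik ∧
            ∀ i : Fin n, (i : ℕ) < k → (d i < v (c i) ∨ v (d i) < c i) := by
          by_cases h1 : A (d ik) ≤ d ik
          · exact ⟨A, hAH, h1, fun i hik' => hN i hik'⟩
          · push_neg at h1
            refine ⟨A⁻¹, H.inv_mem hAH, ?_, ?_⟩
            · have := (SimDisp.sm_inv A hsA) h1
              rw [Equiv.Perm.inv_apply_self] at this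
              exact this.le
            · intro i hik'
              rcases hN i hik' with h2 | h2
              · right
                have := (SimDisp.sm_inv A hsA) h2
                rwa [Equiv.Perm.inv_apply_self] at this
              · left
                have := (SimDisp.sm_inv A hsA) h2
                rwa [Equiv.Perm.inv_apply_self] at this
        have hsf₁ : StrictMono ⇑f₁ := hH f₁ hf₁H
        have hsv : StrictMono ⇑v := hH v hvH
        -- apply the core lemma to all earlier intervals
        have hcore : ∀ᶠ m in atTop, ∀ i : Fin n, (i : ℕ) < k →
            ∀ᶠ M in atTop, ∀ x : unitInterval, c i ≤ x → x ≤ d i →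
              ∀ y : unitInterval, c i ≤ y → y ≤ d i →
                b ((f₁ ^ m) x) ≠ (v ^ M) y := by
          rw [Filter.eventually_all]
          intro i
          by_cases hik' : (i : ℕ) < k
          · exact (SimDisp.core f₁ v b hsf₁ hsv hsb (hcd i)
              (hf₁disp i hik') (hvdisp i hik')).mono (fun m hm _ => hm)
          · exact Eventually.of_forall fun m hik'' => absurd hik'' hik'
        obtain ⟨m, hm⟩ := hcore.exists
        have hcore2 : ∀ᶠ M in atTop, ∀ i : Fin n, (i : ℕ) < k →
            ∀ x : unitInterval, c i ≤ x → x ≤ d i →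
              ∀ y : unitInterval, c i ≤ y → y ≤ d i →
                b ((f₁ ^ m) x) ≠ (v ^ M) y := by
          rw [Filter.eventually_all]
          intro i
          by_cases hik' : (i : ℕ) < k
          · exact (hm i hik').mono (fun M hM _ => hM)
          · exact Eventually.of_forall fun M hik'' => absurd hik'' hik'
        obtain ⟨M, hM⟩ := hcore2.exists
        -- the combined element
        refine ⟨v⁻¹ ^ M * (b * f₁ ^ m),
          H.mul_mem (H.pow_mem (H.inv_mem hvH) M) (H.mul_mem hbH (H.pow_mem hf₁H m)), ?_⟩
        intro i hik' x hx1 hx2 hjx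
        have hEq : b ((f₁ ^ m) x) = (v ^ M) x := by
          have h0 : (v⁻¹ ^ M) (b ((f₁ ^ m) x)) = x := by
            simpa [Equiv.Perm.mul_apply] using hjx
          have h1 : (v ^ M) ((v⁻¹ ^ M) (b ((f₁ ^ m) x))) = (v ^ M) x := congrArg _ h0
          rwa [inv_pow, Equiv.Perm.apply_inv_self] at h1
        rcases Nat.lt_succ_iff_lt_or_eq.mp hik' with hlt | heqk
        · exact hM i hlt x hx1 hx2 x hx1 hx2 hEq
        · -- interval k itself
          have hieq : i = ik := Fin.ext heqk
          rw [← hieq] at hbc hf₁c hvd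
          have hL : d i < b ((f₁ ^ m) x) := by
            have h1 : c i ≤ (f₁ ^ m) (c i) := SimDisp.le_pow_apply f₁ hsf₁ hf₁c m
            have h2 : (f₁ ^ m) (c i) ≤ (f₁ ^ m) x := (SimDisp.sm_pow f₁ hsf₁ m).monotone hx1
            exact lt_of_lt_of_le hbc (hsb.monotone (le_trans h1 h2))
          have hR : (v ^ M) x ≤ d i := by
            have h1 : (v ^ M) x ≤ (v ^ M) (d i) := (SimDisp.sm_pow v hsv M).monotone hx2
            exact le_trans h1 (SimDisp.pow_apply_le v hsv hvd M)
          rw [hEq] at hL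
          exact absurd hR (not_le.mpr hL)
  -- conclude: take a power of the fixed-point-free element
  obtain ⟨h, hhH, hfree⟩ := key n le_rfl
  have hfin : ∀ᶠ N in atTop, ∀ i : Fin n,
      d i < (h ^ N) (c i) ∨ (h ^ N) (d i) < c i := by
    rw [Filter.eventually_all]
    intro i
    exact SimDisp.evt_displace h (hH h hhH) (hcd i)
      (fun x hx1 hx2 => hfree i i.isLt x hx1 hx2)
  obtain ⟨Nf, hNf⟩ := hfin.exists
  refine ⟨h ^ Nf, H.pow_mem hhH Nf, fun i => ?_⟩
  rcases hNf i with h1 | h1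
  · exact SimDisp.disjoint_of_up _ (hH _ (H.pow_mem hhH Nf)) h1
  · exact SimDisp.disjoint_of_down _ (hH _ (H.pow_mem hhH Nf)) h1
end

section
/- Let α be a linearly ordered set, let f : α → α be an order-preserving bijection, and let J ⊆ α be a nonempty order-convex set (if x, z ∈ J and x ≤ y ≤ z then y ∈ J). If f(J) ∩ J = ∅, then fⁿ(J) ∩ J = ∅ for every integer n ≠ 0. -/
open Filter
open scoped commutatorElement

lemma aux_lt {α : Type*} [LinearOrder α]
    (f : Equiv.Perm α) (hf : StrictMono (f : α → α))
    (J : Set α)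
    (hconv : ∀ x ∈ J, ∀ z ∈ J, ∀ y, x ≤ y → y ≤ z → y ∈ J)
    (hdisj : Disjoint ((f : α → α) '' J) J)
    (j : α) (hj : j ∈ J) (hjf : j < f j) :
    ∀ x ∈ J, ∀ y ∈ J, y < f x := by
  have hD := Set.disjoint_left.mp hdisj
  have hnotJ : ∀ x ∈ J, f x ∉ J := fun x hx hmem =>
    hD (Set.mem_image_of_mem _ hx) hmem
  have hself : ∀ x ∈ J, x < f x := by
    intro x hx
    by_contra h
    push_neg at h
    have hne : f x ≠ x := fun he => hnotJ x hx (by rw [he]; exact hx)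
    have hlt : f x < x := lt_of_le_of_ne h hne
    rcases le_or_gt x j with hxj | hjx
    · have h1 : x ≤ f.symm j := by
        rw [← hf.le_iff_le, Equiv.apply_symm_apply]
        exact hlt.le.trans hxj
      have h2 : f.symm j ≤ j := by
        rw [← hf.le_iff_le (b := j), Equiv.apply_symm_apply]
        exact hjf.le
      exact hD ⟨f.symm j, hconv x hx j hj _ h1 h2, Equiv.apply_symm_apply f j⟩ hj
    · rcases le_or_gt (f j) x with hfx | hxf
      · exact hnotJ j hj (hconv j hj x hx (f j) hjf.le hfx)
      · have h1 : x ≤ f.symm x := by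
          rw [← hf.le_iff_le, Equiv.apply_symm_apply]
          exact hlt.le
        have h2 : f.symm x ≤ j := by
          rw [← hf.le_iff_le (b := j), Equiv.apply_symm_apply]
          exact hxf.le
        exact hD ⟨f.symm x, hconv x hx j hj _ h1 h2, Equiv.apply_symm_apply f x⟩ hx
  intro x hx y hy
  by_contra h
  push_neg at h
  exact hnotJ x hx (hconv x hx y hy (f x) (hself x hx).le h)

lemma aux_pow {α : Type*} [LinearOrder α]
    (f : Equiv.Perm α) (hf : StrictMono (f : α → α))
    (J : Set α)
    (hlt : ∀ x ∈ J, ∀ y ∈ J, y < f x) :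
    ∀ n : ℕ, 1 ≤ n → Disjoint (((f ^ n : Equiv.Perm α) : α → α) '' J) J := by
  intro n hn
  rw [Set.disjoint_left]
  rintro a ⟨x, hx, rfl⟩ ha
  have hstep : ∀ m : ℕ, (f ^ m) x ≤ (f ^ (m + 1)) x := by
    intro m
    induction m with
    | zero => simpa using (hlt x hx x hx).le
    | succ m ih =>
      have e1 : (f ^ (m + 1)) x = f ((f ^ m) x) := by
        rw [pow_succ' f m]; rfl
      have e2 : (f ^ (m + 2)) x = f ((f ^ (m + 1)) x) := by
        rw [pow_succ' f (m + 1)]; rfl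
      rw [e1, e2]
      exact hf.monotone ih
  have mono : Monotone fun m : ℕ => (f ^ m) x := monotone_nat_of_le_succ hstep
  have key : f x ≤ (f ^ n) x := by
    have := mono hn
    simpa using this
  exact absurd key (not_le.mpr (hlt x hx _ ha))

/-- If an order-preserving bijection displaces a nonempty order-convex set off itself,
then so does every nonzero power. -/
theorem zpow_displaces_of_displaces {α : Type*} [LinearOrder α]
    (f : Equiv.Perm α) (hf : StrictMono (f : α → α))
    (J : Set α) (hne : J.Nonempty)
    (hconv : ∀ x ∈ J, ∀ z ∈ J, ∀ y, x ≤ y → y ≤ z → y ∈ J)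
    (hdisj : Disjoint ((f : α → α) '' J) J) :
    ∀ n : ℤ, n ≠ 0 → Disjoint (((f ^ n : Equiv.Perm α) : α → α) '' J) J := by
  obtain ⟨j, hj⟩ := hne
  have hfj : f j ∉ J := Set.disjoint_left.mp hdisj (Set.mem_image_of_mem _ hj)
  have hnatpow : ∀ m : ℕ, 1 ≤ m →
      Disjoint (((f ^ m : Equiv.Perm α) : α → α) '' J) J := by
    rcases lt_or_gt_of_ne (show f j ≠ j from fun he => hfj (by rw [he]; exact hj)) with hlt | hgt
    · -- f j < j : work in the dual order
      have hfd : StrictMono (α := αᵒᵈ) (β := αᵒᵈ) (f : α → α) :=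
        fun a b h => hf h
      have hkey := aux_lt (α := αᵒᵈ) f hfd J
        (fun x hx z hz y h1 h2 => hconv z hz x hx y h2 h1) hdisj j hj hlt
      exact aux_pow (α := αᵒᵈ) f hfd J hkey
    · have hkey := aux_lt f hf J hconv hdisj j hj hgt
      exact aux_pow f hf J hkey
  intro n hn
  rcases lt_or_gt_of_ne hn with hneg | hpos
  · set m := (-n).toNat with hm
    have hm1 : 1 ≤ m := by omega
    have hmn : (m : ℤ) = -n := by omega
    rw [Set.disjoint_left]
    rintro a ⟨x, hx, rfl⟩ ha
    have hxa : (f ^ (m : ℤ)) ((f ^ n) x) = x := by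
      rw [← Equiv.Perm.mul_apply, ← zpow_add, hmn, neg_add_cancel, zpow_zero,
        Equiv.Perm.one_apply]
    have : x ∈ ((f ^ m : Equiv.Perm α) : α → α) '' J := by
      refine ⟨(f ^ n) x, ha, ?_⟩
      rw [← zpow_natCast f m]
      exact hxa
    exact Set.disjoint_left.mp (hnatpow m hm1) this hx
  · have hm : (n.toNat : ℤ) = n := by omega
    have := hnatpow n.toNat (by omega)
    rwa [← hm, zpow_natCast]
end
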